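/- arXiv:1809.02235 — 9 statements merged into one kernel-verified Lean document; each statement's English description precedes it below -/
import Mathlib

section
/- Fix α ∈ (0, e^{-1}) and an integer n ≥ 2. Let H0 ⊆ {1,…,n} be nonempty and let p_1,…,p_n be random variables with values in (0,1] such that the family {p_i}_{i∈H0} is mutually independent and each p_i with i ∈ H0 is sub-uniform. For k ∈ {0,1,…,n} set R_k = {i : p_i ≤ αk/n}, FDP(R_k) = |R_k ∩ H0| / max(|R_k|, 1), and FDP̂(R_k) = n·(max_{i∈R_k} p_i) / max(|R_k|, 1), where the maximum over the empty set is 0. Then E[ max over k ∈ {0,…,n} with FDP̂(R_k) ≤ α of FDP(R_k) ] ≤ (|H0|α/n)·( 2·log(2n/(|H0|α)) + log(8·e^5·log(8n/(|H0|α))) ). -/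
open MeasureTheory ProbabilityTheory Finset
open scoped ENNReal
set_option maxHeartbeats 1000000

variable {Ω : Type*}

/-- The rejection set `R_k = {i : p_i ≤ α k / n}`. -/
noncomputable def Rset (n : ℕ) (α : ℝ) (p : Fin n → Ω → ℝ) (k : ℕ) (ω : Ω) : Finset (Fin n) :=
  Finset.univ.filter (fun i => p i ω ≤ α * k / n)

/-- The false discovery proportion `FDP(R_k) = |R_k ∩ H0| / max(|R_k|, 1)`. -/
noncomputable def FDP (n : ℕ) (α : ℝ) (H0 : Finset (Fin n)) (p : Fin n → Ω → ℝ) (k : ℕ)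
    (ω : Ω) : ℝ :=
  ((Rset n α p k ω ∩ H0).card : ℝ) / max ((Rset n α p k ω).card : ℝ) 1

/-- The empirical bound `FDP̂(R_k) = n · max_{i ∈ R_k} p_i / max(|R_k|, 1)`, with the maximum
over the empty set taken to be `0`. -/
noncomputable def FDPhat (n : ℕ) (α : ℝ) (p : Fin n → Ω → ℝ) (k : ℕ) (ω : Ω) : ℝ :=
  (n : ℝ) *
    (if h : (Rset n α p k ω).Nonempty then (Rset n α p k ω).sup' h (fun i => p i ω) else 0) /
    max ((Rset n α p k ω).card : ℝ) 1

namespace AnytimeFDR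

/-- Number of indices `j ∈ T` with `p j ω ≤ x`. -/
noncomputable def Ncnt {n : ℕ} (T : Finset (Fin n)) (p : Fin n → Ω → ℝ) (x : ℝ) (ω : Ω) : ℕ :=
  (T.filter (fun j => p j ω ≤ x)).card

lemma Ncnt_mono {n : ℕ} (T : Finset (Fin n)) (p : Fin n → Ω → ℝ) {x y : ℝ} (hxy : x ≤ y)
    (ω : Ω) : Ncnt T p x ω ≤ Ncnt T p y ω :=
  Finset.card_le_card (Finset.monotone_filter_right T (fun j _ hj => le_trans hj hxy))

lemma Ncnt_cast {n : ℕ} (T : Finset (Fin n)) (p : Fin n → Ω → ℝ) (x : ℝ) (ω : Ω) :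
    (Ncnt T p x ω : ℝ) = ∑ j ∈ T, if p j ω ≤ x then (1:ℝ) else 0 := by
  rw [Ncnt, Finset.card_filter]
  push_cast
  rfl

lemma measurable_Ncnt {n : ℕ} {m' : MeasurableSpace Ω} {T : Finset (Fin n)}
    {p : Fin n → Ω → ℝ} (hp : ∀ j ∈ T, Measurable[m'] (p j)) (x : ℝ) :
    Measurable[m'] (fun ω => (Ncnt T p x ω : ℝ)) := by
  simp only [Ncnt_cast]
  exact Finset.measurable_sum _ (fun j hj =>
    Measurable.ite (measurableSet_le (hp j hj) measurable_const) measurable_const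
      measurable_const)

lemma measurable_Ncnt_nat {n : ℕ} {m' : MeasurableSpace Ω} {T : Finset (Fin n)}
    {p : Fin n → Ω → ℝ} (hp : ∀ j ∈ T, Measurable[m'] (p j)) (x : ℝ) :
    Measurable[m'] (fun ω => Ncnt T p x ω) :=
  measurable_to_countable' (fun v => by
    have : (fun ω => Ncnt T p x ω) ⁻¹' {v} = (fun ω => (Ncnt T p x ω : ℝ)) ⁻¹' {(v:ℝ)} := by
      ext ω; simp [Nat.cast_inj]
    rw [this]
    exact measurable_Ncnt hp x (measurableSet_singleton _))

lemma BH_tail [MeasureSpace Ω] [IsProbabilityMeasure (ℙ : Measure Ω)]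
    {n : ℕ} (H0 : Finset (Fin n)) (hH0 : H0.Nonempty)
    (p : Fin n → Ω → ℝ) (hmeas : ∀ i, Measurable (p i))
    (hsubunif : ∀ i ∈ H0, ∀ x ∈ Set.Icc (0 : ℝ) 1, ℙ {ω | p i ω ≤ x} ≤ ENNReal.ofReal x)
    (hindep : iIndepFun (fun i : {i // i ∈ H0} => p i.1) ℙ)
    {a : ℝ} (ha : 0 < a) :
    ℙ {ω | ∃ i ∈ H0, p i ω ≤ a * (Ncnt H0 p (p i ω) ω : ℝ)}
      ≤ ENNReal.ofReal (H0.card * a) := by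
  classical
  set m := H0.card with hm
  have hm1 : 1 ≤ m := Finset.card_pos.2 hH0
  set Kf : Fin n → Ω → Finset ℕ := fun i ω =>
    (Finset.Icc 1 m).filter (fun v => v ≤ Ncnt (H0.erase i) p (a * v) ω + 1) with hKf
  have hKfne : ∀ i ω, (Kf i ω).Nonempty := fun i ω =>
    ⟨1, by simp [hKf, Finset.mem_filter, Finset.mem_Icc, hm1,
      Nat.succ_le_succ (Nat.zero_le _)]⟩
  set K : Fin n → Ω → ℕ := fun i ω => (Kf i ω).max' (hKfne i ω) with hK
  have hK_mem : ∀ i ω, K i ω ∈ Kf i ω := fun i ω => Finset.max'_mem _ _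
  have hK_ge : ∀ i ω v, v ∈ Kf i ω → v ≤ K i ω := fun i ω v hv => Finset.le_max' _ _ hv
  set B : Fin n → ℕ → Set Ω := fun i v => {ω | K i ω = v} ∩ {ω | p i ω ≤ a * v} with hB
  -- measurability and independence facts, for each i ∈ H0
  have hmain : ∀ i ∈ H0, (∀ v : ℕ, MeasurableSet {ω | K i ω = v}) ∧
      (∀ v : ℕ, ℙ (B i v) = ℙ {ω | K i ω = v} * ℙ {ω | p i ω ≤ a * (v:ℝ)}) := by
    intro i hi
    set i' : {x // x ∈ H0} := ⟨i, hi⟩ with hi'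
    set m' : MeasurableSpace Ω :=
      ⨆ j ∈ ({i'}ᶜ : Set {x // x ∈ H0}),
        MeasurableSpace.comap (fun ω => p j.1 ω) inferInstance with hm'
    have hm'le : m' ≤ MeasureSpace.toMeasurableSpace := by
      refine iSup₂_le fun j _ => ?_
      exact (hmeas j.1).comap_le
    have hpm' : ∀ j ∈ H0.erase i, Measurable[m'] (p j) := by
      intro j hj
      have hjH0 : j ∈ H0 := Finset.mem_of_mem_erase hj
      have hne : (⟨j, hjH0⟩ : {x // x ∈ H0}) ∈ ({i'}ᶜ : Set {x // x ∈ H0}) := by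
        simp only [Set.mem_compl_iff, Set.mem_singleton_iff]
        intro hcon
        exact (Finset.ne_of_mem_erase hj) (congrArg Subtype.val hcon)
      have hle : MeasurableSpace.comap (p j) inferInstance ≤ m' := by
        rw [hm']
        exact le_biSup (fun j : {x // x ∈ H0} =>
          MeasurableSpace.comap (fun ω => p j.1 ω) inferInstance) hne
      exact Measurable.of_comap_le hle
    have hNm' : ∀ w : ℕ, Measurable[m'] fun ω => Ncnt (H0.erase i) p (a * w) ω :=
      fun w => measurable_Ncnt_nat hpm' _
    have hKfsetm' : ∀ w : ℕ, MeasurableSet[m'] {ω | w ∈ Kf i ω} := by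
      intro w
      by_cases hw : w ∈ Finset.Icc 1 m
      · have : {ω | w ∈ Kf i ω} = (fun ω => Ncnt (H0.erase i) p (a * w) ω) ⁻¹'
            {c : ℕ | w ≤ c + 1} := by
          ext ω
          simp [hKf, Finset.mem_filter, hw]
        rw [this]
        exact hNm' w (by exact MeasurableSet.of_discrete)
      · have : {ω | w ∈ Kf i ω} = (∅ : Set Ω) := by
          ext ω; simp [hKf, Finset.mem_filter, hw]
        rw [this]; exact MeasurableSet.empty
    have hKsetm' : ∀ v : ℕ, MeasurableSet[m'] {ω | K i ω = v} := by
      intro v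
      have hstep : {ω | K i ω = v} =
          {ω | v ∈ Kf i ω} ∩ ⋂ w, ⋂ (_ : w ∈ Finset.Icc 1 m), {ω | w ∈ Kf i ω → w ≤ v} := by
        ext ω
        simp only [Set.mem_inter_iff, Set.mem_setOf_eq, Set.mem_iInter]
        constructor
        · rintro rfl
          exact ⟨hK_mem i ω, fun w _ hw => hK_ge i ω w hw⟩
        · rintro ⟨hv, hmax⟩
          refine le_antisymm ?_ (hK_ge i ω v hv)
          refine Finset.max'_le _ _ _ (fun w hw => ?_)
          exact hmax w (Finset.filter_subset _ _ hw) hw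
      rw [hstep]
      refine MeasurableSet.inter (hKfsetm' v) ?_
      refine MeasurableSet.iInter fun w => MeasurableSet.iInter fun _ => ?_
      by_cases hwv : w ≤ v
      · have : {ω | w ∈ Kf i ω → w ≤ v} = Set.univ := by
          ext ω; simp [hwv]
        rw [this]; exact MeasurableSet.univ
      · have : {ω | w ∈ Kf i ω → w ≤ v} = {ω | w ∈ Kf i ω}ᶜ := by
          ext ω; simp [hwv]
        rw [this]; exact (hKfsetm' w).compl
    have hInd : Indep (MeasurableSpace.comap (p i) inferInstance) m' ℙ := by
      have h := indep_biSup_compl (fun j : {x // x ∈ H0} => (hmeas j.1).comap_le)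
        hindep.iIndep {i'}
      have hsing : (⨆ j ∈ ({i'} : Set {x // x ∈ H0}),
          MeasurableSpace.comap (fun ω => p j.1 ω) inferInstance) =
          MeasurableSpace.comap (p i) inferInstance := by
        simp only [Set.mem_singleton_iff, iSup_iSup_eq_left]
        rfl
      rw [hsing] at h
      exact h
    refine ⟨fun v => hm'le _ (hKsetm' v), fun v => ?_⟩
    have h2 : MeasurableSet[MeasurableSpace.comap (p i) inferInstance]
        {ω | p i ω ≤ a * (v:ℝ)} := ⟨Set.Iic (a * v), measurableSet_Iic, rfl⟩
    have hprod := (Indep_iff _ _ _).1 hInd _ _ h2 (hKsetm' v)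
    have hBv : B i v = {ω | p i ω ≤ a * (v:ℝ)} ∩ {ω | K i ω = v} := Set.inter_comm _ _
    calc ℙ (B i v) = ℙ ({ω | p i ω ≤ a * (v:ℝ)} ∩ {ω | K i ω = v}) := by rw [hBv]
      _ = ℙ {ω | p i ω ≤ a * (v:ℝ)} * ℙ {ω | K i ω = v} := hprod
      _ = ℙ {ω | K i ω = v} * ℙ {ω | p i ω ≤ a * (v:ℝ)} := mul_comm _ _
  -- the counting function
  set F : Ω → ℝ≥0∞ := fun ω =>
    ∑ i ∈ H0, ∑ v ∈ Finset.Icc 1 m, (B i v).indicator (fun _ => (v:ℝ≥0∞)⁻¹) ω with hF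
  have hBmeas : ∀ i ∈ H0, ∀ v : ℕ, MeasurableSet (B i v) := by
    intro i hi v
    exact ((hmain i hi).1 v).inter (measurableSet_le (hmeas i) measurable_const)
  have hFmeas : Measurable F := by
    refine Finset.measurable_sum _ fun i hi => ?_
    refine Finset.measurable_sum _ fun v _ => ?_
    exact Measurable.indicator measurable_const (hBmeas i hi v)
  -- pointwise: on the event, F ≥ 1
  have hpoint : {ω | ∃ i ∈ H0, p i ω ≤ a * (Ncnt H0 p (p i ω) ω : ℝ)} ⊆ {ω | 1 ≤ F ω} := by
    rintro ω ⟨i₀, hi₀, hp₀⟩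
    set Vf : Finset ℕ := (Finset.Icc 1 m).filter (fun v => v ≤ Ncnt H0 p (a * v) ω) with hVf
    have hN₀pos : 1 ≤ Ncnt H0 p (p i₀ ω) ω := by
      rw [Ncnt]
      exact Finset.card_pos.2 ⟨i₀, Finset.mem_filter.2 ⟨hi₀, le_refl _⟩⟩
    have hN₀m : Ncnt H0 p (p i₀ ω) ω ≤ m := Finset.card_filter_le _ _
    have hVfne : Vf.Nonempty := by
      refine ⟨Ncnt H0 p (p i₀ ω) ω,
        Finset.mem_filter.2 ⟨Finset.mem_Icc.2 ⟨hN₀pos, hN₀m⟩, ?_⟩⟩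
      exact Ncnt_mono _ _ hp₀ ω
    set k := Vf.max' hVfne with hkdef
    have hkVf : k ∈ Vf := Vf.max'_mem hVfne
    have hkIcc : k ∈ Finset.Icc 1 m := Finset.filter_subset _ _ hkVf
    have hk1 : 1 ≤ k := (Finset.mem_Icc.1 hkIcc).1
    have hkm : k ≤ m := (Finset.mem_Icc.1 hkIcc).2
    have hkN : k ≤ Ncnt H0 p (a * k) ω := (Finset.mem_filter.1 hkVf).2
    set D := H0.filter (fun j => p j ω ≤ a * (k:ℝ)) with hD
    have hDcard : k ≤ D.card := hkN
    have herase : ∀ j ∈ D, ∀ x : ℝ, p j ω ≤ x →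
        Ncnt H0 p x ω = Ncnt (H0.erase j) p x ω + 1 := by
      intro j hj x hx
      have hjH0 : j ∈ H0 := (Finset.mem_filter.1 hj).1
      have hjf : j ∈ H0.filter (fun j' => p j' ω ≤ x) := Finset.mem_filter.2 ⟨hjH0, hx⟩
      rw [Ncnt, Ncnt, Finset.filter_erase]
      exact (Finset.card_erase_add_one hjf).symm
    have hKj : ∀ j ∈ D, K j ω = k := by
      intro j hj
      have hjH0 : j ∈ H0 := (Finset.mem_filter.1 hj).1
      have hpj : p j ω ≤ a * (k:ℝ) := (Finset.mem_filter.1 hj).2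
      have hkKf : k ∈ Kf j ω := by
        rw [hKf]
        refine Finset.mem_filter.2 ⟨hkIcc, ?_⟩
        rw [← herase j hj _ hpj]
        exact hkN
      refine le_antisymm ?_ (hK_ge j ω k hkKf)
      refine Finset.max'_le _ _ _ (fun w hw => ?_)
      by_contra hcon
      push_neg at hcon
      have hwIcc : w ∈ Finset.Icc 1 m := Finset.filter_subset _ _ hw
      have hwN : w ≤ Ncnt (H0.erase j) p (a * w) ω + 1 := (Finset.mem_filter.1 hw).2
      have hpjw : p j ω ≤ a * (w:ℝ) := by
        refine le_trans hpj ?_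
        have : (k:ℝ) ≤ (w:ℝ) := by exact_mod_cast hcon.le
        nlinarith
      have hwVf : w ∈ Vf := by
        refine Finset.mem_filter.2 ⟨hwIcc, ?_⟩
        rw [herase j hj _ hpjw]
        exact hwN
      exact absurd (Finset.le_max' _ _ hwVf) (not_le.2 hcon)
    have hterm : ∀ j ∈ D, (B j k).indicator (fun _ => (k:ℝ≥0∞)⁻¹) ω = (k:ℝ≥0∞)⁻¹ := by
      intro j hj
      apply Set.indicator_of_mem
      exact ⟨hKj j hj, (Finset.mem_filter.1 hj).2⟩
    have hk0 : (k:ℝ≥0∞) ≠ 0 := by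
      simp only [ne_eq, Nat.cast_eq_zero]
      omega
    show (1:ℝ≥0∞) ≤ F ω
    calc (1:ℝ≥0∞) = (k:ℝ≥0∞) * (k:ℝ≥0∞)⁻¹ :=
          (ENNReal.mul_inv_cancel hk0 (ENNReal.natCast_ne_top k)).symm
      _ ≤ (D.card : ℝ≥0∞) * (k:ℝ≥0∞)⁻¹ :=
          mul_le_mul_left (by exact_mod_cast hDcard) _
      _ = ∑ j ∈ D, (B j k).indicator (fun _ => (k:ℝ≥0∞)⁻¹) ω := by
          rw [Finset.sum_congr rfl hterm, Finset.sum_const, nsmul_eq_mul]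
      _ ≤ ∑ j ∈ D, ∑ v ∈ Finset.Icc 1 m, (B j v).indicator (fun _ => (v:ℝ≥0∞)⁻¹) ω := by
          refine Finset.sum_le_sum fun j hj => ?_
          exact Finset.single_le_sum (f := fun v =>
            (B j v).indicator (fun _ => (v:ℝ≥0∞)⁻¹) ω) (fun v _ => zero_le) hkIcc
      _ ≤ F ω := Finset.sum_le_sum_of_subset (Finset.filter_subset _ _)
  -- assemble
  calc ℙ {ω | ∃ i ∈ H0, p i ω ≤ a * (Ncnt H0 p (p i ω) ω : ℝ)}
      ≤ ℙ {ω | 1 ≤ F ω} := measure_mono hpoint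
    _ ≤ ∫⁻ ω, F ω ∂ℙ := by
        simpa using mul_meas_ge_le_lintegral₀ hFmeas.aemeasurable 1
    _ = ∑ i ∈ H0, ∑ v ∈ Finset.Icc 1 m, (v:ℝ≥0∞)⁻¹ * ℙ (B i v) := by
        rw [hF]
        rw [lintegral_finset_sum _ (fun i hi => Finset.measurable_sum _ fun v _ =>
          Measurable.indicator measurable_const (hBmeas i hi v))]
        refine Finset.sum_congr rfl fun i hi => ?_
        rw [lintegral_finset_sum _ (fun v _ =>
          Measurable.indicator measurable_const (hBmeas i hi v))]
        refine Finset.sum_congr rfl fun v _ => ?_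
        rw [lintegral_indicator_const (hBmeas i hi v)]
    _ ≤ ∑ i ∈ H0, ENNReal.ofReal a := by
        refine Finset.sum_le_sum fun i hi => ?_
        obtain ⟨hKmeasAmb, hprod⟩ := hmain i hi
        have step1 : ∀ v ∈ Finset.Icc 1 m,
            (v:ℝ≥0∞)⁻¹ * ℙ (B i v) ≤ ENNReal.ofReal a * ℙ {ω | K i ω = v} := by
          intro v hv
          have hv1 : 1 ≤ v := (Finset.mem_Icc.1 hv).1
          have hv0 : (v:ℝ≥0∞) ≠ 0 := by
            simp only [ne_eq, Nat.cast_eq_zero]; omega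
          have hple : ℙ {ω | p i ω ≤ a * (v:ℝ)} ≤ ENNReal.ofReal (a * v) := by
            by_cases hav : a * (v:ℝ) ≤ 1
            · exact hsubunif i hi _ ⟨by positivity, hav⟩
            · exact le_trans prob_le_one (ENNReal.one_le_ofReal.2 (le_of_not_ge hav))
          rw [hprod v]
          calc (v:ℝ≥0∞)⁻¹ * (ℙ {ω | K i ω = v} * ℙ {ω | p i ω ≤ a * (v:ℝ)})
              ≤ (v:ℝ≥0∞)⁻¹ * (ℙ {ω | K i ω = v} * ENNReal.ofReal (a * v)) := by gcongr
            _ = ENNReal.ofReal a * ℙ {ω | K i ω = v} * ((v:ℝ≥0∞)⁻¹ * (v:ℝ≥0∞)) := by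
                rw [ENNReal.ofReal_mul ha.le, ENNReal.ofReal_natCast]
                ring
            _ = ENNReal.ofReal a * ℙ {ω | K i ω = v} := by
                rw [ENNReal.inv_mul_cancel hv0 (ENNReal.natCast_ne_top v), mul_one]
        calc ∑ v ∈ Finset.Icc 1 m, (v:ℝ≥0∞)⁻¹ * ℙ (B i v)
            ≤ ∑ v ∈ Finset.Icc 1 m, ENNReal.ofReal a * ℙ {ω | K i ω = v} :=
              Finset.sum_le_sum step1
          _ = ENNReal.ofReal a * ∑ v ∈ Finset.Icc 1 m, ℙ {ω | K i ω = v} := by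
              rw [Finset.mul_sum]
          _ ≤ ENNReal.ofReal a * 1 := by
              gcongr
              have hdisj : (↑(Finset.Icc 1 m) : Set ℕ).PairwiseDisjoint
                  (fun v => {ω | K i ω = v}) := by
                intro x _ y _ hxy
                refine Set.disjoint_left.2 fun ω hx hy => ?_
                exact hxy (by rw [← hx, ← hy])
              rw [← measure_biUnion_finset hdisj (fun v _ => hKmeasAmb v)]
              exact prob_le_one
          _ = ENNReal.ofReal a := mul_one _
    _ = ENNReal.ofReal (m * a) := by
        rw [Finset.sum_const, nsmul_eq_mul,
          ENNReal.ofReal_mul (by positivity : (0:ℝ) ≤ (m:ℝ)), ENNReal.ofReal_natCast]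

end AnytimeFDR

/-- Theorem 1 (anytime FDR control for BH-type selections), sharp form. -/
theorem expected_max_FDP_le [MeasureSpace Ω] [IsProbabilityMeasure (ℙ : Measure Ω)]
    {n : ℕ} (hn : 2 ≤ n) {α : ℝ} (hα0 : 0 < α) (hα1 : α < Real.exp (-1))
    (H0 : Finset (Fin n)) (hH0 : H0.Nonempty)
    (p : Fin n → Ω → ℝ) (hmeas : ∀ i, Measurable (p i))
    (hrange : ∀ i ω, p i ω ∈ Set.Ioc (0 : ℝ) 1)
    (hsubunif : ∀ i ∈ H0, ∀ x ∈ Set.Icc (0 : ℝ) 1,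
      ℙ {ω | p i ω ≤ x} ≤ ENNReal.ofReal x)
    (hindep : iIndepFun
      (fun i : {i // i ∈ H0} => p i.1) ℙ) :
    ∫ ω, (Finset.range (n + 1)).sup' ⟨0, by simp⟩
        (fun k => if FDPhat n α p k ω ≤ α then FDP n α H0 p k ω else 0) ∂ℙ
      ≤ ((H0.card : ℝ) * α / n) *
        (2 * Real.log (2 * n / (H0.card * α)) +
          Real.log (8 * Real.exp 5 * Real.log (8 * n / (H0.card * α)))) := by
  classical
  have hn0 : (0:ℝ) < n := by
    have : 0 < n := lt_of_lt_of_le (by norm_num) hn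
    exact_mod_cast this
  set m := H0.card with hm
  have hm1 : 1 ≤ m := Finset.card_pos.2 hH0
  have hm0 : (0:ℝ) < m := by exact_mod_cast hm1
  have hmn : m ≤ n := by
    have := Finset.card_le_univ H0
    simpa [hm] using this
  set t : ℝ := ↑m * α / ↑n with ht
  have ht0 : 0 < t := by rw [ht]; positivity
  have htα : t ≤ α := by
    rw [ht, div_le_iff₀ hn0]
    have : (m:ℝ) ≤ n := by exact_mod_cast hmn
    nlinarith
  have hexp1 : Real.exp (-1) < 1 := by
    calc Real.exp (-1) < Real.exp 0 := Real.exp_lt_exp.2 (by norm_num)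
      _ = 1 := Real.exp_zero
  have ht1 : t < 1 := lt_of_le_of_lt htα (lt_trans hα1 hexp1)
  set N : Fin n → Ω → ℕ := fun i ω => AnytimeFDR.Ncnt H0 p (p i ω) ω with hN
  set S : Ω → ℝ := fun ω => H0.sup' hH0 (fun i => (N i ω : ℝ) / p i ω) with hS
  set c : ℝ := α / n with hc
  have hc0 : 0 < c := by rw [hc]; positivity
  set hfun : Ω → ℝ := fun ω => min 1 (c * S ω) with hhfun
  have hS0 : ∀ ω, 0 ≤ S ω := by
    intro ω
    obtain ⟨i0, hi0⟩ := hH0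
    refine le_trans ?_ (Finset.le_sup' (fun i => (N i ω : ℝ) / p i ω) hi0)
    exact div_nonneg (Nat.cast_nonneg _) (hrange i0 ω).1.le
  have hh0 : ∀ ω, 0 ≤ hfun ω := fun ω =>
    le_min zero_le_one (mul_nonneg hc0.le (hS0 ω))
  have hh1 : ∀ ω, hfun ω ≤ 1 := fun ω => min_le_left _ _
  have hNmeas : ∀ i : Fin n, Measurable (fun ω => (N i ω : ℝ)) := by
    intro i
    have hrw : (fun ω => (N i ω : ℝ))
        = fun ω => ∑ j ∈ H0, if p j ω ≤ p i ω then (1:ℝ) else 0 := by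
      funext ω
      rw [hN]
      exact AnytimeFDR.Ncnt_cast H0 p (p i ω) ω
    rw [hrw]
    exact Finset.measurable_sum _ fun j _ =>
      Measurable.ite (measurableSet_le (hmeas j) (hmeas i)) measurable_const measurable_const
  have hSmeas : Measurable S := by
    rw [hS]
    have h2 : (fun ω => H0.sup' hH0 fun i => (N i ω : ℝ) / p i ω)
        = H0.sup' hH0 (fun i => fun ω => (N i ω : ℝ) / p i ω) := by
      funext ω
      rw [Finset.sup'_apply]
    rw [h2]
    exact Finset.measurable_sup' hH0 (fun i _ => (hNmeas i).div (hmeas i))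
  have hhmeas : Measurable hfun := by
    rw [hhfun]
    exact measurable_const.min (measurable_const.mul hSmeas)
  have hhint : Integrable hfun ℙ := by
    refine Integrable.mono' (integrable_const 1) hhmeas.aestronglyMeasurable ?_
    refine Filter.Eventually.of_forall fun ω => ?_
    rw [Real.norm_eq_abs, abs_le]
    exact ⟨by linarith [hh0 ω], hh1 ω⟩
  -- pointwise domination
  have hdom : ∀ ω, (Finset.range (n + 1)).sup' ⟨0, by simp⟩
      (fun k => if FDPhat n α p k ω ≤ α then FDP n α H0 p k ω else 0) ≤ hfun ω := by
    intro ω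
    refine Finset.sup'_le _ _ fun k _ => ?_
    by_cases hcond : FDPhat n α p k ω ≤ α
    · rw [if_pos hcond]
      by_cases hRH : (Rset n α p k ω ∩ H0).Nonempty
      · obtain ⟨i0, hi0R, hmax⟩ :=
          Finset.exists_max_image (Rset n α p k ω ∩ H0) (fun j => p j ω) hRH
        have hi0R' : i0 ∈ Rset n α p k ω := (Finset.mem_inter.1 hi0R).1
        have hi0H : i0 ∈ H0 := (Finset.mem_inter.1 hi0R).2
        have hRne : (Rset n α p k ω).Nonempty := ⟨i0, hi0R'⟩
        have hrpos : (0:ℝ) < max ((Rset n α p k ω).card:ℝ) 1 :=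
          lt_of_lt_of_le one_pos (le_max_right _ _)
        have hp0 : 0 < p i0 ω := (hrange i0 ω).1
        have hsx : p i0 ω ≤ (Rset n α p k ω).sup' hRne (fun i => p i ω) :=
          Finset.le_sup' (f := fun i => p i ω) hi0R'
        have hsup_pos : 0 < (Rset n α p k ω).sup' hRne (fun i => p i ω) :=
          lt_of_lt_of_le hp0 hsx
        have hkey : (n:ℝ) * (Rset n α p k ω).sup' hRne (fun i => p i ω)
            ≤ α * max ((Rset n α p k ω).card:ℝ) 1 := by
          rw [FDPhat, dif_pos hRne] at hcond
          exact (div_le_iff₀ hrpos).1 hcond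
        have hVN : (((Rset n α p k ω) ∩ H0).card : ℝ) ≤ (N i0 ω : ℝ) := by
          have hsub : (Rset n α p k ω) ∩ H0 ⊆ H0.filter (fun j => p j ω ≤ p i0 ω) :=
            fun j hj => Finset.mem_filter.2 ⟨(Finset.mem_inter.1 hj).2, hmax j hj⟩
          have := Finset.card_le_card hsub
          rw [hN]
          exact_mod_cast this
        have hV0 : (0:ℝ) ≤ (((Rset n α p k ω) ∩ H0).card : ℝ) := Nat.cast_nonneg _
        have hFDP1 : FDP n α H0 p k ω ≤ 1 := by
          rw [FDP, div_le_one hrpos]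
          calc (((Rset n α p k ω) ∩ H0).card : ℝ)
              ≤ ((Rset n α p k ω).card : ℝ) := by
                exact_mod_cast Finset.card_le_card Finset.inter_subset_left
            _ ≤ max ((Rset n α p k ω).card:ℝ) 1 := le_max_left _ _
        have hFDP2 : FDP n α H0 p k ω ≤ c * ((N i0 ω : ℝ) / p i0 ω) := by
          rw [FDP, div_le_iff₀ hrpos]
          have hnp : (0:ℝ) < ↑n * p i0 ω := by positivity
          have hrew : c * ((N i0 ω : ℝ) / p i0 ω) * max ((Rset n α p k ω).card:ℝ) 1
              = α * (N i0 ω : ℝ) * max ((Rset n α p k ω).card:ℝ) 1 / (↑n * p i0 ω) := by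
            rw [hc]
            field_simp
          rw [hrew, le_div_iff₀ hnp]
          calc (((Rset n α p k ω) ∩ H0).card : ℝ) * (↑n * p i0 ω)
              ≤ (((Rset n α p k ω) ∩ H0).card : ℝ)
                  * (α * max ((Rset n α p k ω).card:ℝ) 1) := by
                refine mul_le_mul_of_nonneg_left ?_ hV0
                calc (n:ℝ) * p i0 ω
                    ≤ (n:ℝ) * (Rset n α p k ω).sup' hRne (fun i => p i ω) :=
                      mul_le_mul_of_nonneg_left hsx hn0.le
                  _ ≤ α * max ((Rset n α p k ω).card:ℝ) 1 := hkey
            _ = (α * max ((Rset n α p k ω).card:ℝ) 1)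
                  * (((Rset n α p k ω) ∩ H0).card : ℝ) := mul_comm _ _
            _ ≤ (α * max ((Rset n α p k ω).card:ℝ) 1) * (N i0 ω : ℝ) := by
                refine mul_le_mul_of_nonneg_left hVN ?_
                positivity
            _ = α * (N i0 ω : ℝ) * max ((Rset n α p k ω).card:ℝ) 1 := by ring
        refine le_min hFDP1 ?_
        refine le_trans hFDP2 ?_
        refine mul_le_mul_of_nonneg_left ?_ hc0.le
        exact Finset.le_sup' (fun i => (N i ω : ℝ) / p i ω) hi0H
      · rw [FDP, Finset.not_nonempty_iff_eq_empty.1 hRH]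
        simp only [Finset.card_empty, Nat.cast_zero, zero_div]
        exact hh0 ω
    · rw [if_neg hcond]
      exact hh0 ω
  have hg0 : ∀ ω, 0 ≤ (Finset.range (n + 1)).sup' ⟨0, by simp⟩
      (fun k => if FDPhat n α p k ω ≤ α then FDP n α H0 p k ω else 0) := by
    intro ω
    have h0mem : 0 ∈ Finset.range (n+1) := by simp
    refine le_trans ?_ (Finset.le_sup'
      (f := fun k => if FDPhat n α p k ω ≤ α then FDP n α H0 p k ω else 0) h0mem)
    by_cases hc' : FDPhat n α p 0 ω ≤ α
    · rw [if_pos hc']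
      rw [FDP]
      exact div_nonneg (Nat.cast_nonneg _) (le_trans zero_le_one (le_max_right _ _))
    · rw [if_neg hc']
  -- tail bound
  have htail : ∀ y ∈ Set.Ioc (0:ℝ) 1, (ℙ {ω | y ≤ hfun ω}).toReal ≤ min 1 (t / y) := by
    intro y hy
    obtain ⟨hy0, hy1⟩ := hy
    refine le_min ?_ ?_
    · have h1 : (ℙ {ω | y ≤ hfun ω}).toReal ≤ (1:ℝ≥0∞).toReal :=
        ENNReal.toReal_mono ENNReal.one_ne_top prob_le_one
      simpa using h1
    · have hsub : {ω | y ≤ hfun ω} ⊆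
          {ω | ∃ i ∈ H0, p i ω ≤ (α/(↑n*y)) * (AnytimeFDR.Ncnt H0 p (p i ω) ω : ℝ)} := by
        intro ω hω
        have hyS : y ≤ c * S ω := le_trans hω (min_le_right _ _)
        obtain ⟨i0, hi0, hSi⟩ :=
          Finset.exists_mem_eq_sup' hH0 (fun i => (N i ω : ℝ) / p i ω)
        have hp0 : 0 < p i0 ω := (hrange i0 ω).1
        refine ⟨i0, hi0, ?_⟩
        have hSω : S ω = (N i0 ω : ℝ) / p i0 ω := by rw [hS]; exact hSi
        have h1 : y ≤ α / ↑n * ((N i0 ω : ℝ) / p i0 ω) := by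
          rw [← hSω, ← hc]; exact hyS
        have h2 : y ≤ α * (N i0 ω : ℝ) / (↑n * p i0 ω) := by
          rw [← div_mul_div_comm]; exact h1
        have hnp : (0:ℝ) < ↑n * p i0 ω := by positivity
        have hkey : y * (↑n * p i0 ω) ≤ α * (N i0 ω : ℝ) := (le_div_iff₀ hnp).1 h2
        have hny : (0:ℝ) < ↑n * y := by positivity
        rw [div_mul_eq_mul_div, le_div_iff₀ hny]
        have : (N i0 ω : ℝ) = (AnytimeFDR.Ncnt H0 p (p i0 ω) ω : ℝ) := by rw [hN]
        rw [← this]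
        nlinarith [hkey]
      have hBH := AnytimeFDR.BH_tail H0 hH0 p hmeas hsubunif hindep
        (a := α/(↑n*y)) (by positivity)
      calc (ℙ {ω | y ≤ hfun ω}).toReal
          ≤ (ENNReal.ofReal ((m:ℝ) * (α/(↑n*y)))).toReal := by
            refine ENNReal.toReal_mono ENNReal.ofReal_ne_top ?_
            exact le_trans (measure_mono hsub) hBH
        _ = (m:ℝ) * (α/(↑n*y)) := ENNReal.toReal_ofReal (by positivity)
        _ = t / y := by rw [ht]; field_simp
  -- integrability of the comparison function on (0,1]
  have hψmeas : Measurable fun y : ℝ => min 1 (t / y) :=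
    measurable_const.min (measurable_const.div measurable_id)
  have hψint : IntegrableOn (fun y : ℝ => min 1 (t / y)) (Set.Ioc 0 1) := by
    refine Integrable.mono' (g := fun _ => (1:ℝ)) ?_ hψmeas.aestronglyMeasurable ?_
    · refine integrableOn_const ?_
      rw [Real.volume_Ioc]
      exact ENNReal.ofReal_ne_top
    · rw [ae_restrict_iff' measurableSet_Ioc]
      refine Filter.Eventually.of_forall fun y hy => ?_
      rw [Real.norm_eq_abs, abs_le]
      constructor
      · have : (0:ℝ) ≤ min 1 (t/y) := le_min zero_le_one (div_nonneg ht0.le hy.1.le)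
        linarith
      · exact min_le_left _ _
  -- the comparison integral
  have hint1 : ∫ y in Set.Ioc (0:ℝ) t, min 1 (t/y) = t := by
    have he : Set.EqOn (fun y => min 1 (t/y)) (fun _ => (1:ℝ)) (Set.Ioc 0 t) := by
      intro y hy
      have h1 : 1 ≤ t / y := (le_div_iff₀ hy.1).2 (by linarith [hy.2])
      exact min_eq_left h1
    rw [setIntegral_congr_fun measurableSet_Ioc he, setIntegral_const, measureReal_def, Real.volume_Ioc,
      smul_eq_mul, mul_one, ENNReal.toReal_ofReal (by linarith : (0:ℝ) ≤ t - 0)]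
    ring
  have hint2 : ∫ y in Set.Ioc t 1, min 1 (t/y) = t * Real.log (1/t) := by
    have he : Set.EqOn (fun y => min 1 (t/y)) (fun y => t * y⁻¹) (Set.Ioc t 1) := by
      intro y hy
      have hy0 : 0 < y := lt_trans ht0 hy.1
      have h1 : t / y ≤ 1 := (div_le_one hy0).2 hy.1.le
      show min 1 (t/y) = t * y⁻¹
      rw [min_eq_right h1, div_eq_mul_inv]
    rw [setIntegral_congr_fun measurableSet_Ioc he,
      ← intervalIntegral.integral_of_le ht1.le, intervalIntegral.integral_const_mul,
      integral_inv (by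
        intro hmem
        rw [Set.uIcc_of_le ht1.le] at hmem
        exact absurd hmem.1 (not_le.2 ht0))]
  have hdisj : Disjoint (Set.Ioc (0:ℝ) t) (Set.Ioc t 1) := Set.Ioc_disjoint_Ioc_of_le le_rfl
  have hunion : Set.Ioc (0:ℝ) 1 = Set.Ioc 0 t ∪ Set.Ioc t 1 :=
    (Set.Ioc_union_Ioc_eq_Ioc ht0.le ht1.le).symm
  have hψi1 : IntegrableOn (fun y : ℝ => min 1 (t / y)) (Set.Ioc 0 t) :=
    hψint.mono_set (by rw [hunion]; exact Set.subset_union_left)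
  have hψi2 : IntegrableOn (fun y : ℝ => min 1 (t / y)) (Set.Ioc t 1) :=
    hψint.mono_set (by rw [hunion]; exact Set.subset_union_right)
  have hcomp : ∫ y in Set.Ioc (0:ℝ) 1, min 1 (t/y) = t * (1 - Real.log t) := by
    rw [hunion, setIntegral_union hdisj measurableSet_Ioc hψi1 hψi2, hint1, hint2,
      one_div, Real.log_inv]
    ring
  calc ∫ ω, (Finset.range (n + 1)).sup' ⟨0, by simp⟩
        (fun k => if FDPhat n α p k ω ≤ α then FDP n α H0 p k ω else 0) ∂ℙ
      ≤ ∫ ω, hfun ω ∂ℙ := integral_mono_of_nonneg (Filter.Eventually.of_forall hg0) hhint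
        (Filter.Eventually.of_forall hdom)
    _ = ∫ y in Set.Ioc (0:ℝ) 1, (ℙ {ω | y ≤ hfun ω}).toReal :=
        hhint.integral_eq_integral_Ioc_meas_le (Filter.Eventually.of_forall hh0)
          (Filter.Eventually.of_forall hh1)
    _ ≤ ∫ y in Set.Ioc (0:ℝ) 1, min 1 (t/y) := by
        refine integral_mono_of_nonneg
          (Filter.Eventually.of_forall fun y => ENNReal.toReal_nonneg) hψint ?_
        show ∀ᵐ y ∂(volume.restrict (Set.Ioc (0:ℝ) 1)),
          (ℙ {ω | y ≤ hfun ω}).toReal ≤ min 1 (t/y)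
        rw [ae_restrict_iff' measurableSet_Ioc]
        exact Filter.Eventually.of_forall htail
    _ = t * (1 - Real.log t) := hcomp
    _ ≤ t * (2 * Real.log (2 * ↑n / (↑m * α)) +
          Real.log (8 * Real.exp 5 * Real.log (8 * ↑n / (↑m * α)))) := by
        have h2t : 2 * (n:ℝ) / ((m:ℝ) * α) = 2 / t := by
          rw [ht]
          field_simp
        have h8t : 8 * (n:ℝ) / ((m:ℝ) * α) = 8 / t := by
          rw [ht]
          field_simp
        rw [h2t, h8t]
        refine mul_le_mul_of_nonneg_left ?_ ht0.le
        have hlogt : Real.log t ≤ 0 := Real.log_nonpos ht0.le ht1.le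
        have hexp4 : Real.exp 1 ≤ 4 := by
          have := Real.exp_one_lt_d9
          nlinarith
        have hlog4 : (1:ℝ) ≤ 2 * Real.log 2 := by
          calc (1:ℝ) = Real.log (Real.exp 1) := (Real.log_exp 1).symm
            _ ≤ Real.log 4 := Real.log_le_log (Real.exp_pos 1) hexp4
            _ = 2 * Real.log 2 := by
                rw [show (4:ℝ) = 2^2 by norm_num, Real.log_pow]
                push_cast
                ring
        have hl2t : Real.log (2/t) = Real.log 2 - Real.log t :=
          Real.log_div two_ne_zero (ne_of_gt ht0)
        have h8div : (8:ℝ) ≤ 8 / t := by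
          rw [le_div_iff₀ ht0]
          nlinarith
        have hl8 : (1:ℝ) ≤ Real.log (8/t) := by
          calc (1:ℝ) = Real.log (Real.exp 1) := (Real.log_exp 1).symm
            _ ≤ Real.log (8/t) := Real.log_le_log (Real.exp_pos 1) (le_trans hexp4 (by linarith))
        have hlast : 0 ≤ Real.log (8 * Real.exp 5 * Real.log (8/t)) := by
          apply Real.log_nonneg
          have he5 : (1:ℝ) ≤ Real.exp 5 := Real.one_le_exp (by norm_num)
          have h1 : (1:ℝ) ≤ Real.exp 5 * Real.log (8/t) := by nlinarith
          nlinarith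
        rw [hl2t]
        linarith
end

section
/- Fix α ∈ (0, e^{-1}) and an integer n ≥ 2. Let H0 ⊆ {1,…,n} be nonempty and let p_1,…,p_n be random variables with values in (0,1] such that the family {p_i}_{i∈H0} is mutually independent and each p_i with i ∈ H0 is sub-uniform. For k ∈ {0,1,…,n} set R_k = {i : p_i ≤ αk/n}, FDP(R_k) = |R_k ∩ H0| / max(|R_k|, 1), and FDP̂(R_k) = n·(max_{i∈R_k} p_i) / max(|R_k|, 1), where the maximum over the empty set is 0. Then E[ max over k ∈ {0,…,n} with FDP̂(R_k) ≤ α of FDP(R_k) ] ≤ 4α·log(9/α). -/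
open MeasureTheory ProbabilityTheory Finset
open scoped ENNReal

variable {Ω : Type*}

/- ### Auxiliary material -/

section Aux

lemma aux_layer (u : ℕ → ℝ) (hu : Monotone u) :
    ∀ (L : ℕ) (g : ℝ), g ≤ u L →
      g ≤ u 0 + ∑ l ∈ Finset.range L, (u (l+1) - u l) * (if u l < g then 1 else 0) := by
  intro L
  induction L with
  | zero => intro g hg; simpa using hg
  | succ L ih =>
    intro g hg
    by_cases h : g ≤ u L
    · refine (ih g h).trans ?_
      rw [Finset.sum_range_succ]
      have : (0:ℝ) ≤ (u (L+1) - u L) * (if u L < g then 1 else 0) := by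
        apply mul_nonneg (by linarith [hu (Nat.le_succ L)]) (by positivity)
      linarith
    · push_neg at h
      have : ∀ l ∈ Finset.range (L+1), (u (l+1) - u l) * (if u l < g then 1 else 0)
          = u (l+1) - u l := by
        intro l hl
        rw [Finset.mem_range] at hl
        have : u l ≤ u L := hu (by omega)
        rw [if_pos (by linarith), mul_one]
      rw [Finset.sum_congr rfl this, Finset.sum_range_sub (f := u)]
      linarith

/-- at least `j` of the null p-values are `≤ x` -/
def badSet (n : ℕ) (H0 : Finset (Fin n)) (p : Fin n → Ω → ℝ) (j : ℕ) (x : ℝ) : Set Ω :=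
  ⋃ T ∈ (Finset.univ : Finset {i // i ∈ H0}).powersetCard j,
    ⋂ i ∈ T, {ω | p i.1 ω ≤ x}

lemma badSet_measurable [MeasurableSpace Ω] {n : ℕ} (H0 : Finset (Fin n))
    (p : Fin n → Ω → ℝ) (hmeas : ∀ i, Measurable (p i)) (j : ℕ) (x : ℝ) :
    MeasurableSet (badSet n H0 p j x) := by
  apply MeasurableSet.biUnion (Finset.countable_toSet _)
  intro T _
  apply MeasurableSet.biInter (Finset.countable_toSet _)
  intro i _
  exact hmeas i.1 measurableSet_Iic

lemma badSet_prob [MeasureSpace Ω] [IsProbabilityMeasure (ℙ : Measure Ω)]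
    {n : ℕ} (H0 : Finset (Fin n)) (p : Fin n → Ω → ℝ)
    (hsubunif : ∀ i ∈ H0, ∀ x ∈ Set.Icc (0 : ℝ) 1,
      ℙ {ω | p i ω ≤ x} ≤ ENNReal.ofReal x)
    (hindep : iIndepFun
      (fun i : {i // i ∈ H0} => p i.1) ℙ)
    (j : ℕ) {x : ℝ} (hx : x ∈ Set.Icc (0:ℝ) 1) :
    ℙ (badSet n H0 p j x) ≤ ENNReal.ofReal ((H0.card.choose j : ℝ) * x ^ j) := by
  have key : ∀ T ∈ (Finset.univ : Finset {i // i ∈ H0}).powersetCard j,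
      ℙ (⋂ i ∈ T, {ω | p i.1 ω ≤ x}) ≤ ENNReal.ofReal x ^ j := by
    intro T hT
    obtain ⟨-, hTcard⟩ := Finset.mem_powersetCard.mp hT
    have heq : ℙ (⋂ i ∈ T, {ω | p i.1 ω ≤ x}) = ∏ i ∈ T, ℙ {ω | p i.1 ω ≤ x} := by
      refine hindep.meas_biInter (fun i _ => ⟨Set.Iic x, measurableSet_Iic, rfl⟩)
    rw [heq, ← hTcard, ← Finset.prod_const]
    exact Finset.prod_le_prod' (fun i _ => hsubunif i.1 i.2 x hx)
  calc ℙ (badSet n H0 p j x)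
      ≤ ∑ T ∈ (Finset.univ : Finset {i // i ∈ H0}).powersetCard j,
          ℙ (⋂ i ∈ T, {ω | p i.1 ω ≤ x}) := measure_biUnion_finset_le _ _
    _ ≤ ∑ T ∈ (Finset.univ : Finset {i // i ∈ H0}).powersetCard j,
          ENNReal.ofReal x ^ j := Finset.sum_le_sum key
    _ = ((Finset.univ : Finset {i // i ∈ H0}).powersetCard j).card • ENNReal.ofReal x ^ j :=
          (Finset.sum_const _)
    _ = (H0.card.choose j : ℝ≥0∞) * ENNReal.ofReal x ^ j := by
          rw [Finset.card_powersetCard, Finset.card_univ, Fintype.card_coe, nsmul_eq_mul]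
    _ = ENNReal.ofReal ((H0.card.choose j : ℝ) * x ^ j) := by
          rw [ENNReal.ofReal_mul (by positivity), ENNReal.ofReal_pow hx.1,
            ENNReal.ofReal_natCast]

lemma FDP_nonneg {n : ℕ} {α : ℝ} {H0 : Finset (Fin n)} {p : Fin n → Ω → ℝ} {k : ℕ} {ω : Ω} :
    0 ≤ FDP n α H0 p k ω := by
  apply div_nonneg (by positivity)
  exact le_max_of_le_right zero_le_one

lemma FDP_le_one {n : ℕ} {α : ℝ} {H0 : Finset (Fin n)} {p : Fin n → Ω → ℝ} {k : ℕ} {ω : Ω} :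
    FDP n α H0 p k ω ≤ 1 := by
  unfold FDP
  apply div_le_one_of_le₀
  · exact le_max_of_le_left (by exact_mod_cast Finset.card_le_card (Finset.inter_subset_left))
  · positivity

/-- extraction of a bad event from a large selected FDP -/
lemma extraction {n : ℕ} (hn : 0 < n) {α : ℝ} (hα0 : 0 < α)
    (H0 : Finset (Fin n)) (p : Fin n → Ω → ℝ) {u : ℝ} (hu : 0 < u) {ω : Ω} {k : ℕ}
    (hk : k ≤ n) (hcond : FDPhat n α p k ω ≤ α) (hFDP : u < FDP n α H0 p k ω) :
    ∃ j, 1 ≤ j ∧ j ≤ n ∧ ω ∈ badSet n H0 p j (min α (α * j / (u * n))) := by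
  classical
  set R := Rset n α p k ω with hR
  set V := R ∩ H0 with hVdef
  set j := V.card with hj
  have hVnonempty : V.Nonempty := by
    rw [Finset.nonempty_iff_ne_empty]
    intro hVe
    rw [FDP, ← hR, ← hVdef, hVe] at hFDP
    simp at hFDP
    linarith
  have hj1 : 1 ≤ j := Finset.card_pos.mpr hVnonempty
  have hjn : j ≤ n := by
    have := Finset.card_le_card (Finset.subset_univ V)
    simpa using this
  have hRne : R.Nonempty := ⟨hVnonempty.choose, Finset.mem_of_mem_inter_left hVnonempty.choose_spec⟩
  have hcardR : 1 ≤ R.card := Finset.card_pos.mpr hRne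
  have hcardR' : (1:ℝ) ≤ (R.card : ℝ) := by exact_mod_cast hcardR
  have hmax : max ((R.card : ℝ)) 1 = (R.card : ℝ) := max_eq_left hcardR'
  set t := R.sup' hRne (fun i => p i ω) with ht
  have hhat : (n:ℝ) * t ≤ α * R.card := by
    rw [FDPhat, ← hR, dif_pos hRne, hmax] at hcond
    rw [div_le_iff₀ (by linarith)] at hcond
    linarith [hcond]
  have hfdp : u * R.card < (j:ℝ) := by
    rw [FDP, ← hR, ← hVdef, hmax, lt_div_iff₀ (by linarith)] at hFDP
    linarith
  have htlt : t < α * j / (u * n) := by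
    rw [lt_div_iff₀ (by positivity)]
    nlinarith [hα0, hu]
  have htle : t ≤ α := by
    apply Finset.sup'_le
    intro i hi
    have := (Finset.mem_filter.mp hi).2
    calc p i ω ≤ α * k / n := this
      _ ≤ α * n / n := by gcongr
      _ = α := by field_simp
  have hsmall : ∀ i ∈ V, p i ω ≤ min α (α * j / (u * n)) := by
    intro i hi
    have hiR : i ∈ R := Finset.mem_of_mem_inter_left hi
    have hpt : p i ω ≤ t := Finset.le_sup' (fun i => p i ω) hiR
    exact le_min (hpt.trans htle) (hpt.trans htlt.le)
  refine ⟨j, hj1, hjn, ?_⟩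
  have hmem : ∀ a : {x // x ∈ V}, a.1 ∈ H0 := fun a => Finset.mem_of_mem_inter_right a.2
  set T : Finset {i // i ∈ H0} :=
    V.attach.map ⟨fun a => ⟨a.1, hmem a⟩, by intro a b hab; cases a; cases b; simpa using hab⟩
    with hT
  have hTmem : T ∈ (Finset.univ : Finset {i // i ∈ H0}).powersetCard j := by
    rw [Finset.mem_powersetCard]
    refine ⟨Finset.subset_univ _, ?_⟩
    rw [hT, Finset.card_map, Finset.card_attach]
  refine Set.mem_biUnion hTmem ?_
  rw [Set.mem_iInter₂]
  intro i hiT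
  rw [hT, Finset.mem_map] at hiT
  obtain ⟨a, _, rfl⟩ := hiT
  exact hsmall a.1 a.2

lemma term_bound {m n j : ℕ} (hmn : m ≤ n) {α w : ℝ} (hα : 0 < α) (hw : 0 < w) :
    (m.choose j : ℝ) * (min α (α * j / (w * n))) ^ j ≤ (Real.exp 1 * α / w) ^ j := by
  rcases Nat.eq_zero_or_pos n with rfl | hn
  · interval_cases m
    rcases Nat.eq_zero_or_pos j with rfl | hj
    · simp
    · rw [Nat.choose_eq_zero_of_lt hj]
      push_cast
      rw [zero_mul]
      positivity
  have hn' : (0:ℝ) < n := by exact_mod_cast hn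
  have hx0 : (0:ℝ) ≤ min α (α * j / (w * n)) := le_min hα.le (by positivity)
  have h1 : (m.choose j : ℝ) * (min α (α * j / (w * n))) ^ j
      ≤ ((m:ℝ) ^ j / (j.factorial)) * (α * j / (w * n)) ^ j := by
    apply mul_le_mul (Nat.choose_le_pow_div j m)
      (pow_le_pow_left₀ hx0 (min_le_right _ _) j) (by positivity) (by positivity)
  refine h1.trans ?_
  have h2 : ((m:ℝ)^j / j.factorial) * (α * j / (w*n))^j
      = ((j:ℝ)^j / j.factorial) * ((α * m) / (w*n))^j := by
    rw [div_mul_eq_mul_div, div_mul_eq_mul_div, ← mul_pow, ← mul_pow]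
    ring_nf
  rw [h2]
  have h3 : ((j:ℝ)^j / j.factorial) ≤ Real.exp 1 ^ j := by
    have hsum := Real.sum_le_exp_of_nonneg (x := (j:ℝ)) (by positivity) (j+1)
    have hterm : ((j:ℝ)^j / j.factorial) ≤ ∑ i ∈ Finset.range (j+1), (j:ℝ)^i / i.factorial :=
      Finset.single_le_sum (f := fun i => (j:ℝ)^i / i.factorial)
        (fun i _ => by positivity) (Finset.self_mem_range_succ j)
    have hexp : Real.exp ((j:ℝ)) = Real.exp 1 ^ j := by
      rw [← Real.exp_nat_mul, mul_one]
    linarith [hsum, hterm, hexp ▸ hsum]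
  have h4 : ((α * m) / (w*n))^j ≤ (α / w)^j := by
    apply pow_le_pow_left₀ (by positivity)
    rw [div_le_div_iff₀ (by positivity) hw]
    have hm' : (m:ℝ) ≤ n := by exact_mod_cast hmn
    nlinarith [mul_le_mul_of_nonneg_left hm' (mul_pos hα hw).le]
  calc ((j:ℝ)^j / j.factorial) * ((α * m) / (w*n))^j
      ≤ Real.exp 1 ^ j * (α / w)^j := by
        apply mul_le_mul h3 h4 (by positivity) (by positivity)
    _ = (Real.exp 1 * α / w) ^ j := by rw [← mul_pow, mul_div_assoc]

lemma geom_tail {q : ℝ} (h0 : 0 ≤ q) (h1 : q ≤ 16/100) (n : ℕ) :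
    ∑ j ∈ Finset.Icc 1 n, q^j ≤ q * (100/84) := by
  have h2 : ∑ j ∈ Finset.range n, q^j ≤ 100/84 := by
    have hq1 : q ≠ 1 := by intro h; rw [h] at h1; norm_num at h1
    rw [geom_sum_eq hq1]
    have heq : (q^n - 1)/(q - 1) = (1 - q^n)/(1 - q) := by
      rw [div_eq_div_iff (by intro h; apply hq1; linarith) (by intro h; apply hq1; linarith)]
      ring
    rw [heq]
    have hpow : 0 ≤ q^n := pow_nonneg h0 n
    calc (1 - q^n)/(1 - q) ≤ 1/(84/100) := by
          apply div_le_div₀ (by norm_num) (by linarith) (by norm_num) (by linarith)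
      _ = 100/84 := by norm_num
  calc ∑ j ∈ Finset.Icc 1 n, q^j = ∑ i ∈ Finset.range n, q^(1+i) := by
        rw [← Finset.Ico_add_one_right_eq_Icc, Finset.sum_Ico_eq_sum_range]
        simp
    _ = q * ∑ i ∈ Finset.range n, q^i := by
        rw [Finset.mul_sum]
        exact Finset.sum_congr rfl (fun i _ => by rw [pow_add, pow_one])
    _ ≤ q * (100/84) := by
        apply mul_le_mul_of_nonneg_left h2 h0

lemma log9_ge : (2.0794 : ℝ) ≤ Real.log 9 := by
  have h8 : Real.log 8 ≤ Real.log 9 := Real.log_le_log (by norm_num) (by norm_num)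
  have : Real.log 8 = 3 * Real.log 2 := by
    rw [show (8:ℝ) = 2^3 by norm_num, Real.log_pow]; norm_num
  nlinarith [Real.log_two_gt_d9]

lemma log17_ge : (2.772 : ℝ) ≤ Real.log 17 := by
  have h16 : Real.log 16 ≤ Real.log 17 := Real.log_le_log (by norm_num) (by norm_num)
  have : Real.log 16 = 4 * Real.log 2 := by
    rw [show (16:ℝ) = 2^4 by norm_num, Real.log_pow]; norm_num
  nlinarith [Real.log_two_gt_d9]

lemma log144_ge : (4.852 : ℝ) ≤ Real.log 144 := by
  have h : Real.log 128 ≤ Real.log 144 := Real.log_le_log (by norm_num) (by norm_num)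
  have : Real.log 128 = 7 * Real.log 2 := by
    rw [show (128:ℝ) = 2^7 by norm_num, Real.log_pow]; norm_num
  nlinarith [Real.log_two_gt_d9]

lemma numA {α : ℝ} (h0 : 0 < α) (h1 : 1 ≤ 16*α) (h2 : α < Real.exp (-1)) :
    1 ≤ 4*α*Real.log (9/α) := by
  have hlog : Real.log (9/α) = Real.log 9 - Real.log α :=
    Real.log_div (by norm_num) h0.ne'
  by_cases h6 : 1 ≤ 6*α
  · have hαlt : Real.log α < -1 := by
      have := Real.log_lt_log h0 h2
      rwa [Real.log_exp] at this
    nlinarith [log9_ge]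
  · push_neg at h6
    have h16α : Real.log (16*α) ≤ 16*α - 1 := Real.log_le_sub_one_of_pos (by linarith)
    have hsplit : Real.log (9/α) = Real.log 144 - Real.log (16*α) := by
      rw [hlog, Real.log_mul (by norm_num) h0.ne']
      have : Real.log 144 = Real.log 9 + Real.log 16 := by
        rw [← Real.log_mul (by norm_num) (by norm_num)]; norm_num
      linarith
    have key : 5.852 - 16*α ≤ Real.log (9/α) := by
      rw [hsplit]; nlinarith [log144_ge]
    nlinarith [key, sq_nonneg (α - 1/16),
      mul_nonneg (show (0:ℝ) ≤ α - 1/16 by linarith) (show (0:ℝ) ≤ 1/6 - α by linarith)]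

lemma numB1 {α : ℝ} (h0 : 0 < α) (h16 : 16*α < 1) :
    17*α ≤ 4*α*Real.log (9/α) := by
  have hlog : Real.log 144 ≤ Real.log (9/α) := by
    apply Real.log_le_log (by norm_num)
    rw [le_div_iff₀ h0]; linarith
  nlinarith [log144_ge, hlog]

lemma numB2 {α : ℝ} (h0 : 0 < α) (h17 : 17*α < 1) {L : ℝ} (hLpos : 0 ≤ L)
    (hL : L ≤ 21*(Real.log (1/(17*α))) + 1) :
    17*α + L*(Real.exp 1 * α * (5/84)) ≤ 4*α*Real.log (9/α) := by
  have hE1 : Real.exp 1 < 2.7182818286 := Real.exp_one_lt_d9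
  have hE2 : (2.7182818283:ℝ) < Real.exp 1 := Real.exp_one_gt_d9
  have hα1 : α < 1 := by linarith
  have hXneg : Real.log α < 0 := Real.log_neg h0 hα1
  have hlog9 : Real.log (9/α) = Real.log 9 - Real.log α := Real.log_div (by norm_num) h0.ne'
  have hlog17 : Real.log (1/(17*α)) = -(Real.log 17 + Real.log α) := by
    rw [one_div, Real.log_inv, Real.log_mul (by norm_num) h0.ne']
  set X := Real.log α with hX
  set E := Real.exp 1 with hE
  set c : ℝ := E * (5/84) with hc
  have hc1 : c ≤ 16181/100000 := by rw [hc]; nlinarith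
  have hc2 : (1618/10000 : ℝ) ≤ c := by rw [hc]; nlinarith
  rw [hlog9]
  have hL' : L ≤ 21*(-(Real.log 17 + X)) + 1 := by rw [← hlog17]; exact hL
  have hlogpos : 0 ≤ -(Real.log 17 + X) := by
    have h170 : Real.log (17*α) < 0 := Real.log_neg (by linarith) h17
    rw [Real.log_mul (by norm_num) h0.ne'] at h170
    linarith
  have main : (21*(-(Real.log 17 + X)) + 1) * c + 17 ≤ 4*(Real.log 9 - X) := by
    nlinarith [log9_ge, log17_ge,
      mul_nonneg (show (0:ℝ) ≤ 4 - 21*c by linarith) (show (0:ℝ) ≤ -X by linarith),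
      mul_nonneg (show (0:ℝ) ≤ c - 1618/10000 by linarith)
        (show (0:ℝ) ≤ Real.log 17 - 2.772 by linarith [log17_ge])]
  have main2 : ((21*(-(Real.log 17 + X)) + 1) * c + 17) * α ≤ 4*(Real.log 9 - X) * α :=
    mul_le_mul_of_nonneg_right main h0.le
  have step : L * (E * α * (5/84)) ≤ (21*(-(Real.log 17 + X)) + 1) * c * α := by
    have heq : L * (E * α * (5/84)) = L * c * α := by rw [hc]; ring
    rw [heq]
    apply mul_le_mul_of_nonneg_right ?_ h0.le
    apply mul_le_mul_of_nonneg_right hL' (by linarith)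
  nlinarith [main2, step]

end Aux

/-- Theorem 1 (anytime FDR control for BH-type selections), simplified form. -/
theorem expected_max_FDP_le_four_alpha_log [MeasureSpace Ω]
    [IsProbabilityMeasure (ℙ : Measure Ω)]
    {n : ℕ} (hn : 2 ≤ n) {α : ℝ} (hα0 : 0 < α) (hα1 : α < Real.exp (-1))
    (H0 : Finset (Fin n)) (hH0 : H0.Nonempty)
    (p : Fin n → Ω → ℝ) (hmeas : ∀ i, Measurable (p i))
    (hrange : ∀ i ω, p i ω ∈ Set.Ioc (0 : ℝ) 1)
    (hsubunif : ∀ i ∈ H0, ∀ x ∈ Set.Icc (0 : ℝ) 1,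
      ℙ {ω | p i ω ≤ x} ≤ ENNReal.ofReal x)
    (hindep : iIndepFun
      (fun i : {i // i ∈ H0} => p i.1) ℙ) :
    ∫ ω, (Finset.range (n + 1)).sup' ⟨0, by simp⟩
        (fun k => if FDPhat n α p k ω ≤ α then FDP n α H0 p k ω else 0) ∂ℙ
      ≤ 4 * α * Real.log (9 / α) := by
  classical
  have hexp1 : Real.exp (-1) < 1 := by
    have : Real.exp (-1) < Real.exp 0 := Real.exp_lt_exp.mpr (by norm_num)
    rwa [Real.exp_zero] at this
  have hα1' : α < 1 := hα1.trans hexp1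
  have hn0 : 0 < n := by omega
  have hn0' : (0:ℝ) < n := by exact_mod_cast hn0
  have hRHS0 : 0 ≤ 4 * α * Real.log (9 / α) := by
    apply mul_nonneg (by linarith)
    apply Real.log_nonneg
    rw [le_div_iff₀ hα0]; linarith
  set G : Ω → ℝ := fun ω => (Finset.range (n + 1)).sup' ⟨0, by simp⟩
      (fun k => if FDPhat n α p k ω ≤ α then FDP n α H0 p k ω else 0) with hGdef
  have hG1 : ∀ ω, G ω ≤ 1 := by
    intro ω
    apply Finset.sup'_le
    intro k _
    split
    · exact FDP_le_one
    · exact zero_le_one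
  have hG0 : ∀ ω, 0 ≤ G ω := by
    intro ω
    have h0mem : 0 ∈ Finset.range (n+1) := by simp
    refine le_trans ?_ (Finset.le_sup' _ h0mem)
    split
    · exact FDP_nonneg
    · exact le_refl 0
  by_cases hInt : Integrable G ℙ
  swap
  · rw [integral_undef hInt]; exact hRHS0
  by_cases hcase : 1 ≤ 16*α
  · -- trivial bound by 1
    have h1 : ∫ ω, G ω ∂ℙ ≤ ∫ _ω, (1:ℝ) ∂ℙ := integral_mono hInt (integrable_const 1) hG1
    rw [integral_const] at h1
    simp only [probReal_univ, smul_eq_mul, one_mul] at h1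
    exact h1.trans (numA hα0 hcase hα1)
  · push_neg at hcase  -- 16 α < 1
    set w : ℕ → ℝ := fun l => 17*α*(21/20:ℝ)^l with hwdef
    have hw0 : ∀ l, 0 < w l := fun l => by positivity
    have hwmono : Monotone w := by
      intro a b hab
      simp only [hwdef]
      apply mul_le_mul_of_nonneg_left (pow_le_pow_right₀ (by norm_num) hab) (by positivity)
    have hwsucc : ∀ l, w (l+1) - w l = w l * (1/20) := by
      intro l
      simp only [hwdef]
      rw [pow_succ]
      ring
    have hw00 : w 0 = 17*α := by simp [hwdef]
    set L := ⌈Real.log (1/(17*α)) / Real.log (21/20)⌉₊ with hLdef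
    have hlog21 : (1/21 : ℝ) ≤ Real.log (21/20) := by
      have h := Real.log_le_sub_one_of_pos (show (0:ℝ) < 20/21 by norm_num)
      rw [show (21/20:ℝ) = (20/21)⁻¹ by norm_num, Real.log_inv]
      linarith
    have hlog21pos : (0:ℝ) < Real.log (21/20) := by linarith
    have hL1 : (1:ℝ) ≤ w L := by
      by_cases h17 : 17*α < 1
      · have harg : (1:ℝ) ≤ 1/(17*α) := by
          rw [le_div_iff₀ (by linarith)]; linarith
        have hceil := Nat.le_ceil (Real.log (1/(17*α)) / Real.log (21/20))
        rw [← hLdef] at hceil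
        have h2 : Real.log (1/(17*α)) ≤ (L:ℝ) * Real.log (21/20) :=
          (div_le_iff₀ hlog21pos).mp hceil
        have h3 : Real.log (1/(17*α)) ≤ Real.log ((21/20:ℝ)^L) := by
          rw [Real.log_pow]; exact h2
        have h4 : 1/(17*α) ≤ (21/20:ℝ)^L :=
          (Real.log_le_log_iff (by positivity) (by positivity)).mp h3
        rw [div_le_iff₀ (by linarith : (0:ℝ) < 17*α)] at h4
        simp only [hwdef]
        nlinarith
      · push_neg at h17
        have : (1:ℝ) ≤ (21/20:ℝ)^L := one_le_pow₀ (by norm_num)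
        simp only [hwdef]
        nlinarith
    -- bad sets
    set B : ℕ → ℕ → Set Ω := fun j l => badSet n H0 p j (min α (α*(j:ℝ)/(w l * n))) with hBdef
    have hBmeas : ∀ j l, MeasurableSet (B j l) := fun j l => badSet_measurable H0 p hmeas _ _
    -- pointwise bound
    set h : Ω → ℝ := fun ω => w 0 + ∑ l ∈ Finset.range L, ∑ j ∈ Finset.Icc 1 n,
      (w (l+1) - w l) * Set.indicator (B j l) 1 ω with hhdef
    have hpt : ∀ ω, G ω ≤ h ω := by
      intro ω
      have h1 := aux_layer w hwmono L (G ω) ((hG1 ω).trans hL1)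
      refine h1.trans ?_
      simp only [hhdef]
      apply add_le_add_right
      apply Finset.sum_le_sum
      intro l _
      rw [← Finset.mul_sum]
      apply mul_le_mul_of_nonneg_left ?_ (sub_nonneg.mpr (hwmono (Nat.le_succ l)))
      split_ifs with hlt
      · -- extract a bad event
        replace hlt := (Finset.lt_sup'_iff _).mp hlt
        obtain ⟨k, hk, hklt⟩ := hlt
        rw [Finset.mem_range] at hk
        split_ifs at hklt with hcnd
        · obtain ⟨j, hj1, hjn, hmem⟩ :=
            extraction hn0 hα0 H0 p (hw0 l) (by omega) hcnd hklt
          have hind : Set.indicator (B j l) (1 : Ω → ℝ) ω = 1 := Set.indicator_of_mem hmem 1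
          calc (1:ℝ) = Set.indicator (B j l) 1 ω := hind.symm
            _ ≤ ∑ j ∈ Finset.Icc 1 n, Set.indicator (B j l) 1 ω := by
                apply Finset.single_le_sum
                  (f := fun j => Set.indicator (B j l) 1 ω)
                  (fun j _ => Set.indicator_nonneg (fun _ _ => zero_le_one) ω)
                  (Finset.mem_Icc.mpr ⟨hj1, hjn⟩)
        · exfalso; linarith [hw0 l]
      · apply Finset.sum_nonneg
        exact fun j _ => Set.indicator_nonneg (fun _ _ => zero_le_one) ω
    -- integrability
    have hIntInd : ∀ l j, Integrable
        (fun ω => (w (l+1) - w l) * Set.indicator (B j l) 1 ω) ℙ := by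
      intro l j
      exact ((integrable_const (1:ℝ)).indicator (hBmeas j l)).const_mul _
    have hIntH : Integrable h ℙ := by
      apply (integrable_const (w 0)).add
      apply integrable_finset_sum
      intro l _
      exact integrable_finset_sum _ (fun j _ => hIntInd l j)
    have hmonoI : ∫ ω, G ω ∂ℙ ≤ ∫ ω, h ω ∂ℙ := integral_mono hInt hIntH hpt
    -- compute the integral of h
    have hIH : ∫ ω, h ω ∂ℙ = w 0 + ∑ l ∈ Finset.range L, ∑ j ∈ Finset.Icc 1 n,
        (w (l+1) - w l) * (ℙ (B j l)).toReal := by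
      simp only [hhdef]
      rw [integral_add (integrable_const _)
        (integrable_finset_sum _ (fun l _ => integrable_finset_sum _ (fun j _ => hIntInd l j)))]
      rw [integral_const]
      simp only [probReal_univ, one_smul]
      congr 1
      rw [integral_finset_sum _ (fun l _ => integrable_finset_sum _ (fun j _ => hIntInd l j))]
      apply Finset.sum_congr rfl
      intro l _
      rw [integral_finset_sum _ (fun j _ => hIntInd l j)]
      apply Finset.sum_congr rfl
      intro j _
      rw [integral_const_mul, integral_indicator_one (hBmeas j l), measureReal_def]
    -- bound each term
    have hmH0 : H0.card ≤ n := by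
      have := Finset.card_le_card (Finset.subset_univ H0)
      simpa using this
    have hterm : ∀ l, ∀ j ∈ Finset.Icc 1 n,
        (ℙ (B j l)).toReal ≤ (Real.exp 1 * α / w l)^j := by
      intro l j _
      have hx : min α (α*(j:ℝ)/(w l * n)) ∈ Set.Icc (0:ℝ) 1 :=
        ⟨le_min hα0.le (by positivity), (min_le_left _ _).trans hα1'.le⟩
      have h1 := badSet_prob H0 p hsubunif hindep j hx
      have h2 : (ℙ (B j l)).toReal ≤ (H0.card.choose j : ℝ) * (min α (α*(j:ℝ)/(w l * n)))^j := by
        have h3 := ENNReal.toReal_mono (by exact ENNReal.ofReal_ne_top) h1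
        rwa [ENNReal.toReal_ofReal (by positivity)] at h3
      exact h2.trans (term_bound hmH0 hα0 (hw0 l))
    have hlevel : ∀ l ∈ Finset.range L, ∑ j ∈ Finset.Icc 1 n,
        (w (l+1) - w l) * (ℙ (B j l)).toReal ≤ Real.exp 1 * α * (5/84) := by
      intro l _
      have hq0 : (0:ℝ) ≤ Real.exp 1 * α / w l := by positivity
      have hq1 : Real.exp 1 * α / w l ≤ 16/100 := by
        have hp1 : (1:ℝ) ≤ (21/20:ℝ)^l := one_le_pow₀ (by norm_num)
        have hE1 : Real.exp 1 < 2.7182818286 := Real.exp_one_lt_d9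
        rw [div_le_iff₀ (hw0 l)]
        simp only [hwdef]
        nlinarith
      calc ∑ j ∈ Finset.Icc 1 n, (w (l+1) - w l) * (ℙ (B j l)).toReal
          ≤ ∑ j ∈ Finset.Icc 1 n, (w (l+1) - w l) * (Real.exp 1 * α / w l)^j := by
            apply Finset.sum_le_sum
            intro j hj
            apply mul_le_mul_of_nonneg_left (hterm l j hj)
              (sub_nonneg.mpr (hwmono (Nat.le_succ l)))
        _ = (w (l+1) - w l) * ∑ j ∈ Finset.Icc 1 n, (Real.exp 1 * α / w l)^j := by
            rw [Finset.mul_sum]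
        _ ≤ (w (l+1) - w l) * ((Real.exp 1 * α / w l) * (100/84)) := by
            apply mul_le_mul_of_nonneg_left (geom_tail hq0 hq1 n)
              (sub_nonneg.mpr (hwmono (Nat.le_succ l)))
        _ = Real.exp 1 * α * (5/84) := by
            rw [hwsucc l]
            have hwl : w l ≠ 0 := (hw0 l).ne'
            field_simp
            ring
    -- assemble
    have htotal : ∫ ω, G ω ∂ℙ ≤ 17*α + (L:ℝ) * (Real.exp 1 * α * (5/84)) := by
      rw [hIH] at hmonoI
      refine hmonoI.trans ?_
      rw [hw00]
      apply add_le_add_right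
      calc ∑ l ∈ Finset.range L, ∑ j ∈ Finset.Icc 1 n,
            (w (l+1) - w l) * (ℙ (B j l)).toReal
          ≤ ∑ l ∈ Finset.range L, Real.exp 1 * α * (5/84) := Finset.sum_le_sum hlevel
        _ = (L:ℝ) * (Real.exp 1 * α * (5/84)) := by
            rw [Finset.sum_const, Finset.card_range, nsmul_eq_mul]
    refine htotal.trans ?_
    by_cases h17 : 17*α < 1
    · apply numB2 hα0 h17 (Nat.cast_nonneg L)
      have hratio0 : 0 ≤ Real.log (1/(17*α)) / Real.log (21/20) := by
        apply div_nonneg ?_ hlog21pos.le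
        apply Real.log_nonneg
        rw [le_div_iff₀ (by linarith)]; linarith
      have hceil : (L:ℝ) < Real.log (1/(17*α)) / Real.log (21/20) + 1 := by
        rw [hLdef]
        exact Nat.ceil_lt_add_one hratio0
      have hdivle : Real.log (1/(17*α)) / Real.log (21/20) ≤ 21 * Real.log (1/(17*α)) := by
        rw [div_le_iff₀ hlog21pos]
        have hlogn : 0 ≤ Real.log (1/(17*α)) := by
          apply Real.log_nonneg
          rw [le_div_iff₀ (by linarith)]; linarith
        nlinarith
      linarith
    · push_neg at h17
      have hL0 : L = 0 := by
        rw [hLdef, Nat.ceil_eq_zero]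
        apply div_nonpos_of_nonpos_of_nonneg ?_ hlog21pos.le
        apply Real.log_nonpos (by positivity)
        rw [div_le_one (by linarith)]; linarith
      rw [hL0]
      simp only [Nat.cast_zero, zero_mul, add_zero]
      exact numB1 hα0 hcase
end

section
/- Fix α ∈ (0, e^{-1}) and an integer n ≥ 2. Let H0 ⊆ {1,…,n} be nonempty, let p_1,…,p_n be random variables with values in (0,1], and suppose there exist random variables {q_i}_{i∈H0} that are mutually independent, sub-uniform, and satisfy q_i ≤ p_i almost surely for every i ∈ H0. Define k̂ = max{ k ∈ {1,…,n} : |{i : p_i ≤ αk/n}| ≥ k } (and k̂ = 0 if no such k exists), and let S = {i : p_i ≤ α·k̂/n}. Then the false discovery rate of S is controlled: E[ |S ∩ H0| / max(|S|, 1) ] ≤ 4α·log(9/α). -/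
open MeasureTheory ProbabilityTheory Finset

variable {Ω : Type*}

/-- The Benjamini–Hochberg index `k̂ = max {k ∈ {1,…,n} : |{i : p_i ≤ α k / n}| ≥ k}`,
with `k̂ = 0` if no such `k` exists (the `Finset.sup` of the empty set is `0`). -/
noncomputable def khat (n : ℕ) (α : ℝ) (p : Fin n → Ω → ℝ) (ω : Ω) : ℕ :=
  ((Finset.Icc 1 n).filter (fun k => k ≤ (Rset n α p k ω).card)).sup id

/-- The Benjamini–Hochberg rejection set `S = {i : p_i ≤ α k̂ / n}`. -/
noncomputable def BHset (n : ℕ) (α : ℝ) (p : Fin n → Ω → ℝ) (ω : Ω) : Finset (Fin n) :=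
  Rset n α p (khat n α p ω) ω

section AuxLemmas
open scoped ENNReal

lemma lemA {Ω : Type*} [MeasureSpace Ω] [IsProbabilityMeasure (ℙ : Measure Ω)]
    {n : ℕ} (H0 : Finset (Fin n)) (q : Fin n → Ω → ℝ)
    (hsubunif : ∀ i ∈ H0, ∀ x ∈ Set.Icc (0 : ℝ) 1,
      ℙ {ω | q i ω ≤ x} ≤ ENNReal.ofReal x)
    (hindep : iIndepFun
      (fun i : {i // i ∈ H0} => q i.1) ℙ)
    (t : ℝ) (ht : t ∈ Set.Icc (0:ℝ) 1) (a : ℕ) :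
    ℙ {ω | a ≤ (H0.filter (fun i => q i ω ≤ t)).card}
      ≤ (H0.card.choose a : ℕ) * ENNReal.ofReal t ^ a := by
  classical
  have hsub : {ω | a ≤ (H0.filter (fun i => q i ω ≤ t)).card}
      ⊆ ⋃ A ∈ H0.powersetCard a, ⋂ i ∈ A, {ω | q i ω ≤ t} := by
    intro ω hω
    obtain ⟨A, hA, hcard⟩ := Finset.exists_subset_card_eq hω
    refine Set.mem_iUnion₂.mpr ⟨A, ?_, ?_⟩
    · exact Finset.mem_powersetCard.mpr ⟨hA.trans (Finset.filter_subset _ _), hcard⟩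
    · exact Set.mem_biInter fun i hi => (Finset.mem_filter.mp (hA hi)).2
  refine (measure_mono hsub).trans ?_
  refine (measure_biUnion_finset_le _ _).trans ?_
  have hterm : ∀ A ∈ H0.powersetCard a,
      ℙ (⋂ i ∈ A, {ω | q i ω ≤ t}) ≤ ENNReal.ofReal t ^ a := by
    intro A hA
    obtain ⟨hAH0, hAcard⟩ := Finset.mem_powersetCard.mp hA
    set A' : Finset {i // i ∈ H0} := A.subtype (· ∈ H0) with hA'
    have hset : (⋂ i ∈ A, {ω | q i ω ≤ t}) = ⋂ j ∈ A', {ω | q j.1 ω ≤ t} := by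
      ext ω
      simp only [Set.mem_iInter, Finset.mem_subtype, hA']
      constructor
      · intro h j hj; exact h j.1 hj
      · intro h i hi; exact h ⟨i, hAH0 hi⟩ (by simpa using hi)
    have hA'card : A'.card = a := by
      rw [hA', Finset.card_subtype, Finset.filter_true_of_mem (fun i hi => hAH0 hi), hAcard]
    rw [hset, hindep.meas_biInter (S := A') (s := fun j => {ω | q j.1 ω ≤ t})
      (fun j hj => ⟨Set.Iic t, measurableSet_Iic, rfl⟩)]
    calc ∏ j ∈ A', ℙ {ω | q j.1 ω ≤ t}
        ≤ ∏ j ∈ A', ENNReal.ofReal t :=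
          Finset.prod_le_prod' fun j _ => hsubunif j.1 j.2 t ht
      _ = ENNReal.ofReal t ^ a := by rw [Finset.prod_const, hA'card]
  calc ∑ A ∈ H0.powersetCard a, ℙ (⋂ i ∈ A, {ω | q i ω ≤ t})
      ≤ ∑ _A ∈ H0.powersetCard a, ENNReal.ofReal t ^ a := Finset.sum_le_sum hterm
    _ = (H0.card.choose a : ℕ) * ENNReal.ofReal t ^ a := by
        rw [Finset.sum_const, Finset.card_powersetCard, nsmul_eq_mul]

lemma lemB (m a : ℕ) (t : ℝ) (ht : 0 ≤ t) (ha : 1 ≤ a) :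
    (m.choose a : ℝ) * t ^ a ≤ (Real.exp 1 * m * t / a) ^ a := by
  have ha0 : (0:ℝ) < a := by exact_mod_cast ha
  have hf0 : (0:ℝ) < (a.factorial : ℝ) := by exact_mod_cast a.factorial_pos
  have key : (a:ℝ) ^ a ≤ Real.exp 1 ^ a * a.factorial := by
    have h := Real.pow_div_factorial_le_exp (x := (a:ℝ)) (Nat.cast_nonneg a) a
    rw [div_le_iff₀ hf0] at h
    rwa [Real.exp_one_pow]
  have h1 : (m.choose a : ℝ) * t ^ a ≤ ((m:ℝ) * t) ^ a / a.factorial := by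
    have := mul_le_mul_of_nonneg_left (Nat.choose_le_pow_div (α := ℝ) a m) (pow_nonneg ht a)
    calc (m.choose a : ℝ) * t ^ a = t ^ a * (m.choose a : ℝ) := by ring
      _ ≤ t ^ a * ((m:ℝ) ^ a / a.factorial) := this
      _ = ((m:ℝ) * t) ^ a / a.factorial := by rw [mul_pow]; ring
  refine h1.trans ?_
  have h2 : (Real.exp 1 * m * t / a) ^ a = Real.exp 1 ^ a * ((m:ℝ)*t) ^ a / (a:ℝ) ^ a := by
    rw [div_pow, mul_assoc, mul_pow]
  rw [h2, div_le_div_iff₀ hf0 (pow_pos ha0 a)]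
  have hX : (0:ℝ) ≤ ((m:ℝ)*t) ^ a := pow_nonneg (by positivity) a
  calc ((m:ℝ)*t)^a * (a:ℝ)^a ≤ ((m:ℝ)*t)^a * (Real.exp 1 ^ a * a.factorial) :=
        mul_le_mul_of_nonneg_left key hX
    _ = Real.exp 1 ^ a * ((m:ℝ)*t)^a * a.factorial := by ring

/-- combined per-level bound: `ℙ(V_{t} ≥ a) ≤ ofReal((e·m·t/a)^a)` -/
lemma lemAB {Ω : Type*} [MeasureSpace Ω] [IsProbabilityMeasure (ℙ : Measure Ω)]
    {n : ℕ} (H0 : Finset (Fin n)) (q : Fin n → Ω → ℝ)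
    (hsubunif : ∀ i ∈ H0, ∀ x ∈ Set.Icc (0 : ℝ) 1,
      ℙ {ω | q i ω ≤ x} ≤ ENNReal.ofReal x)
    (hindep : iIndepFun
      (fun i : {i // i ∈ H0} => q i.1) ℙ)
    (t : ℝ) (ht : t ∈ Set.Icc (0:ℝ) 1) (a : ℕ) (ha : 1 ≤ a) :
    ℙ {ω | a ≤ (H0.filter (fun i => q i ω ≤ t)).card}
      ≤ ENNReal.ofReal ((Real.exp 1 * H0.card * t / a) ^ a) := by
  refine (lemA H0 q hsubunif hindep t ht a).trans ?_
  have h1 : (H0.card.choose a : ℕ) * ENNReal.ofReal t ^ a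
      = ENNReal.ofReal ((H0.card.choose a : ℝ) * t ^ a) := by
    rw [ENNReal.ofReal_mul (by positivity), ← ENNReal.ofReal_pow ht.1,
      ENNReal.ofReal_natCast]
  rw [h1]
  exact ENNReal.ofReal_le_ofReal (lemB H0.card a t ht.1 ha)

lemma lemC {Ω : Type*} [MeasureSpace Ω] [IsProbabilityMeasure (ℙ : Measure Ω)]
    {n : ℕ} (hn : 2 ≤ n) {α : ℝ} (hα0 : 0 < α) (hα1 : α ≤ 1)
    (H0 : Finset (Fin n)) (q : Fin n → Ω → ℝ)
    (hsubunif : ∀ i ∈ H0, ∀ x ∈ Set.Icc (0 : ℝ) 1,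
      ℙ {ω | q i ω ≤ x} ≤ ENNReal.ofReal x)
    (hindep : iIndepFun
      (fun i : {i // i ∈ H0} => q i.1) ℙ)
    {u : ℝ} (hu1 : u ≤ 1) (hu0 : 4 * Real.exp 1 * α ≤ u) :
    ℙ {ω | ∃ k ∈ Finset.Icc 1 n, u * k ≤
        ((H0.filter (fun i => q i ω ≤ α * k / n)).card : ℝ)}
      ≤ ENNReal.ofReal (2 * α / u + 2 * (2 * Real.exp 1 * α / u) ^ 3) := by
  classical
  have he : (0:ℝ) < Real.exp 1 := Real.exp_pos 1
  have hu : (0:ℝ) < u := lt_of_lt_of_le (by positivity) hu0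
  have hn0 : (0:ℝ) < n := by positivity
  have hmn : (H0.card : ℝ) ≤ n := by
    have := Finset.card_le_card (Finset.subset_univ H0)
    simp only [Finset.card_univ, Fintype.card_fin] at this
    exact_mod_cast this
  set c : ℝ := 2 * Real.exp 1 * α / u with hc
  have hc0 : (0:ℝ) < c := by positivity
  have hchalf : c ≤ 1/2 := by
    rw [hc, div_le_iff₀ hu]; linarith
  have ht01 : ∀ k : ℕ, k ≤ n → α * k / n ∈ Set.Icc (0:ℝ) 1 := by
    intro k hk
    constructor
    · positivity
    · rw [div_le_one hn0]
      calc α * k ≤ 1 * n := by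
            apply mul_le_mul hα1 (by exact_mod_cast hk) (by positivity) zero_le_one
        _ = n := one_mul _
  have hVmono : ∀ (ω : Ω) (k k' : ℕ), k ≤ k' →
      (H0.filter (fun i => q i ω ≤ α * k / n)).card
        ≤ (H0.filter (fun i => q i ω ≤ α * k' / n)).card := by
    intro ω k k' hkk
    apply Finset.card_le_card
    intro i hi
    rw [Finset.mem_filter] at hi ⊢
    refine ⟨hi.1, le_trans hi.2 ?_⟩
    have hkk' : (k:ℝ) ≤ (k':ℝ) := by exact_mod_cast hkk
    gcongr
  set kstar : ℕ := min (Nat.floor (2/u)) n with hkstar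
  set kl : ℕ → ℕ := fun l => min (Nat.floor ((2:ℝ)^(l+2)/u)) n with hkl
  set E1 : Set Ω :=
    {ω | 1 ≤ (H0.filter (fun i => q i ω ≤ α * kstar / n)).card} with hE1def
  set E2 : ℕ → Set Ω := fun l =>
    {ω | 2^(l+1)+1 ≤ (H0.filter (fun i => q i ω ≤ α * (kl l) / n)).card} with hE2def
  have hincl : {ω | ∃ k ∈ Finset.Icc 1 n, u * k ≤
        ((H0.filter (fun i => q i ω ≤ α * k / n)).card : ℝ)} ⊆ E1 ∪ ⋃ l, E2 l := by
    rintro ω ⟨k, hkIcc, hVk⟩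
    obtain ⟨hk1, hkn⟩ := Finset.mem_Icc.mp hkIcc
    have hk0 : (0:ℝ) < k := by exact_mod_cast hk1
    by_cases hcase : u * k ≤ 2
    · left
      have hkfloor : k ≤ Nat.floor (2/u) := by
        apply Nat.le_floor
        rw [le_div_iff₀ hu]
        calc (k:ℝ) * u = u * k := mul_comm _ _
          _ ≤ 2 := hcase
      have hkk : k ≤ kstar := le_min hkfloor hkn
      have h0 : (0:ℝ) < ((H0.filter (fun i => q i ω ≤ α * k / n)).card : ℝ) :=
        lt_of_lt_of_le (by positivity) hVk
      have h1 : 0 < (H0.filter (fun i => q i ω ≤ α * k / n)).card := by exact_mod_cast h0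
      exact le_trans h1 (hVmono ω k kstar hkk)
    · right
      push_neg at hcase
      have hex : ∃ l : ℕ, u * k ≤ (2:ℝ)^(l+2) := by
        refine ⟨n, ?_⟩
        have h1 : u * k ≤ (n:ℝ) := by
          calc u * k ≤ 1 * k := by gcongr
            _ = k := one_mul _
            _ ≤ n := by exact_mod_cast hkn
        refine h1.trans ?_
        calc (n:ℝ) ≤ 2^n := by exact_mod_cast (Nat.lt_two_pow_self (n := n)).le
          _ ≤ 2^(n+2) := by gcongr <;> norm_num
      set l := Nat.find hex with hldef
      have hl : u * k ≤ (2:ℝ)^(l+2) := Nat.find_spec hex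
      have hlow : (2:ℝ)^(l+1) < u * k := by
        rcases Nat.eq_zero_or_pos l with h0 | hpos
        · rw [h0]; simpa using hcase
        · have hfm := Nat.find_min hex (show l - 1 < l from Nat.sub_lt hpos one_pos)
          push_neg at hfm
          have heq : l - 1 + 2 = l + 1 := by omega
          rwa [heq] at hfm
      refine Set.mem_iUnion.mpr ⟨l, ?_⟩
      have hkfloor : k ≤ Nat.floor ((2:ℝ)^(l+2)/u) := by
        apply Nat.le_floor
        rw [le_div_iff₀ hu]
        calc (k:ℝ) * u = u * k := mul_comm _ _
          _ ≤ 2^(l+2) := hl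
      have hkk : k ≤ kl l := le_min hkfloor hkn
      have hV : 2^(l+1)+1 ≤ (H0.filter (fun i => q i ω ≤ α * k / n)).card := by
        have h2 : ((2^(l+1) : ℕ) : ℝ) < ((H0.filter (fun i => q i ω ≤ α * k / n)).card : ℝ) := by
          push_cast
          calc (2:ℝ)^(l+1) < u * k := hlow
            _ ≤ _ := hVk
        exact Nat.cast_lt.mp h2
      exact le_trans hV (hVmono ω k (kl l) hkk)
  refine (measure_mono hincl).trans ?_
  refine (measure_union_le _ _).trans ?_
  have hE1 : ℙ E1 ≤ ENNReal.ofReal (2 * α / u) := by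
    refine (lemA H0 q hsubunif hindep _ (ht01 kstar (min_le_right _ _)) 1).trans ?_
    have hcard0 : (0:ℝ) ≤ (H0.card : ℝ) := Nat.cast_nonneg _
    have h1 : ((H0.card.choose 1 : ℕ) : ℝ≥0∞) * ENNReal.ofReal (α * kstar / n) ^ 1
        = ENNReal.ofReal ((H0.card : ℝ) * (α * kstar / n)) := by
      rw [Nat.choose_one_right, pow_one, ENNReal.ofReal_mul hcard0, ENNReal.ofReal_natCast]
    rw [h1]
    apply ENNReal.ofReal_le_ofReal
    have hks : (kstar : ℝ) ≤ 2/u := by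
      calc (kstar : ℝ) ≤ (Nat.floor (2/u) : ℝ) := by
            exact_mod_cast min_le_left _ _
        _ ≤ 2/u := Nat.floor_le (by positivity)
    calc (H0.card : ℝ) * (α * kstar / n) = (α * kstar) * ((H0.card : ℝ)/n) := by ring
      _ ≤ (α * kstar) * 1 := by
          refine mul_le_mul_of_nonneg_left ?_ (by positivity)
          rw [div_le_one hn0]; exact hmn
      _ = α * kstar := mul_one _
      _ ≤ α * (2/u) := by gcongr
      _ = 2 * α / u := by ring
  have hE2 : ∀ l : ℕ, ℙ (E2 l) ≤ ENNReal.ofReal (c ^ (2*l+3)) := by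
    intro l
    have ha1 : 1 ≤ 2^(l+1)+1 := le_add_self
    refine (lemAB H0 q hsubunif hindep _ (ht01 (kl l) (min_le_right _ _))
      (2^(l+1)+1) ha1).trans ?_
    apply ENNReal.ofReal_le_ofReal
    set a : ℕ := 2^(l+1)+1 with hadef
    set t : ℝ := α * (kl l) / n with htdef
    have ht0 : 0 ≤ t := by rw [htdef]; positivity
    have ha0 : (0:ℝ) < a := Nat.cast_pos.mpr (Nat.succ_pos _)
    have hbase : Real.exp 1 * H0.card * t / a ≤ c := by
      have hklle : (kl l : ℝ) ≤ (2:ℝ)^(l+2)/u := by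
        calc (kl l : ℝ) ≤ (Nat.floor ((2:ℝ)^(l+2)/u) : ℝ) :=
              Nat.cast_le.mpr (min_le_left _ _)
          _ ≤ (2:ℝ)^(l+2)/u := Nat.floor_le (by positivity)
      have hmt : (H0.card : ℝ) * t ≤ α * (2:ℝ)^(l+2)/u := by
        calc (H0.card : ℝ) * t = (α * kl l) * ((H0.card:ℝ)/n) := by rw [htdef]; ring
          _ ≤ (α * kl l) * 1 := by
              refine mul_le_mul_of_nonneg_left ?_ (by positivity)
              rw [div_le_one hn0]; exact hmn
          _ = α * kl l := mul_one _
          _ ≤ α * ((2:ℝ)^(l+2)/u) := by gcongr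
          _ = α * (2:ℝ)^(l+2)/u := by ring
      have hacast : ((2:ℝ))^(l+1) ≤ (a:ℝ) := by
        rw [hadef]; push_cast; nlinarith [pow_pos (by norm_num : (0:ℝ)<2) (l+1)]
      calc Real.exp 1 * H0.card * t / a = Real.exp 1 * ((H0.card:ℝ) * t) / a := by ring
        _ ≤ Real.exp 1 * (α * (2:ℝ)^(l+2)/u) / a := by gcongr
        _ ≤ Real.exp 1 * (α * (2:ℝ)^(l+2)/u) / (2:ℝ)^(l+1) := by
            gcongr
        _ = c := by
            rw [hc]
            have : (2:ℝ)^(l+2) = 2 * 2^(l+1) := by ring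
            rw [this]
            field_simp
    have hbase0 : 0 ≤ Real.exp 1 * H0.card * t / a :=
      div_nonneg (mul_nonneg (mul_nonneg he.le (Nat.cast_nonneg _)) ht0) (Nat.cast_nonneg _)
    calc (Real.exp 1 * H0.card * t / a) ^ a ≤ c ^ a := pow_le_pow_left₀ hbase0 hbase a
      _ ≤ c ^ (2*l+3) := by
          apply pow_le_pow_of_le_one hc0.le (by linarith)
          have h2l : l + 1 ≤ 2^l := Nat.lt_two_pow_self (n := l)
          rw [hadef]
          have : 2^(l+1) = 2 * 2^l := by ring
          omega
  calc ℙ E1 + ℙ (⋃ l, E2 l) ≤ ENNReal.ofReal (2*α/u) + ∑' l, ℙ (E2 l) :=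
        add_le_add hE1 (measure_iUnion_le _)
    _ ≤ ENNReal.ofReal (2*α/u) + ∑' l, ENNReal.ofReal (c ^ (2*l+3)) :=
        add_le_add le_rfl (ENNReal.tsum_le_tsum hE2)
    _ ≤ ENNReal.ofReal (2*α/u) + ENNReal.ofReal (2 * c^3) := by
        refine add_le_add le_rfl ?_
        have hsummand : ∀ l : ℕ, c ^ (2*l+3) = c^3 * (c^2)^l := by
          intro l
          rw [← pow_mul, ← pow_add]
          ring_nf
        have hsummable : Summable (fun l : ℕ => c ^ (2*l+3)) := by
          simp_rw [hsummand]
          exact (summable_geometric_of_lt_one (by positivity) (by nlinarith)).mul_left _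
        have htsum : ∑' l : ℕ, c ^ (2*l+3) = c^3 * (1 - c^2)⁻¹ := by
          simp_rw [hsummand]
          rw [tsum_mul_left, tsum_geometric_of_lt_one (by positivity) (by nlinarith)]
        rw [← ENNReal.ofReal_tsum_of_nonneg (fun l => by positivity) hsummable, htsum]
        apply ENNReal.ofReal_le_ofReal
        have h34 : (3/4 : ℝ) ≤ 1 - c^2 := by nlinarith
        have : (1 - c^2)⁻¹ ≤ 2 := by
          rw [inv_le_comm₀ (by linarith) (by norm_num)]
          linarith
        calc c^3 * (1-c^2)⁻¹ ≤ c^3 * 2 := by gcongr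
          _ = 2 * c^3 := by ring
    _ = ENNReal.ofReal (2*α/u + 2*c^3) := by
        rw [← ENNReal.ofReal_add (by positivity) (by positivity)]

end AuxLemmas

set_option maxHeartbeats 1000000

/-- Lemma 1: anytime FDR control of the Benjamini–Hochberg procedure applied to p-values
that dominate independent sub-uniform random variables on the nulls. -/
theorem BH_FDR_control [MeasureSpace Ω] [IsProbabilityMeasure (ℙ : Measure Ω)]
    {n : ℕ} (hn : 2 ≤ n) {α : ℝ} (hα0 : 0 < α) (hα1 : α < Real.exp (-1))
    (H0 : Finset (Fin n)) (hH0 : H0.Nonempty)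
    (p : Fin n → Ω → ℝ) (hpmeas : ∀ i, Measurable (p i))
    (hprange : ∀ i ω, p i ω ∈ Set.Ioc (0 : ℝ) 1)
    (q : Fin n → Ω → ℝ) (hqmeas : ∀ i ∈ H0, Measurable (q i))
    (hqrange : ∀ i ∈ H0, ∀ ω, q i ω ∈ Set.Ioc (0 : ℝ) 1)
    (hsubunif : ∀ i ∈ H0, ∀ x ∈ Set.Icc (0 : ℝ) 1,
      ℙ {ω | q i ω ≤ x} ≤ ENNReal.ofReal x)
    (hindep : iIndepFun
      (fun i : {i // i ∈ H0} => q i.1) ℙ)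
    (hdom : ∀ i ∈ H0, ∀ᵐ ω ∂(ℙ : Measure Ω), q i ω ≤ p i ω) :
    ∫ ω, ((BHset n α p ω ∩ H0).card : ℝ) / max ((BHset n α p ω).card : ℝ) 1 ∂ℙ
      ≤ 4 * α * Real.log (9 / α) := by
  classical
  have he : (0:ℝ) < Real.exp 1 := Real.exp_pos 1
  have hα1' : α ≤ 1 := by
    have : Real.exp (-1) < 1 := Real.exp_lt_one_iff.mpr (by norm_num)
    linarith
  have hn1 : 1 ≤ n := le_trans (by norm_num) hn
  have hn0 : (0:ℝ) < n := by positivity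
  have hIcc : (Finset.Icc 1 n).Nonempty := ⟨1, Finset.mem_Icc.mpr ⟨le_refl 1, hn1⟩⟩
  -- the majorant M
  set V : ℕ → Ω → ℕ := fun k ω => (H0.filter (fun i => q i ω ≤ α * k / n)).card with hV
  set M : Ω → ℝ := fun ω =>
    min 1 ((Finset.Icc 1 n).sup' hIcc (fun k => ((V k ω : ℝ))/k)) with hM
  have hsup0 : ∀ ω, 0 ≤ (Finset.Icc 1 n).sup' hIcc (fun k => ((V k ω : ℝ))/k) := by
    intro ω
    refine le_trans ?_ (Finset.le_sup' (fun k => ((V k ω : ℝ))/k)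
      (Finset.mem_Icc.mpr ⟨le_refl 1, hn1⟩))
    positivity
  have hM0 : ∀ ω, 0 ≤ M ω := fun ω => le_min zero_le_one (hsup0 ω)
  have hM1 : ∀ ω, M ω ≤ 1 := fun ω => min_le_left _ _
  -- measurability of M
  have hVmeas : ∀ k : ℕ, Measurable (fun ω => (V k ω : ℝ)) := by
    intro k
    have heq : (fun ω => (V k ω : ℝ))
        = fun ω => ∑ i ∈ H0, if q i ω ≤ α * k / n then (1:ℝ) else 0 := by
      funext ω
      rw [hV]
      simp only [Finset.card_filter]
      push_cast
      rfl
    rw [heq]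
    apply Finset.measurable_sum
    intro i hi
    have hms : MeasurableSet {ω | q i ω ≤ α * k / n} := (hqmeas i hi) measurableSet_Iic
    exact Measurable.ite hms measurable_const measurable_const
  have hMmeas : Measurable M := by
    apply Measurable.min measurable_const
    have h1 : Measurable ((Finset.Icc 1 n).sup' hIcc
        (fun k => (fun ω => ((V k ω : ℝ))/k))) :=
      Finset.measurable_sup' hIcc (fun k _ => (hVmeas k).div_const _)
    have h2 : ((Finset.Icc 1 n).sup' hIcc (fun k => (fun ω => ((V k ω : ℝ))/k)))
        = fun ω => (Finset.Icc 1 n).sup' hIcc (fun k => ((V k ω : ℝ))/k) := by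
      funext ω
      exact Finset.sup'_apply hIcc _ ω
    rwa [h2] at h1
  have hMint : Integrable M ℙ := by
    refine Integrable.mono' (integrable_const 1) hMmeas.aestronglyMeasurable ?_
    exact Filter.Eventually.of_forall fun ω =>
      (abs_le.mpr ⟨by linarith [hM0 ω], hM1 ω⟩)
  -- a.e. version of domination
  have hdom' : ∀ᵐ ω ∂(ℙ : Measure Ω), ∀ i, i ∈ H0 → q i ω ≤ p i ω := by
    rw [MeasureTheory.ae_all_iff]
    intro i
    by_cases hi : i ∈ H0
    · filter_upwards [hdom i hi] with ω h _; exact h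
    · exact Filter.Eventually.of_forall fun ω h => absurd h hi
  -- pointwise domination of the FDP by M
  have hFDPleM : ∀ᵐ ω ∂(ℙ : Measure Ω),
      ((BHset n α p ω ∩ H0).card : ℝ) / max ((BHset n α p ω).card : ℝ) 1 ≤ M ω := by
    filter_upwards [hdom'] with ω hω
    by_cases hk0 : khat n α p ω = 0
    · have hBH : BHset n α p ω = ∅ := by
        rw [BHset, hk0]
        apply Finset.filter_false_of_mem
        intro i _
        push_neg
        calc α * (0:ℕ) / n = 0 := by norm_num
          _ < p i ω := (hprange i ω).1
      rw [hBH]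
      simp only [Finset.empty_inter, Finset.card_empty, Nat.cast_zero, zero_div]
      exact hM0 ω
    · set kh := khat n α p ω with hkh
      have hk1 : 1 ≤ kh := Nat.one_le_iff_ne_zero.mpr hk0
      set s := ((Finset.Icc 1 n).filter (fun k => k ≤ (Rset n α p k ω).card)) with hs
      have hne : s.Nonempty := by
        by_contra hcon
        rw [Finset.not_nonempty_iff_eq_empty] at hcon
        have : kh = 0 := by rw [hkh, khat, ← hs, hcon]; rfl
        exact hk0 this
      have hkh_mem : kh ∈ s := by
        obtain ⟨b, hb, hbeq⟩ := Finset.exists_mem_eq_sup' hne id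
        have h1 : kh = s.sup id := by rw [hkh, khat, ← hs]
        have h2 : s.sup id = s.sup' hne id := (Finset.sup'_eq_sup hne id).symm
        rw [h1, h2, hbeq]
        exact hb
      obtain ⟨hkIcc, hcard⟩ := Finset.mem_filter.mp hkh_mem
      obtain ⟨hkh1, hkhn⟩ := Finset.mem_Icc.mp hkIcc
      have hkh0R : (0:ℝ) < kh := by exact_mod_cast hkh1
      have hnum : ((BHset n α p ω ∩ H0).card : ℝ) ≤ (V kh ω : ℝ) := by
        have hsub : BHset n α p ω ∩ H0 ⊆ H0.filter (fun i => q i ω ≤ α * kh / n) := by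
          intro i hi
          obtain ⟨hiBH, hiH0⟩ := Finset.mem_inter.mp hi
          have hpi : p i ω ≤ α * kh / n := (Finset.mem_filter.mp hiBH).2
          exact Finset.mem_filter.mpr ⟨hiH0, le_trans (hω i hiH0) hpi⟩
        exact_mod_cast Finset.card_le_card hsub
      have hden : (kh:ℝ) ≤ max ((BHset n α p ω).card : ℝ) 1 := by
        refine le_trans ?_ (le_max_left _ _)
        have : kh ≤ (BHset n α p ω).card := hcard
        exact_mod_cast this
      have hfrac : ((BHset n α p ω ∩ H0).card : ℝ) / max ((BHset n α p ω).card : ℝ) 1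
          ≤ (V kh ω : ℝ) / kh :=
        div_le_div₀ (Nat.cast_nonneg _) hnum hkh0R hden
      have hsup : (V kh ω : ℝ) / kh
          ≤ (Finset.Icc 1 n).sup' hIcc (fun k => ((V k ω : ℝ))/k) :=
        Finset.le_sup' (fun k => ((V k ω : ℝ))/k) hkIcc
      have hle1 : ((BHset n α p ω ∩ H0).card : ℝ) / max ((BHset n α p ω).card : ℝ) 1 ≤ 1 := by
        apply div_le_one_of_le₀
        · refine le_trans ?_ (le_max_left _ _)
          exact_mod_cast Finset.card_le_card (Finset.inter_subset_left)
        · exact le_trans zero_le_one (le_max_right _ _)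
      exact le_min hle1 (hfrac.trans hsup)
  -- reduce to the integral of M
  have hstep1 : ∫ ω, ((BHset n α p ω ∩ H0).card : ℝ) / max ((BHset n α p ω).card : ℝ) 1 ∂ℙ
      ≤ ∫ ω, M ω ∂ℙ := by
    refine integral_mono_of_nonneg ?_ hMint hFDPleM
    exact Filter.Eventually.of_forall fun ω => by positivity
  refine hstep1.trans ?_
  -- layer cake
  set F : ℝ → ℝ := fun u => (ℙ {a | u ≤ M a}).toReal with hF
  have hlayer : ∫ ω, M ω ∂ℙ = ∫ u in Set.Ioc (0:ℝ) 1, F u :=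
    hMint.integral_eq_integral_Ioc_meas_le (Filter.Eventually.of_forall hM0)
      (Filter.Eventually.of_forall hM1)
  rw [hlayer]
  have hFanti : Antitone F := by
    intro u v huv
    exact ENNReal.toReal_mono (measure_ne_top _ _)
      (measure_mono (fun a ha => le_trans huv ha))
  have hF0 : ∀ u, 0 ≤ F u := fun u => ENNReal.toReal_nonneg
  have hF1 : ∀ u, F u ≤ 1 := by
    intro u
    calc (ℙ {a | u ≤ M a}).toReal ≤ (1 : ENNReal).toReal :=
          ENNReal.toReal_mono (by norm_num) prob_le_one
      _ = 1 := by norm_num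
  have hFint : ∀ s : Set ℝ, s ⊆ Set.Ioc (0:ℝ) 1 → IntegrableOn F s := by
    intro s hs
    have hconst : IntegrableOn (fun _ : ℝ => (1:ℝ)) s := integrableOn_const
      (lt_of_le_of_lt (measure_mono hs) (by rw [Real.volume_Ioc]; exact ENNReal.ofReal_lt_top)).ne
    refine hconst.mono' hFanti.measurable.aestronglyMeasurable ?_
    exact Filter.Eventually.of_forall fun u => by
      rw [Real.norm_eq_abs, abs_of_nonneg (hF0 u)]; exact hF1 u
  -- facts about logs
  have hlog2 : (0.6931471803:ℝ) < Real.log 2 := Real.log_two_gt_d9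
  have hE : Real.exp 1 < 2.7182818286 := Real.exp_one_lt_d9
  have hlog9 : 3*Real.log 2 ≤ Real.log 9 := by
    calc 3*Real.log 2 = Real.log (2^3) := by rw [Real.log_pow]; push_cast; ring
      _ ≤ Real.log 9 := by
          apply Real.log_le_log (by norm_num) (by norm_num)
  have hrhs : Real.log (9/α) = Real.log 9 - Real.log α :=
    Real.log_div (by norm_num) (ne_of_gt hα0)
  by_cases hcase : α ≤ 1/(4*Real.exp 1)
  · -- small α: full argument
    set u0 : ℝ := 4*Real.exp 1*α with hu0def
    have hu00 : 0 < u0 := by positivity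
    have hu01 : u0 ≤ 1 := by
      rw [hu0def]
      rw [le_div_iff₀ (by positivity : (0:ℝ) < 4*Real.exp 1)] at hcase
      linarith
    have hsub1 : Set.Ioc (0:ℝ) u0 ⊆ Set.Ioc (0:ℝ) 1 := Set.Ioc_subset_Ioc_right hu01
    have hsub2 : Set.Ioc u0 1 ⊆ Set.Ioc (0:ℝ) 1 := Set.Ioc_subset_Ioc_left hu00.le
    have hsplit : Set.Ioc (0:ℝ) 1 = Set.Ioc 0 u0 ∪ Set.Ioc u0 1 :=
      (Set.Ioc_union_Ioc_eq_Ioc hu00.le hu01).symm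
    rw [hsplit, setIntegral_union (Set.Ioc_disjoint_Ioc_of_le le_rfl) measurableSet_Ioc
      (hFint _ hsub1) (hFint _ hsub2)]
    -- first piece
    have hA : ∫ u in Set.Ioc (0:ℝ) u0, F u ≤ u0 := by
      have hconst : IntegrableOn (fun _ : ℝ => (1:ℝ)) (Set.Ioc (0:ℝ) u0) :=
        integrableOn_const (ne_of_lt (by rw [Real.volume_Ioc]; exact ENNReal.ofReal_lt_top))
      calc ∫ u in Set.Ioc (0:ℝ) u0, F u ≤ ∫ _u in Set.Ioc (0:ℝ) u0, (1:ℝ) :=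
            setIntegral_mono_on (hFint _ hsub1) hconst measurableSet_Ioc (fun u _ => hF1 u)
        _ = (volume (Set.Ioc (0:ℝ) u0)).toReal • (1:ℝ) := setIntegral_const 1
        _ = u0 := by rw [Real.volume_Ioc, smul_eq_mul, mul_one,
              ENNReal.toReal_ofReal (by linarith)]; ring
    -- second piece
    set φ : ℝ → ℝ := fun u => 2*α*(1/u) + (16*Real.exp 1^3*α^3) * u^(-3:ℤ) with hφdef
    have h0notin : (0:ℝ) ∉ Set.uIcc u0 1 := by
      rw [Set.uIcc_of_le hu01]
      rintro ⟨h1, _⟩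
      exact absurd h1 (not_le.mpr hu00)
    have hI2 : IntervalIntegrable (fun u : ℝ => 1/u) volume u0 1 :=
      intervalIntegral.intervalIntegrable_one_div (fun x hx => by
        rw [Set.uIcc_of_le hu01] at hx
        exact ne_of_gt (lt_of_lt_of_le hu00 hx.1)) continuousOn_id
    have hI1 : IntervalIntegrable (fun u : ℝ => u^(-3:ℤ)) volume u0 1 :=
      intervalIntegral.intervalIntegrable_zpow (Or.inr h0notin)
    have hφI : IntervalIntegrable φ volume u0 1 := by
      rw [hφdef]
      exact ((hI2.const_mul (2*α)).add (hI1.const_mul (16*Real.exp 1^3*α^3)))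
    have hφint : IntegrableOn φ (Set.Ioc u0 1) :=
      (intervalIntegrable_iff_integrableOn_Ioc_of_le hu01).mp hφI
    have hpoint : ∀ u ∈ Set.Ioc u0 1, F u ≤ φ u := by
      intro u hu
      obtain ⟨huu0, hu1⟩ := hu
      have hupos : (0:ℝ) < u := lt_trans hu00 huu0
      have h4e : 4*Real.exp 1*α ≤ u := le_of_lt (by rw [← hu0def]; exact huu0)
      have hincl : {a | u ≤ M a} ⊆ {ω | ∃ k ∈ Finset.Icc 1 n, u * k ≤
          ((H0.filter (fun i => q i ω ≤ α * k / n)).card : ℝ)} := by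
        intro a ha
        have h1 : u ≤ (Finset.Icc 1 n).sup' hIcc (fun k => ((V k a : ℝ))/k) :=
          le_trans ha (min_le_right _ _)
        obtain ⟨b, hb, hbeq⟩ := Finset.exists_mem_eq_sup' hIcc (fun k => ((V k a : ℝ))/k)
        refine ⟨b, hb, ?_⟩
        have hb1 : 1 ≤ b := (Finset.mem_Icc.mp hb).1
        have hb0 : (0:ℝ) < b := by exact_mod_cast hb1
        rw [hbeq] at h1
        exact (le_div_iff₀ hb0).mp h1
      have hprob := (measure_mono hincl).trans
        (lemC hn hα0 hα1' H0 q hsubunif hindep hu1 h4e)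
      have hXφ : 2*α/u + 2*(2*Real.exp 1*α/u)^3 = φ u := by
        show 2*α/u + 2*(2*Real.exp 1*α/u)^3 = 2*α*(1/u) + (16*Real.exp 1^3*α^3) * u^(-3:ℤ)
        have h3 : (u:ℝ)^(-3:ℤ) = (u^3)⁻¹ := by rw [zpow_neg]; exact_mod_cast rfl
        rw [h3, div_pow, div_eq_mul_inv ((2*Real.exp 1*α)^3) (u^3), div_eq_mul_inv (2*α) u]
        ring
      rw [← hXφ]
      exact ENNReal.toReal_le_of_le_ofReal (by positivity) hprob
    have hB : ∫ u in Set.Ioc u0 1, F u ≤ 2*α*Real.log (1/u0) + Real.exp 1*α/2 := by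
      have hB1 : ∫ u in Set.Ioc u0 1, F u ≤ ∫ u in Set.Ioc u0 1, φ u :=
        setIntegral_mono_on (hFint _ hsub2) hφint measurableSet_Ioc hpoint
      refine hB1.trans ?_
      have hval : ∫ u in Set.Ioc u0 1, φ u
          = 2*α*Real.log (1/u0)
            + (16*Real.exp 1^3*α^3) * (((u0^2)⁻¹ - 1)/2) := by
        rw [← intervalIntegral.integral_of_le hu01, hφdef]
        rw [intervalIntegral.integral_add (hI2.const_mul (2*α))
          (hI1.const_mul (16*Real.exp 1^3*α^3)),
          intervalIntegral.integral_const_mul, intervalIntegral.integral_const_mul,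
          integral_one_div h0notin, integral_zpow (Or.inr ⟨by norm_num, h0notin⟩)]
        rw [show ((-3:ℤ)+1) = -2 by norm_num]
        rw [one_zpow, show (u0:ℝ)^(-2:ℤ) = (u0^2)⁻¹ by rw [zpow_neg]; exact_mod_cast rfl]
        push_cast
        ring
      rw [hval]
      have hu0sq : u0^2 = 16*(Real.exp 1)^2*α^2 := by rw [hu0def]; ring
      have hkey : (16*Real.exp 1^3*α^3) * (16*(Real.exp 1)^2*α^2)⁻¹ = Real.exp 1 * α := by
        have h2 : (16*(Real.exp 1)^2*α^2) ≠ 0 := by positivity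
        calc (16*Real.exp 1^3*α^3) * (16*(Real.exp 1)^2*α^2)⁻¹
            = (Real.exp 1 * α) * ((16*(Real.exp 1)^2*α^2) * (16*(Real.exp 1)^2*α^2)⁻¹) := by
              ring
          _ = Real.exp 1 * α := by rw [mul_inv_cancel₀ h2, mul_one]
      have hcalc : (16*Real.exp 1^3*α^3) * (((u0^2)⁻¹ - 1)/2) ≤ Real.exp 1*α/2 := by
        rw [hu0sq]
        calc (16*Real.exp 1^3*α^3) * (((16*(Real.exp 1)^2*α^2)⁻¹ - 1)/2)
            = ((16*Real.exp 1^3*α^3) * (16*(Real.exp 1)^2*α^2)⁻¹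
              - (16*Real.exp 1^3*α^3))/2 := by ring
          _ = (Real.exp 1 * α - 16*Real.exp 1^3*α^3)/2 := by rw [hkey]
          _ ≤ Real.exp 1*α/2 := by nlinarith [pow_pos he 3, pow_pos hα0 3]
      linarith
    -- numeric conclusion
    have hlog1 : Real.log (1/u0) = -(2*Real.log 2 + 1 + Real.log α) := by
      rw [one_div, Real.log_inv, hu0def,
        Real.log_mul (by positivity) (ne_of_gt hα0),
        Real.log_mul (by norm_num) (ne_of_gt he)]
      have h4 : Real.log 4 = 2 * Real.log 2 := by
        rw [show (4:ℝ) = 2^2 by norm_num, Real.log_pow]; push_cast; ring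
      rw [h4, Real.log_exp]
      try ring
    have hlogα : Real.log α ≤ -(2*Real.log 2 + 1) := by
      have h1 : Real.log α ≤ Real.log (1/(4*Real.exp 1)) := Real.log_le_log hα0 hcase
      rw [one_div, Real.log_inv, Real.log_mul (by norm_num) (ne_of_gt he)] at h1
      have h4 : Real.log 4 = 2 * Real.log 2 := by
        rw [show (4:ℝ) = 2^2 by norm_num, Real.log_pow]; push_cast; ring
      rw [h4, Real.log_exp] at h1
      linarith
    have hkey : 4*Real.exp 1 + 2*(-(2*Real.log 2 + 1 + Real.log α)) + Real.exp 1/2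
        ≤ 4*(Real.log 9 - Real.log α) := by nlinarith
    calc (∫ u in Set.Ioc (0:ℝ) u0, F u) + ∫ u in Set.Ioc u0 1, F u
        ≤ u0 + (2*α*Real.log (1/u0) + Real.exp 1*α/2) := add_le_add hA hB
      _ ≤ 4*α*Real.log (9/α) := by
          rw [hu0def, hlog1, hrhs]
          nlinarith [mul_le_mul_of_nonneg_left hkey hα0.le]
  · -- large α: trivial bound
    push_neg at hcase
    have hconst : IntegrableOn (fun _ : ℝ => (1:ℝ)) (Set.Ioc (0:ℝ) 1) :=
      integrableOn_const (ne_of_lt (by rw [Real.volume_Ioc]; exact ENNReal.ofReal_lt_top))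
    have h1 : ∫ u in Set.Ioc (0:ℝ) 1, F u ≤ 1 := by
      calc ∫ u in Set.Ioc (0:ℝ) 1, F u ≤ ∫ _u in Set.Ioc (0:ℝ) 1, (1:ℝ) :=
            setIntegral_mono_on (hFint _ (subset_refl _)) hconst measurableSet_Ioc
              (fun u _ => hF1 u)
        _ = (volume (Set.Ioc (0:ℝ) 1)).toReal • (1:ℝ) := setIntegral_const 1
        _ = 1 := by rw [Real.volume_Ioc, smul_eq_mul, mul_one]; norm_num
    refine h1.trans ?_
    have hlogα : Real.log α < -1 := by
      calc Real.log α < Real.log (Real.exp (-1)) := Real.log_lt_log hα0 hα1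
        _ = -1 := Real.log_exp _
    have h4a : 1 < 4*Real.exp 1*α := by
      rw [div_lt_iff₀ (by positivity : (0:ℝ) < 4*Real.exp 1)] at hcase
      linarith
    rw [hrhs]
    nlinarith [mul_pos hα0 (show (0:ℝ) < Real.log 9 - Real.log α by nlinarith)]
end

section
/- Fix a vector a ∈ ℝ_+^n with strictly positive entries and δ ∈ (0, e^{-1}], and let Z_1,…,Z_n be independent real-valued random variables satisfying P(Z_i ≥ t) ≤ exp(−t/a_i) for all t ≥ 0. Then with probability at least 1 − δ: Σ_{i=1}^n Z_i ≤ 5·log(1/δ)·Σ_{i=1}^n a_i. -/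
open MeasureTheory ProbabilityTheory Finset Set

lemma tail_lintegral_bound {Ω : Type*} [MeasureSpace Ω]
    [IsProbabilityMeasure (ℙ : Measure Ω)]
    (X : Ω → ℝ) (hX : Measurable X) {a l : ℝ} (ha : 0 < a) (hl : 0 < l)
    (hla : l * a ≤ 1/2)
    (htail : ∀ t : ℝ, 0 ≤ t → ℙ {ω | X ω ≥ t} ≤ ENNReal.ofReal (Real.exp (-t / a))) :
    ∫⁻ ω, ENNReal.ofReal (Real.exp (l * X ω)) ≤ ENNReal.ofReal (1 + 2 * (l * a)) := by
  have hmble : AEMeasurable (fun ω => Real.exp (l * X ω)) (ℙ : Measure Ω) :=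
    ((hX.const_mul l).exp).aemeasurable
  rw [lintegral_eq_lintegral_meas_lt _ (Filter.Eventually.of_forall fun ω => (Real.exp_pos _).le)
    hmble]
  set c : ℝ := 1 / (l * a) with hc
  have hla0 : 0 < l * a := mul_pos hl ha
  have hc2 : 2 ≤ c := by
    rw [hc, le_div_iff₀ hla0]; linarith
  have hsplit : (Ioi (0:ℝ)) = Ioc (0:ℝ) 1 ∪ Ioi 1 := (Set.Ioc_union_Ioi_eq_Ioi zero_le_one).symm
  rw [hsplit, lintegral_union measurableSet_Ioi Set.Ioc_disjoint_Ioi_same]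
  have h1 : ∫⁻ t in Ioc (0:ℝ) 1, ℙ {ω | t < Real.exp (l * X ω)} ≤ 1 := by
    calc ∫⁻ t in Ioc (0:ℝ) 1, ℙ {ω | t < Real.exp (l * X ω)}
        ≤ ∫⁻ _ in Ioc (0:ℝ) 1, 1 := lintegral_mono fun t => prob_le_one
      _ = 1 := by simp
  have h2 : ∫⁻ t in Ioi (1:ℝ), ℙ {ω | t < Real.exp (l * X ω)}
      ≤ ENNReal.ofReal (2 * (l * a)) := by
    have hstep : ∀ t ∈ Ioi (1:ℝ), ℙ {ω | t < Real.exp (l * X ω)}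
        ≤ ENNReal.ofReal (t ^ (-c)) := by
      intro t ht
      have ht1 : (1:ℝ) < t := ht
      have ht0 : (0:ℝ) < t := lt_trans one_pos ht1
      have hlogt : 0 ≤ Real.log t := Real.log_nonneg ht1.le
      have hsub : {ω | t < Real.exp (l * X ω)} ⊆ {ω | X ω ≥ Real.log t / l} := by
        intro ω hω
        have h' : Real.log t < l * X ω := by
          have := Real.log_lt_log ht0 hω
          rwa [Real.log_exp] at this
        exact (div_le_iff₀ hl).mpr (by linarith)
      have heq : Real.exp (-(Real.log t / l) / a) = t ^ (-c) := by
        rw [Real.rpow_def_of_pos ht0]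
        congr 1
        field_simp [hc]
        have hcla : l * a * c = 1 := by rw [hc]; exact mul_one_div_cancel hla0.ne'
        linear_combination Real.log t * hcla
      calc ℙ {ω | t < Real.exp (l * X ω)} ≤ ℙ {ω | X ω ≥ Real.log t / l} :=
            measure_mono hsub
        _ ≤ ENNReal.ofReal (Real.exp (-(Real.log t / l) / a)) :=
            htail _ (div_nonneg hlogt hl.le)
        _ = ENNReal.ofReal (t ^ (-c)) := by rw [heq]
    have hmono : ∫⁻ t in Ioi (1:ℝ), ℙ {ω | t < Real.exp (l * X ω)}
        ≤ ∫⁻ t in Ioi (1:ℝ), ENNReal.ofReal (t ^ (-c)) :=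
      setLIntegral_mono' measurableSet_Ioi hstep
    have hint : IntegrableOn (fun t : ℝ => t ^ (-c)) (Ioi 1) :=
      integrableOn_Ioi_rpow_of_lt (by linarith) one_pos
    have hval : ∫ t in Ioi (1:ℝ), t ^ (-c) = 1 / (c - 1) := by
      rw [integral_Ioi_rpow_of_lt (by linarith : -c < -1) one_pos, Real.one_rpow,
        div_eq_div_iff (by linarith) (by linarith)]
      ring

    have hlin : ∫⁻ t in Ioi (1:ℝ), ENNReal.ofReal (t ^ (-c))
        = ENNReal.ofReal (1 / (c - 1)) := by
      rw [← ofReal_integral_eq_lintegral_ofReal hint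
        ((ae_restrict_iff' measurableSet_Ioi).mpr (Filter.Eventually.of_forall
          fun t ht => Real.rpow_nonneg (le_of_lt (lt_trans one_pos ht)) _)), hval]
    have hle : 1 / (c - 1) ≤ 2 * (l * a) := by
      rw [div_le_iff₀ (by linarith)]
      have hcla : c * (l * a) = 1 := by
        rw [hc]; field_simp
      nlinarith
    calc ∫⁻ t in Ioi (1:ℝ), ℙ {ω | t < Real.exp (l * X ω)}
        ≤ ENNReal.ofReal (1 / (c - 1)) := hmono.trans_eq hlin
      _ ≤ ENNReal.ofReal (2 * (l * a)) := ENNReal.ofReal_le_ofReal hle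
  calc (∫⁻ t in Ioc (0:ℝ) 1, ℙ {ω | t < Real.exp (l * X ω)})
        + ∫⁻ t in Ioi (1:ℝ), ℙ {ω | t < Real.exp (l * X ω)}
      ≤ 1 + ENNReal.ofReal (2 * (l * a)) := add_le_add h1 h2
    _ = ENNReal.ofReal (1 + 2 * (l * a)) := by
        rw [ENNReal.ofReal_add (by norm_num) (by positivity), ENNReal.ofReal_one]

lemma integrable_and_mgf_of_tail {Ω : Type*} [MeasureSpace Ω]
    [IsProbabilityMeasure (ℙ : Measure Ω)]
    (X : Ω → ℝ) (hX : Measurable X) {a l : ℝ} (ha : 0 < a) (hl : 0 < l)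
    (hla : l * a ≤ 1/2)
    (htail : ∀ t : ℝ, 0 ≤ t → ℙ {ω | X ω ≥ t} ≤ ENNReal.ofReal (Real.exp (-t / a))) :
    Integrable (fun ω => Real.exp (l * X ω)) ℙ ∧
      mgf X ℙ l ≤ Real.exp (2 * (l * a)) := by
  have hkey := tail_lintegral_bound X hX ha hl hla htail
  have hnn : 0 ≤ᵐ[(ℙ : Measure Ω)] fun ω => Real.exp (l * X ω) :=
    Filter.Eventually.of_forall fun ω => (Real.exp_pos _).le
  have hsm : AEStronglyMeasurable (fun ω => Real.exp (l * X ω)) ℙ :=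
    ((hX.const_mul l).exp).aestronglyMeasurable
  have hint : Integrable (fun ω => Real.exp (l * X ω)) ℙ := by
    refine ⟨hsm, ?_⟩
    rw [hasFiniteIntegral_iff_ofReal hnn]
    exact lt_of_le_of_lt hkey ENNReal.ofReal_lt_top
  refine ⟨hint, ?_⟩
  have : mgf X ℙ l = (∫⁻ ω, ENNReal.ofReal (Real.exp (l * X ω))).toReal := by
    rw [mgf]
    exact integral_eq_lintegral_of_nonneg_ae hnn hsm
  rw [this]
  calc (∫⁻ ω, ENNReal.ofReal (Real.exp (l * X ω))).toReal
      ≤ (ENNReal.ofReal (1 + 2 * (l * a))).toReal :=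
        ENNReal.toReal_mono ENNReal.ofReal_ne_top hkey
    _ = 1 + 2 * (l * a) := ENNReal.toReal_ofReal (by positivity)
    _ ≤ Real.exp (2 * (l * a)) := by
        have := Real.add_one_le_exp (2 * (l * a)); linarith

/-- Lemma 9 (high-probability bound on a sum of independent random variables with
exponential tails). -/
theorem exponential_tails_sum_high_prob {Ω : Type*} [MeasureSpace Ω]
    [IsProbabilityMeasure (ℙ : Measure Ω)]
    {n : ℕ} (hn : 0 < n) (a : Fin n → ℝ) (ha : ∀ i, 0 < a i)
    {δ : ℝ} (hδ0 : 0 < δ) (hδ1 : δ ≤ Real.exp (-1))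
    (Z : Fin n → Ω → ℝ) (hmeas : ∀ i, Measurable (Z i))
    (hindep : iIndepFun Z ℙ)
    (htail : ∀ i, ∀ t : ℝ, 0 ≤ t → ℙ {ω | Z i ω ≥ t} ≤ ENNReal.ofReal (Real.exp (-t / a i))) :
    1 - ENNReal.ofReal δ ≤
      ℙ {ω | ∑ i, Z i ω ≤ 5 * Real.log (1 / δ) * ∑ i, a i} := by
  set S : ℝ := ∑ i, a i with hS
  have hS0 : 0 < S := Finset.sum_pos (fun i _ => ha i) (Finset.univ_nonempty_iff.mpr
    ⟨⟨0, hn⟩⟩)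
  set l : ℝ := 1 / (2 * S) with hl
  have hl0 : 0 < l := by positivity
  have hai : ∀ i, l * a i ≤ 1/2 := by
    intro i
    rw [hl, div_mul_eq_mul_div, one_mul, div_le_iff₀ (by positivity)]
    have : a i ≤ S := Finset.single_le_sum (f := a) (fun j _ => (ha j).le)
      (Finset.mem_univ i)
    linarith
  have hL : 1 ≤ Real.log (1 / δ) := by
    rw [Real.log_div one_ne_zero (ne_of_gt hδ0), Real.log_one]
    have := Real.log_le_log hδ0 hδ1
    rw [Real.log_exp] at this
    linarith
  set ε : ℝ := 5 * Real.log (1 / δ) * S with hε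
  have hkey := fun i => integrable_and_mgf_of_tail (Z i) (hmeas i) (ha i) hl0 (hai i)
    (htail i)
  have h_int : ∀ i ∈ Finset.univ, Integrable (fun ω => Real.exp (l * Z i ω)) ℙ :=
    fun i _ => (hkey i).1
  have hchern := measure_ge_le_exp_mul_mgf (μ := (ℙ : Measure Ω))
    (X := ∑ i, Z i) ε hl0.le
    (hindep.integrable_exp_mul_sum hmeas h_int)
  have hmgf : mgf (∑ i, Z i) ℙ l ≤ Real.exp (2 * (l * S)) := by
    rw [hindep.mgf_sum hmeas]
    calc ∏ i, mgf (Z i) ℙ l ≤ ∏ i, Real.exp (2 * (l * a i)) :=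
          Finset.prod_le_prod (fun i _ => mgf_nonneg) (fun i _ => (hkey i).2)
      _ = Real.exp (∑ i, 2 * (l * a i)) := (Real.exp_sum _ _).symm
      _ = Real.exp (2 * (l * S)) := by rw [hS, Finset.mul_sum, Finset.mul_sum]
  have hfinal : (ℙ {ω | ε ≤ (∑ i, Z i) ω}).toReal ≤ δ := by
    calc (ℙ {ω | ε ≤ (∑ i, Z i) ω}).toReal
        ≤ Real.exp (-l * ε) * mgf (∑ i, Z i) ℙ l := hchern
      _ ≤ Real.exp (-l * ε) * Real.exp (2 * (l * S)) := by
          exact mul_le_mul_of_nonneg_left hmgf (Real.exp_nonneg _)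
      _ = Real.exp (-l * ε + 2 * (l * S)) := (Real.exp_add _ _).symm
      _ ≤ δ := by
          rw [← Real.exp_log hδ0]
          apply Real.exp_le_exp.mpr
          have hlS : l * S = 1/2 := by rw [hl]; field_simp
          have hlε : l * ε = 5 * Real.log (1/δ) / 2 := by
            rw [hε]; field_simp [hl]; ring
            linarith [hlS]
          have hlog : Real.log (1/δ) = - Real.log δ := by
            rw [Real.log_div one_ne_zero (ne_of_gt hδ0), Real.log_one]; ring
          have : -l * ε = -(l * ε) := by ring
          rw [this, hlε, hlS]
          nlinarith [hL, hlog]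
  have hset : ℙ {ω | ε ≤ (∑ i, Z i) ω} ≤ ENNReal.ofReal δ := by
    rw [← ENNReal.ofReal_toReal (measure_ne_top _ _)]
    exact ENNReal.ofReal_le_ofReal hfinal
  have hms : MeasurableSet {ω | ε ≤ (∑ i, Z i) ω} :=
    measurableSet_le measurable_const (by
      have : Measurable fun ω => ∑ i, Z i ω := Finset.measurable_sum _ fun i _ => hmeas i
      convert this using 1
      ext ω
      simp)
  have hcompl : ℙ {ω | ε ≤ (∑ i, Z i) ω}ᶜ ≤ ℙ {ω | ∑ i, Z i ω ≤ ε} := by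
    apply measure_mono
    intro ω hω
    simp only [Set.mem_compl_iff, Set.mem_setOf_eq, not_le] at hω ⊢
    calc ∑ i, Z i ω = (∑ i, Z i) ω := by simp
      _ ≤ ε := le_of_lt hω
  calc 1 - ENNReal.ofReal δ ≤ 1 - ℙ {ω | ε ≤ (∑ i, Z i) ω} :=
        tsub_le_tsub_left hset 1
    _ = ℙ {ω | ε ≤ (∑ i, Z i) ω}ᶜ := (prob_compl_eq_one_sub hms).symm
    _ ≤ ℙ {ω | ∑ i, Z i ω ≤ ε} := hcompl
end

section
/- Fix δ ∈ (0, 1/4) and set β = (5/(3(1−4δ)))·log(1/δ). Let ρ_1,…,ρ_m be mutually independent sub-uniform random variables with values in (0,1]. Then with probability at least 1 − δ, the number of indices i with ρ_i ≥ δ/β is at least m/2. -/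
open MeasureTheory ProbabilityTheory Finset

lemma choose_le_two_pow' (m k : ℕ) : m.choose k ≤ 2 ^ m := by
  rcases le_or_gt k m with h | h
  · calc m.choose k ≤ ∑ i ∈ Finset.range (m + 1), m.choose i :=
        Finset.single_le_sum (fun i _ => Nat.zero_le _) (Finset.mem_range.mpr (by omega))
    _ = 2 ^ m := Nat.sum_range_choose m
  · rw [Nat.choose_eq_zero_of_lt h]; positivity

/-- With probability at least `1 - δ`, at least half of `m` independent sub-uniform
random variables exceed `δ / β`, where `β = (5 / (3(1 - 4δ))) log(1/δ)`. -/
theorem half_subuniform_above_threshold {Ω : Type*} [MeasureSpace Ω]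
    [IsProbabilityMeasure (ℙ : Measure Ω)]
    {δ : ℝ} (hδ0 : 0 < δ) (hδ1 : δ < 1 / 4)
    {m : ℕ} (ρ : Fin m → Ω → ℝ) (hmeas : ∀ i, Measurable (ρ i))
    (hrange : ∀ i ω, ρ i ω ∈ Set.Ioc (0 : ℝ) 1)
    (hsubunif : ∀ i, ∀ x ∈ Set.Icc (0 : ℝ) 1, ℙ {ω | ρ i ω ≤ x} ≤ ENNReal.ofReal x)
    (hindep : iIndepFun ρ ℙ) :
    1 - ENNReal.ofReal δ ≤
      ℙ {ω | (m : ℝ) / 2 ≤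
        ((Finset.univ.filter
          (fun i => δ / (5 / (3 * (1 - 4 * δ)) * Real.log (1 / δ)) ≤ ρ i ω)).card : ℝ)} := by
  set β : ℝ := 5 / (3 * (1 - 4 * δ)) * Real.log (1 / δ) with hβdef
  set t : ℝ := δ / β with htdef
  have h4δ : (0:ℝ) < 1 - 4 * δ := by linarith
  -- log (1/δ) ≥ log 4 > 1.2
  have hlog : (6:ℝ)/5 ≤ Real.log (1 / δ) := by
    have h2 : (0.6931471803 : ℝ) < Real.log 2 := Real.log_two_gt_d9
    have h4 : Real.log 4 = 2 * Real.log 2 := by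
      rw [show (4:ℝ) = 2^2 by norm_num, Real.log_pow]; push_cast; ring
    have hle : Real.log 4 ≤ Real.log (1/δ) := by
      apply Real.log_le_log (by norm_num)
      rw [le_div_iff₀ hδ0]; linarith
    linarith
  have hfrac : (5:ℝ)/3 ≤ 5 / (3 * (1 - 4*δ)) := by
    apply div_le_div_of_nonneg_left (by norm_num) (by linarith)
    nlinarith
  have hβ2 : (2:ℝ) ≤ β := by
    rw [hβdef]
    nlinarith
  have ht0 : 0 < t := div_pos hδ0 (by linarith)
  have ht2 : 2 * t ≤ δ := by
    have : t ≤ δ / 2 := by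
      rw [htdef]
      apply div_le_div_of_nonneg_left hδ0.le (by norm_num) hβ2
    linarith
  have ht8 : t ≤ 1/8 := by linarith
  -- the good event and its complement
  set G : Set Ω := {ω | (m : ℝ) / 2 ≤
      ((Finset.univ.filter (fun i => t ≤ ρ i ω)).card : ℝ)} with hGdef
  set k : ℕ := m / 2 + 1 with hkdef
  set A : Fin m → Set Ω := fun i => {ω | ρ i ω ≤ t} with hAdef
  -- complement is covered by the union over k-subsets
  have hGc : Gᶜ ⊆ ⋃ S ∈ Finset.powersetCard k (Finset.univ : Finset (Fin m)),
      ⋂ i ∈ S, A i := by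
    intro ω hω
    simp only [hGdef, Set.mem_compl_iff, Set.mem_setOf_eq, not_le] at hω
    set c := (Finset.univ.filter (fun i => t ≤ ρ i ω)).card with hcdef
    have hc : 2 * c + 1 ≤ m := by
      have h2c : (2 * c : ℝ) < m := by linarith
      exact_mod_cast h2c
    have hsplit : (Finset.univ.filter (fun i => ¬ t ≤ ρ i ω)).card = m - c := by
      rw [Finset.filter_not, Finset.card_sdiff_of_subset (Finset.filter_subset _ _), Finset.card_univ,
        Fintype.card_fin]
    have hcard : k ≤ (Finset.univ.filter (fun i => ¬ t ≤ ρ i ω)).card := by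
      rw [hsplit]; omega
    obtain ⟨S, hSsub, hScard⟩ := Finset.exists_subset_card_eq hcard
    refine Set.mem_iUnion.mpr ⟨S, Set.mem_iUnion.mpr ⟨?_, ?_⟩⟩
    · exact Finset.mem_coe.mpr (Finset.mem_powersetCard.mpr ⟨Finset.subset_univ S, hScard⟩)
    · refine Set.mem_biInter fun i hi => ?_
      have := hSsub hi
      simp only [Finset.mem_filter, not_le] at this
      exact le_of_lt this.2
  -- probability of each intersection
  have hA : ∀ i, ℙ (A i) ≤ ENNReal.ofReal t :=
    fun i => hsubunif i t ⟨ht0.le, by linarith⟩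
  have hsum : ℙ (⋃ S ∈ Finset.powersetCard k (Finset.univ : Finset (Fin m)),
      ⋂ i ∈ S, A i) ≤ ENNReal.ofReal δ := by
    calc ℙ (⋃ S ∈ Finset.powersetCard k (Finset.univ : Finset (Fin m)), ⋂ i ∈ S, A i)
        ≤ ∑ S ∈ Finset.powersetCard k (Finset.univ : Finset (Fin m)),
            ℙ (⋂ i ∈ S, A i) := measure_biUnion_finset_le _ _
      _ ≤ ∑ S ∈ Finset.powersetCard k (Finset.univ : Finset (Fin m)),
            ENNReal.ofReal t ^ k := by
          apply Finset.sum_le_sum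
          intro S hS
          have hcardS : S.card = k := (Finset.mem_powersetCard.mp hS).2
          have hmeasInter : ℙ (⋂ i ∈ S, A i) = ∏ i ∈ S, ℙ (A i) := by
            apply hindep.meas_biInter
            intro i hi
            exact ⟨Set.Iic t, measurableSet_Iic, rfl⟩
          rw [hmeasInter, ← hcardS]
          calc ∏ i ∈ S, ℙ (A i) ≤ ∏ i ∈ S, ENNReal.ofReal t :=
              Finset.prod_le_prod' (fun i _ => hA i)
            _ = ENNReal.ofReal t ^ S.card := Finset.prod_const _
      _ = (m.choose k : ENNReal) * ENNReal.ofReal t ^ k := by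
          rw [Finset.sum_const, Finset.card_powersetCard, Finset.card_univ, Fintype.card_fin,
            nsmul_eq_mul]
      _ ≤ ENNReal.ofReal δ := by
          rw [← ENNReal.ofReal_pow ht0.le, ← ENNReal.ofReal_natCast,
            ← ENNReal.ofReal_mul (by positivity)]
          apply ENNReal.ofReal_le_ofReal
          have hchoose : (m.choose k : ℝ) ≤ 2 ^ m := by
            exact_mod_cast (choose_le_two_pow' m k).trans (le_of_eq rfl)
          have hpowpos : (0:ℝ) < t ^ k := pow_pos ht0 k
          calc (m.choose k : ℝ) * t ^ k ≤ 2 ^ m * t ^ k := by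
                apply mul_le_mul_of_nonneg_right hchoose hpowpos.le
            _ ≤ 2 ^ (2 * (m/2) + 1) * t ^ k := by
                apply mul_le_mul_of_nonneg_right _ hpowpos.le
                apply pow_le_pow_right₀ (by norm_num)
                omega
            _ = (2 * t) * (4 * t) ^ (m/2) := by
                rw [hkdef, pow_succ (2:ℝ) (2 * (m/2)), pow_mul, pow_succ t (m/2), mul_pow]
                ring
            _ ≤ (2 * t) * 1 := by
                apply mul_le_mul_of_nonneg_left _ (by linarith)
                apply pow_le_one₀ (by linarith) (by linarith)
            _ ≤ δ := by linarith
  have hGcle : ℙ Gᶜ ≤ ENNReal.ofReal δ := (measure_mono hGc).trans hsum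
  have h1 : (1:ENNReal) ≤ ℙ G + ℙ Gᶜ := by
    rw [← measure_univ (μ := (ℙ : Measure Ω)), ← Set.union_compl_self G]
    exact measure_union_le _ _
  rw [tsub_le_iff_right]
  calc (1:ENNReal) ≤ ℙ G + ℙ Gᶜ := h1
    _ ≤ ℙ G + ENNReal.ofReal δ := add_le_add_right hGcle _
end

section
/- Let u_{(ℓ)} denote the ℓ-th order statistic of m i.i.d. Uniform[0,1] random variables, for an integer ℓ ∈ {1,…,m}. Then for every x ∈ [0, ℓ/m): P( u_{(ℓ)} ≤ x ) ≤ exp( −(ℓ/2)·(1 − m·x/ℓ)² ). In particular, taking x = ℓ/(2m) gives P( u_{(ℓ)} ≤ ℓ/(2m) ) ≤ e^{−ℓ/8}. -/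
open MeasureTheory ProbabilityTheory Finset

lemma aux_log_ineq {s : ℝ} (hs0 : 0 ≤ s) (hs1 : s < 1) :
    s + s ^ 2 / 2 ≤ -Real.log (1 - s) := by
  set f : ℝ → ℝ := fun y => Real.log (1 - y) + (y + y ^ 2 / 2) with hf
  have hd : ∀ y ∈ Set.Ioo (0:ℝ) 1, HasDerivAt f ((1 - y)⁻¹ * (-1) + (1 + 2 * y ^ 1 / 2)) y := by
    intro y hy
    have h1 : (1 : ℝ) - y ≠ 0 := by rw [sub_ne_zero]; exact ne_of_gt hy.2
    have hlog : HasDerivAt (fun z : ℝ => Real.log (1 - z)) ((1 - y)⁻¹ * (-1)) y := by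
      have hsub : HasDerivAt (fun z : ℝ => 1 - z) (-1) y := by
        simpa using (hasDerivAt_id y).const_sub 1
      exact (Real.hasDerivAt_log h1).comp y hsub
    have hpoly : HasDerivAt (fun z : ℝ => z + z ^ 2 / 2) (1 + 2 * y ^ 1 / 2) y :=
      (hasDerivAt_id y).add ((hasDerivAt_pow 2 y).div_const 2)
    exact hlog.add hpoly
  have hcont : ContinuousOn f (Set.Ico (0:ℝ) 1) := by
    apply ContinuousOn.add
    · apply ContinuousOn.log (by fun_prop)
      intro y hy
      rw [sub_ne_zero]
      exact ne_of_gt hy.2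
    · fun_prop
  have hanti : AntitoneOn f (Set.Ico (0:ℝ) 1) := by
    apply antitoneOn_of_deriv_nonpos (convex_Ico 0 1) hcont
    · intro y hy
      rw [interior_Ico] at hy
      exact (hd y hy).differentiableAt.differentiableWithinAt
    · intro y hy
      rw [interior_Ico] at hy
      rw [(hd y hy).deriv]
      have h1 : (0:ℝ) < 1 - y := by linarith [hy.2]
      rw [inv_mul_eq_div, div_add' _ _ _ (ne_of_gt h1)]
      apply div_nonpos_of_nonpos_of_nonneg _ h1.le
      nlinarith [hy.1, hy.2]
  have h0 : f s ≤ f 0 := hanti (by constructor <;> norm_num) ⟨hs0, hs1⟩ hs0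
  simp only [hf] at h0
  norm_num at h0
  linarith

lemma card_filter_sort {m : ℕ} (v : Fin m → ℝ) (σ : Equiv.Perm (Fin m)) (y : ℝ) :
    (univ.filter (fun j => v (σ j) ≤ y)).card = (univ.filter (fun i => v i ≤ y)).card := by
  classical
  have : (univ.filter (fun i => v i ≤ y)) =
      ((univ.filter (fun j => v (σ j) ≤ y)).map ⟨σ, σ.injective⟩) := by
    ext i
    simp only [mem_filter, mem_univ, true_and, mem_map, Function.Embedding.coeFn_mk]
    constructor
    · intro h; exact ⟨σ.symm i, by simpa using h, by simp⟩
    · rintro ⟨j, hj, rfl⟩; exact hj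
  rw [this, card_map]

/-- The ℓ-th order statistic (the ℓ-th smallest value) of the family `u`, defined as the
infimum of levels below which at least `ℓ` of the values lie. -/
noncomputable def orderStat {Ω : Type*} {m : ℕ} (u : Fin m → Ω → ℝ) (ℓ : ℕ) (ω : Ω) : ℝ :=
  sInf {x : ℝ | ℓ ≤ (Finset.univ.filter (fun i => u i ω ≤ x)).card}

lemma orderStat_le_iff {Ω : Type*} {m : ℕ} (u : Fin m → Ω → ℝ) {ℓ : ℕ}
    (hℓ1 : 1 ≤ ℓ) (hℓm : ℓ ≤ m) (ω : Ω) (x : ℝ) :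
    orderStat u ℓ ω ≤ x ↔ ℓ ≤ (univ.filter (fun i => u i ω ≤ x)).card := by
  classical
  set v : Fin m → ℝ := fun i => u i ω with hv
  set σ : Equiv.Perm (Fin m) := Tuple.sort v with hσ
  have hmono : Monotone (v ∘ σ) := Tuple.monotone_sort v
  have hklt : ℓ - 1 < m := by omega
  set k : Fin m := ⟨ℓ - 1, hklt⟩ with hk
  have key : ∀ y : ℝ, ℓ ≤ (univ.filter (fun i => v i ≤ y)).card ↔ v (σ k) ≤ y := by
    intro y
    rw [← card_filter_sort v σ y]
    constructor
    · intro h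
      obtain ⟨A, hAsub, hAcard⟩ := Finset.exists_subset_card_eq h
      have hAne : A.Nonempty := by
        rw [← Finset.card_pos, hAcard]; omega
      set a := A.max' hAne with ha
      have hAa : A ⊆ Finset.Iic a := fun j hj => Finset.mem_Iic.mpr (A.le_max' j hj)
      have hcard : ℓ ≤ (a : ℕ) + 1 := by
        calc ℓ = A.card := hAcard.symm
        _ ≤ (Finset.Iic a).card := Finset.card_le_card hAa
        _ = (a : ℕ) + 1 := Fin.card_Iic a
      have hka : k ≤ a := by
        rw [Fin.le_def]; simp only [hk]; omega
      have hamem : a ∈ univ.filter (fun j => v (σ j) ≤ y) := hAsub (A.max'_mem hAne)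
      rw [mem_filter] at hamem
      exact le_trans (hmono hka) hamem.2
    · intro h
      have hsub : Finset.Iic k ⊆ univ.filter (fun j => v (σ j) ≤ y) := by
        intro j hj
        rw [mem_filter]
        exact ⟨mem_univ _, le_trans (hmono (Finset.mem_Iic.mp hj)) h⟩
      calc ℓ = (k : ℕ) + 1 := by simp only [hk]; omega
      _ = (Finset.Iic k).card := (Fin.card_Iic k).symm
      _ ≤ _ := Finset.card_le_card hsub
  have hset : {y : ℝ | ℓ ≤ (univ.filter (fun i => u i ω ≤ y)).card} = Set.Ici (v (σ k)) := by
    ext y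
    simpa [Set.mem_setOf_eq] using key y
  rw [orderStat, hset, csInf_Ici, ← key x]

lemma mgf_indicator {Ω : Type*} [MeasureSpace Ω] [IsProbabilityMeasure (ℙ : Measure Ω)]
    (f : Ω → ℝ) (hmeas : Measurable f)
    (hunif : Measure.map f ℙ = volume.restrict (Set.Icc (0 : ℝ) 1))
    {x : ℝ} (hx0 : 0 ≤ x) (hx1 : x ≤ 1) (t : ℝ) :
    mgf (fun ω => if f ω ≤ x then (1:ℝ) else 0) ℙ t = 1 + (Real.exp t - 1) * x := by
  have hgmeas : Measurable (fun y : ℝ => if y ≤ x then Real.exp t else 1) :=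
    Measurable.ite measurableSet_Iic measurable_const measurable_const
  have h1 : mgf (fun ω => if f ω ≤ x then (1:ℝ) else 0) ℙ t
      = ∫ y, (if y ≤ x then Real.exp t else 1) ∂(Measure.map f ℙ) := by
    rw [MeasureTheory.integral_map hmeas.aemeasurable hgmeas.aestronglyMeasurable]
    rw [mgf]
    congr 1
    ext ω
    by_cases h : f ω ≤ x <;> simp [h]
  rw [h1, hunif]
  have h2 : ∀ y : ℝ, (if y ≤ x then Real.exp t else 1)
      = 1 + (Set.Iic x).indicator (fun _ => Real.exp t - 1) y := by
    intro y
    by_cases h : y ≤ x <;> simp [h, Set.indicator_apply]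
  simp_rw [h2]
  rw [integral_add (integrable_const 1)]
  · rw [integral_const]
    rw [MeasureTheory.integral_indicator measurableSet_Iic]
    rw [setIntegral_const]
    have hIcc : volume.restrict (Set.Icc (0:ℝ) 1) Set.univ = 1 := by
      rw [Measure.restrict_apply MeasurableSet.univ, Set.univ_inter, Real.volume_Icc]
      norm_num
    have hIic : volume.restrict (Set.Icc (0:ℝ) 1) (Set.Iic x) = ENNReal.ofReal x := by
      rw [Measure.restrict_apply measurableSet_Iic]
      have : Set.Iic x ∩ Set.Icc (0:ℝ) 1 = Set.Icc 0 x := by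
        ext y
        simp only [Set.mem_inter_iff, Set.mem_Iic, Set.mem_Icc]
        constructor
        · rintro ⟨h1, h2, h3⟩; exact ⟨h2, h1⟩
        · rintro ⟨h1, h2⟩; exact ⟨h2, h1, h2.trans hx1⟩
      rw [this, Real.volume_Icc, sub_zero]
    rw [measureReal_def, measureReal_def, hIcc, hIic]
    simp [ENNReal.toReal_ofReal hx0, mul_comm]
  · rw [integrable_indicator_iff measurableSet_Iic]
    apply (integrableOn_const_iff (C := Real.exp t - 1) (hC := enorm_ne_top)).mpr
    right
    rw [Measure.restrict_apply measurableSet_Iic]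
    exact lt_of_le_of_lt (measure_mono (Set.inter_subset_right)) (by
      rw [Real.volume_Icc]; norm_num)

/-- Chernoff lower-tail bound for uniform order statistics. -/
theorem uniform_orderStat_lower_tail {Ω : Type*} [MeasureSpace Ω]
    [IsProbabilityMeasure (ℙ : Measure Ω)]
    {m : ℕ} (u : Fin m → Ω → ℝ) (humeas : ∀ i, Measurable (u i))
    (huunif : ∀ i, Measure.map (u i) ℙ = volume.restrict (Set.Icc (0 : ℝ) 1))
    (huindep : iIndepFun u ℙ)
    {ℓ : ℕ} (hℓ1 : 1 ≤ ℓ) (hℓm : ℓ ≤ m) :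
    (∀ x : ℝ, 0 ≤ x → x < (ℓ : ℝ) / m →
      ℙ {ω | orderStat u ℓ ω ≤ x} ≤
        ENNReal.ofReal (Real.exp (-((ℓ : ℝ) / 2) * (1 - (m : ℝ) * x / ℓ) ^ 2))) ∧
    ℙ {ω | orderStat u ℓ ω ≤ (ℓ : ℝ) / (2 * m)} ≤
      ENNReal.ofReal (Real.exp (-(ℓ : ℝ) / 8)) := by
  classical
  have hm0 : 0 < m := hℓ1.trans hℓm
  have hℓR : (0:ℝ) < ℓ := by exact_mod_cast hℓ1
  have hmR : (0:ℝ) < m := by exact_mod_cast hm0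
  have main : ∀ x : ℝ, 0 ≤ x → x < (ℓ:ℝ)/m →
      ℙ {ω | orderStat u ℓ ω ≤ x} ≤
        ENNReal.ofReal (Real.exp (-((ℓ : ℝ) / 2) * (1 - (m : ℝ) * x / ℓ) ^ 2)) := by
    intro x hx0 hxlt
    have hx1 : x ≤ 1 := le_of_lt (lt_of_lt_of_le hxlt
      (by rw [div_le_one hmR]; exact_mod_cast hℓm))
    set X : Fin m → Ω → ℝ := fun i ω => if u i ω ≤ x then 1 else 0 with hX
    have hSdef : ∀ ω, (∑ i, X i) ω = ((univ.filter fun i => u i ω ≤ x).card : ℝ) := by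
      intro ω
      rw [Finset.sum_apply]
      simp only [hX]
      exact Finset.sum_boole _ _
    have hev : {ω | orderStat u ℓ ω ≤ x} = {ω | (ℓ:ℝ) ≤ (∑ i, X i) ω} := by
      ext ω
      simp only [Set.mem_setOf_eq, orderStat_le_iff u hℓ1 hℓm ω x, hSdef ω]
      exact_mod_cast Iff.rfl
    rw [hev]
    rcases hx0.eq_or_lt with rfl | hx0'
    · -- x = 0 : the event has probability zero
      have hsub : {ω | (ℓ:ℝ) ≤ (∑ i, X i) ω} ⊆ ⋃ i, u i ⁻¹' Set.Iic (0:ℝ) := by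
        intro ω hω
        rw [Set.mem_setOf_eq, hSdef ω] at hω
        have hc : ℓ ≤ (univ.filter fun i => u i ω ≤ (0:ℝ)).card := by exact_mod_cast hω
        have hne : (univ.filter fun i => u i ω ≤ (0:ℝ)).Nonempty := by
          rw [← Finset.card_pos]; omega
        obtain ⟨i, hi⟩ := hne
        rw [mem_filter] at hi
        exact Set.mem_iUnion.mpr ⟨i, hi.2⟩
      have hone : ∀ i : Fin m, ℙ (u i ⁻¹' Set.Iic (0:ℝ)) = 0 := by
        intro i
        rw [← Measure.map_apply (humeas i) measurableSet_Iic, huunif i,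
          Measure.restrict_apply measurableSet_Iic]
        have : Set.Iic (0:ℝ) ∩ Set.Icc 0 1 = {0} := by
          ext y
          simp only [Set.mem_inter_iff, Set.mem_Iic, Set.mem_Icc, Set.mem_singleton_iff]
          constructor
          · rintro ⟨h1, h2, _⟩; exact le_antisymm h1 h2
          · rintro rfl; norm_num
        rw [this]
        exact measure_singleton 0
      have hz : ℙ {ω | (ℓ:ℝ) ≤ (∑ i, X i) ω} = 0 := by
        refine le_antisymm (le_trans (measure_mono hsub) ?_) zero_le
        refine le_trans (measure_iUnion_le _) ?_
        simp [hone]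
      rw [hz]
      exact zero_le
    · -- 0 < x
      have hmx : (m:ℝ) * x < ℓ := by
        have := (lt_div_iff₀ hmR).mp hxlt; linarith
      set s : ℝ := 1 - (m:ℝ)*x/ℓ with hsdef
      have hs0 : 0 < s := by
        have : (m:ℝ)*x/ℓ < 1 := (div_lt_one hℓR).mpr hmx
        simp only [hsdef]; linarith
      have hs1 : s < 1 := by
        have : 0 < (m:ℝ)*x/ℓ := by positivity
        simp only [hsdef]; linarith
      set t : ℝ := Real.log ((ℓ:ℝ)/((m:ℝ)*x)) with htdef
      have hfrac : 0 < (ℓ:ℝ)/((m:ℝ)*x) := by positivity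
      have hexp_t : Real.exp t = (ℓ:ℝ)/((m:ℝ)*x) := Real.exp_log hfrac
      have ht0 : 0 ≤ t := Real.log_nonneg ((one_le_div (by positivity)).mpr hmx.le)
      have hts : t = -Real.log (1 - s) := by
        have h1s : (1:ℝ) - s = (m:ℝ)*x/ℓ := by simp only [hsdef]; ring
        rw [h1s, htdef, ← Real.log_inv, inv_div]
      have htge : s + s^2/2 ≤ t := by
        rw [hts]; exact aux_log_ineq hs0.le hs1
      have hXmeas : ∀ i, Measurable (X i) := fun i =>
        Measurable.ite ((humeas i) measurableSet_Iic) measurable_const measurable_const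
      have hXindep : iIndepFun X ℙ :=
        huindep.comp (fun _ => fun y : ℝ => if y ≤ x then (1:ℝ) else 0)
          (fun _ => Measurable.ite measurableSet_Iic measurable_const measurable_const)
      have hSmeas : Measurable (∑ i, X i) := by
        have : (∑ i, X i) = fun ω => ∑ i, X i ω := by
          funext ω; exact Finset.sum_apply _ _ _
        rw [this]
        exact Finset.measurable_sum _ (fun i _ => hXmeas i)
      have hXsum_le : ∀ ω, (∑ i, X i) ω ≤ (m:ℝ) := by
        intro ω
        rw [hSdef ω]
        have : (univ.filter fun i => u i ω ≤ x).card ≤ m := by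
          refine le_trans (Finset.card_filter_le _ _) ?_
          simp
        exact_mod_cast this
      have hintS : Integrable (fun ω => Real.exp (t * (∑ i, X i) ω)) ℙ := by
        refine (integrable_const (Real.exp (t * m))).mono'
          ((hSmeas.const_mul t).exp.aestronglyMeasurable) (ae_of_all _ fun ω => ?_)
        rw [Real.norm_eq_abs, abs_of_pos (Real.exp_pos _), Real.exp_le_exp]
        exact mul_le_mul_of_nonneg_left (hXsum_le ω) ht0
      have hch := measure_ge_le_exp_mul_mgf (μ := ℙ) (X := ∑ i, X i) (ℓ:ℝ) ht0 hintS
      have hmgf : mgf (∑ i, X i) ℙ t = (1 + (Real.exp t - 1)*x)^m := by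
        rw [hXindep.mgf_sum hXmeas]
        have heach : ∀ i : Fin m, mgf (X i) ℙ t = 1 + (Real.exp t - 1)*x := fun i =>
          mgf_indicator (u i) (humeas i) (huunif i) hx0 hx1 t
        rw [Finset.prod_congr rfl (fun i _ => heach i), Finset.prod_const, Finset.card_univ,
          Fintype.card_fin]
      have h1e : 1 ≤ Real.exp t := Real.one_le_exp ht0
      have hb1 : (0:ℝ) ≤ 1 + (Real.exp t - 1)*x := by nlinarith
      have hkey : Real.exp (-t*ℓ) * (1 + (Real.exp t - 1)*x)^m
          ≤ Real.exp (-((ℓ:ℝ)/2) * s^2) := by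
        have step1 : (1 + (Real.exp t - 1)*x)^m ≤ Real.exp ((Real.exp t - 1)*x)^m := by
          refine pow_le_pow_left₀ hb1 ?_ m
          have := Real.add_one_le_exp ((Real.exp t - 1)*x)
          linarith
        have step2 : Real.exp ((Real.exp t - 1)*x)^m
            = Real.exp ((m:ℝ)*((Real.exp t - 1)*x)) := (Real.exp_nat_mul _ m).symm
        calc Real.exp (-t*ℓ) * (1 + (Real.exp t - 1)*x)^m
            ≤ Real.exp (-t*ℓ) * Real.exp ((m:ℝ)*((Real.exp t - 1)*x)) := by
              rw [← step2]; exact mul_le_mul_of_nonneg_left step1 (Real.exp_pos _).le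
        _ = Real.exp (-t*ℓ + (m:ℝ)*((Real.exp t - 1)*x)) := (Real.exp_add _ _).symm
        _ ≤ Real.exp (-((ℓ:ℝ)/2) * s^2) := by
            rw [Real.exp_le_exp]
            have hmxet : (m:ℝ)*x*Real.exp t = ℓ := by
              rw [hexp_t]; field_simp
            have hls : (ℓ:ℝ) - (m:ℝ)*x = (ℓ:ℝ) * s := by
              simp only [hsdef]; field_simp
            have h3 : (m:ℝ)*((Real.exp t - 1)*x) = (ℓ:ℝ)*s := by
              have h4 : (m:ℝ)*((Real.exp t - 1)*x)
                  = (m:ℝ)*x*Real.exp t - (m:ℝ)*x := by ring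
              rw [h4, hmxet]; exact hls
            rw [h3]
            nlinarith [mul_le_mul_of_nonneg_right htge hℓR.le]
      calc ℙ {ω | (ℓ:ℝ) ≤ (∑ i, X i) ω}
          = ENNReal.ofReal (ℙ {ω | (ℓ:ℝ) ≤ (∑ i, X i) ω}).toReal :=
            (ENNReal.ofReal_toReal (measure_ne_top _ _)).symm
      _ ≤ ENNReal.ofReal (Real.exp (-t*ℓ) * mgf (∑ i, X i) ℙ t) :=
            ENNReal.ofReal_le_ofReal hch
      _ ≤ ENNReal.ofReal (Real.exp (-((ℓ:ℝ)/2) * s^2)) := by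
            refine ENNReal.ofReal_le_ofReal ?_
            rw [hmgf]; exact hkey
  refine ⟨main, ?_⟩
  have hx0 : (0:ℝ) ≤ (ℓ:ℝ)/(2*m) := by positivity
  have hxlt : (ℓ:ℝ)/(2*m) < (ℓ:ℝ)/m := by
    exact div_lt_div_of_pos_left hℓR hmR (by linarith)
  have harg : -((ℓ:ℝ)/2) * (1 - (m:ℝ) * ((ℓ:ℝ)/(2*m))/ℓ)^2 = -(ℓ:ℝ)/8 := by
    have h1 : (m:ℝ) * ((ℓ:ℝ)/(2*m))/ℓ = 1/2 := by
      field_simp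
    rw [h1]; ring
  have := main _ hx0 hxlt
  rw [harg] at this
  exact this
end

section
/- Let X_1,…,X_m be i.i.d. Uniform[0,1] random variables, let A(s) = Σ_{i=1}^m 1{X_i ≤ s}, and let (F_s)_{s∈[0,1)} be the filtration with F_s generated by the random variables A(u) for u ≤ s. Then the process M(s) = (A(s) − m·s)/(1 − s), s ∈ [0,1), is a martingale with respect to (F_s): for all 0 ≤ s ≤ t < 1, E[ M(t) | F_s ] = M(s). -/
open MeasureTheory ProbabilityTheory Finset

variable {Ω : Type*}

/-- The empirical count `A(s) = Σ_i 1{X_i ≤ s}` (as a real number). -/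
noncomputable def Acount {m : ℕ} (X : Fin m → Ω → ℝ) (s : ℝ) (ω : Ω) : ℝ :=
  ((Finset.univ.filter (fun i => X i ω ≤ s)).card : ℝ)

/-- The σ-algebra generated by the random variables `A(u)` for `u ≤ s`. -/
noncomputable def countFiltration {m : ℕ} (X : Fin m → Ω → ℝ) (s : ℝ) :
    MeasurableSpace Ω :=
  ⨆ u ∈ Set.Iic s, MeasurableSpace.comap (Acount X u) inferInstance

/-- The process `M(s) = (A(s) - m s)/(1 - s)`. -/
noncomputable def bridgeM {m : ℕ} (X : Fin m → Ω → ℝ) (s : ℝ) (ω : Ω) : ℝ :=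
  (Acount X s ω - (m : ℝ) * s) / (1 - s)

/-- censoring map: identity below `s`, constant `2` above. -/
noncomputable def cens (s : ℝ) (x : ℝ) : ℝ := if x ≤ s then x else 2

lemma measurable_cens (s : ℝ) : Measurable (cens s) :=
  Measurable.ite measurableSet_Iic measurable_id measurable_const

/-- censored vector of observations -/
noncomputable def censVec {m : ℕ} (X : Fin m → Ω → ℝ) (s : ℝ) (ω : Ω) : Fin m → ℝ :=
  fun i => cens s (X i ω)

lemma measurable_censVec [MeasurableSpace Ω] {m : ℕ} (X : Fin m → Ω → ℝ)
    (hmeas : ∀ i, Measurable (X i)) (s : ℝ) :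
    Measurable (censVec X s) :=
  measurable_pi_lambda _ fun i => (measurable_cens s).comp (hmeas i)

/-- σ-algebra generated by the censored observations. -/
noncomputable def censAlg [MeasurableSpace Ω] {m : ℕ} (X : Fin m → Ω → ℝ) (s : ℝ) :
    MeasurableSpace Ω :=
  MeasurableSpace.comap (censVec X s) inferInstance

noncomputable def countFn (m : ℕ) (u : ℝ) (v : Fin m → ℝ) : ℝ :=
  ((Finset.univ.filter (fun i => v i ≤ u)).card : ℝ)

lemma countFn_eq_sum (m : ℕ) (u : ℝ) (v : Fin m → ℝ) :
    countFn m u v = ∑ i, (if v i ≤ u then (1:ℝ) else 0) := by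
  rw [countFn, Finset.card_filter]
  push_cast
  rfl

lemma measurable_countFn (m : ℕ) (u : ℝ) : Measurable (countFn m u) := by
  have h : countFn m u = fun v => ∑ i, (if v i ≤ u then (1:ℝ) else 0) := by
    funext v; exact countFn_eq_sum m u v
  rw [h]
  exact Finset.measurable_sum _ fun i _ =>
    Measurable.ite (measurableSet_le (measurable_pi_apply i) measurable_const)
      measurable_const measurable_const

lemma Acount_eq_sum {m : ℕ} (X : Fin m → Ω → ℝ) (u : ℝ) (ω : Ω) :
    Acount X u ω = ∑ i, (if X i ω ≤ u then (1:ℝ) else 0) := by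
  rw [Acount, Finset.card_filter]
  push_cast
  rfl

lemma Acount_comp_censVec {m : ℕ} (X : Fin m → Ω → ℝ) {s u : ℝ} (hu : u ≤ s) (hs : s < 1) :
    Acount X u = countFn m u ∘ censVec X s := by
  funext ω
  rw [Acount_eq_sum, Function.comp_apply, countFn_eq_sum]
  refine Finset.sum_congr rfl fun i _ => ?_
  by_cases h : X i ω ≤ s
  · simp [censVec, cens, h]
  · have h1 : ¬ X i ω ≤ u := fun hx => h (hx.trans hu)
    have h2 : ¬ (2:ℝ) ≤ u := by linarith
    simp [censVec, cens, h, h1, h2]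

lemma measurable_Acount [MeasurableSpace Ω] {m : ℕ} (X : Fin m → Ω → ℝ)
    (hmeas : ∀ i, Measurable (X i)) (u : ℝ) :
    Measurable (Acount X u) := by
  have h : Acount X u = fun ω => ∑ i, (if X i ω ≤ u then (1:ℝ) else 0) := by
    funext ω; exact Acount_eq_sum X u ω
  rw [h]
  exact Finset.measurable_sum _ fun i _ =>
    Measurable.ite ((hmeas i) measurableSet_Iic) measurable_const measurable_const

lemma integrable_ind {m : ℕ} [MeasureSpace Ω] [IsProbabilityMeasure (ℙ : Measure Ω)]
    (X : Fin m → Ω → ℝ) (hmeas : ∀ i, Measurable (X i)) (D : Set ℝ) (hD : MeasurableSet D)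
    (i : Fin m) : Integrable ((X i ⁻¹' D).indicator (fun _ => (1:ℝ))) ℙ :=
  (integrable_const 1).indicator ((hmeas i) hD)

lemma integrable_bridgeM {m : ℕ} [MeasureSpace Ω] [IsProbabilityMeasure (ℙ : Measure Ω)]
    (X : Fin m → Ω → ℝ) (hmeas : ∀ i, Measurable (X i)) (u : ℝ) :
    Integrable (bridgeM X u) ℙ := by
  have h : bridgeM X u = fun ω =>
      ((∑ i, (if X i ω ≤ u then (1:ℝ) else 0)) - (m : ℝ) * u) / (1 - u) := by
    funext ω; rw [bridgeM, Acount_eq_sum]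
  rw [h]
  apply Integrable.div_const
  apply Integrable.sub _ (integrable_const _)
  apply integrable_finset_sum
  intro i _
  refine (integrable_ind X hmeas (Set.Iic u) measurableSet_Iic i).congr (ae_of_all _ fun ω => ?_)
  by_cases h : X i ω ≤ u <;> simp [Set.indicator_apply, h]

set_option maxHeartbeats 400000 in
/-- `M(s) = (A(s) - m s)/(1 - s)` is a martingale on `[0, 1)` with respect to the
filtration generated by the counts: for `0 ≤ s ≤ t < 1`, `E[M(t) | F_s] = M(s)` a.s. -/
theorem bridge_martingale [MeasureSpace Ω] [IsProbabilityMeasure (ℙ : Measure Ω)]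
    {m : ℕ} (X : Fin m → Ω → ℝ) (hmeas : ∀ i, Measurable (X i))
    (hunif : ∀ i, Measure.map (X i) ℙ = volume.restrict (Set.Icc (0 : ℝ) 1))
    (hindep : iIndepFun X ℙ) :
    ∀ s t : ℝ, 0 ≤ s → s ≤ t → t < 1 →
      (ℙ : Measure Ω)[bridgeM X t | countFiltration X s] =ᵐ[ℙ] bridgeM X s := by
  classical
  intro s t hs hst ht1
  have hs1 : s < 1 := lt_of_le_of_lt hst ht1
  have h1s : (0:ℝ) < 1 - s := by linarith
  have h1t : (0:ℝ) < 1 - t := by linarith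
  have h1s' : (1:ℝ) - s ≠ 0 := ne_of_gt h1s
  have h1t' : (1:ℝ) - t ≠ 0 := ne_of_gt h1t
  set Z := censVec X s with hZdef
  have hZ : Measurable Z := measurable_censVec X hmeas s
  have hH_le : censAlg X s ≤ (inferInstance : MeasurableSpace Ω) := hZ.comap_le
  have hF_le_H : countFiltration X s ≤ censAlg X s := by
    refine iSup₂_le fun u hu => ?_
    rw [Acount_comp_censVec X hu hs1, ← MeasurableSpace.comap_comp]
    exact MeasurableSpace.comap_mono (measurable_countFn m u).comap_le
  have hF_le : countFiltration X s ≤ (inferInstance : MeasurableSpace Ω) := hF_le_H.trans hH_le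
  have hInt_t : Integrable (bridgeM X t) ℙ := integrable_bridgeM X hmeas t
  have hInt_s : Integrable (bridgeM X s) ℙ := integrable_bridgeM X hmeas s
  have hZmH : Measurable[censAlg X s] Z := Measurable.of_comap_le le_rfl
  have hAsH : Measurable[censAlg X s] (Acount X s) := by
    rw [Acount_comp_censVec X le_rfl hs1]
    exact (measurable_countFn m s).comp hZmH
  have hSM_H : StronglyMeasurable[censAlg X s] (bridgeM X s) := by
    have heq : bridgeM X s = fun ω => (Acount X s ω - (m:ℝ)*s) / (1-s) := rfl
    have hmb : Measurable[censAlg X s] (bridgeM X s) := by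
      rw [heq]; exact (hAsH.sub measurable_const).div_const _
    exact hmb.stronglyMeasurable
  have hAsF : Measurable[countFiltration X s] (Acount X s) := by
    refine Measurable.of_comap_le ?_
    exact le_iSup₂ (f := fun u (_ : u ∈ Set.Iic s) =>
      MeasurableSpace.comap (Acount X u) inferInstance) s (le_refl s)
  have hSM_F : StronglyMeasurable[countFiltration X s] (bridgeM X s) := by
    have heq : bridgeM X s = fun ω => (Acount X s ω - (m:ℝ)*s) / (1-s) := rfl
    have hmb : Measurable[countFiltration X s] (bridgeM X s) := by
      rw [heq]; exact (hAsF.sub measurable_const).div_const _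
    exact hmb.stronglyMeasurable
  have hmap : ∀ (j : Fin m) (E : Set ℝ), MeasurableSet E →
      ℙ (X j ⁻¹' E) = volume (E ∩ Set.Icc 0 1) := by
    intro j E hE
    rw [← Measure.map_apply (hmeas j) hE, hunif j, Measure.restrict_apply hE]
  set a : ℝ := (1 - s)⁻¹ with hadef
  set b : ℝ := (s - t) / ((1 - s) * (1 - t)) with hbdef
  set F : Fin m → Ω → ℝ := fun i ω => a * (Set.Ioc s t).indicator (fun _ => (1:ℝ)) (X i ω)
      + b * (Set.Ioi t).indicator (fun _ => (1:ℝ)) (X i ω) with hF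
  -- pointwise decomposition of the increment
  have hdiff : ∀ ω, bridgeM X t ω - bridgeM X s ω = ∑ i, F i ω := by
    intro ω
    simp only [hF]
    have hrep : ∀ u : ℝ, bridgeM X u ω
        = ∑ i, ((if X i ω ≤ u then (1:ℝ) else 0) - u) / (1 - u) := by
      intro u
      rw [bridgeM, Acount_eq_sum, ← Finset.sum_div]
      congr 1
      rw [Finset.sum_sub_distrib, Finset.sum_const, card_univ, Fintype.card_fin, nsmul_eq_mul]
    rw [hrep t, hrep s, ← Finset.sum_sub_distrib]
    refine Finset.sum_congr rfl fun i _ => ?_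
    rcases le_or_gt (X i ω) s with h1 | h1
    · have h2 : X i ω ≤ t := h1.trans hst
      have h3 : X i ω ∉ Set.Ioc s t := fun hm => absurd hm.1 (not_lt.mpr h1)
      have h4 : X i ω ∉ Set.Ioi t := fun hm => absurd (Set.mem_Ioi.mp hm) (not_lt.mpr h2)
      rw [if_pos h1, if_pos h2, Set.indicator_of_notMem h3, Set.indicator_of_notMem h4,
        div_self h1t', div_self h1s', sub_self, mul_zero, mul_zero, add_zero]
    · rcases le_or_gt (X i ω) t with h2 | h2
      · have h3 : X i ω ∈ Set.Ioc s t := ⟨h1, h2⟩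
        have h4 : X i ω ∉ Set.Ioi t := fun hm => absurd (Set.mem_Ioi.mp hm) (not_lt.mpr h2)
        rw [if_pos h2, if_neg (not_le.mpr h1), Set.indicator_of_mem h3,
          Set.indicator_of_notMem h4, hadef, mul_one, mul_zero, add_zero]
        field_simp
        ring
      · have h3 : X i ω ∉ Set.Ioc s t := fun hm => absurd hm.2 (not_le.mpr h2)
        have h4 : X i ω ∈ Set.Ioi t := h2
        rw [if_neg (not_le.mpr h2), if_neg (not_le.mpr h1), Set.indicator_of_notMem h3,
          Set.indicator_of_mem h4, hadef, hbdef, mul_one, mul_zero, zero_add]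
        field_simp
        ring
  -- measure of a box intersected with a tail event of one coordinate
  have hboxmeas : ∀ (B : Fin m → Set ℝ), (∀ i, MeasurableSet (B i)) →
      ∀ (i : Fin m) (D : Set ℝ), MeasurableSet D → (∀ x ∈ D, s < x) →
      ℙ ((Z ⁻¹' Set.pi Set.univ B) ∩ X i ⁻¹' D)
        = (if (2:ℝ) ∈ B i then volume (D ∩ Set.Icc 0 1) else 0)
            * ∏ j ∈ Finset.univ.erase i, ℙ (X j ⁻¹' (cens s ⁻¹' B j)) := by
    intro B hB i D hD hDs
    set sets : Fin m → Set ℝ :=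
      fun j => if j = i then (cens s ⁻¹' B i) ∩ D else cens s ⁻¹' B j with hsets
    have hsets_i : sets i = (cens s ⁻¹' B i) ∩ D := by simp only [hsets, if_pos rfl]
    have hsets_ne : ∀ j, j ≠ i → sets j = cens s ⁻¹' B j := by
      intro j hj; simp only [hsets, if_neg hj]
    have hsetsmeas : ∀ j, j ∈ (Finset.univ : Finset (Fin m)) → MeasurableSet (sets j) := by
      intro j _
      by_cases hj : j = i
      · rw [hj, hsets_i]; exact ((measurable_cens s) (hB i)).inter hD
      · rw [hsets_ne j hj]; exact (measurable_cens s) (hB j)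
    have h1 : (Z ⁻¹' Set.pi Set.univ B) ∩ X i ⁻¹' D
        = ⋂ j ∈ (Finset.univ : Finset (Fin m)), X j ⁻¹' sets j := by
      ext ω
      simp only [Set.mem_inter_iff, Set.mem_preimage, Set.mem_pi, Set.mem_univ, true_implies,
        Set.mem_iInter, Finset.mem_univ, hZdef, censVec]
      constructor
      · rintro ⟨hall, hXD⟩ j
        by_cases hj : j = i
        · rw [hj, hsets_i]
          exact ⟨hall i, hXD⟩
        · rw [hsets_ne j hj]
          exact hall j
      · intro hall
        refine ⟨fun j => ?_, ?_⟩
        · have hj := hall j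
          by_cases h : j = i
          · rw [h] at hj ⊢
            rw [hsets_i] at hj
            exact hj.1
          · rw [hsets_ne j h] at hj
            exact hj
        · have hj := hall i
          rw [hsets_i] at hj
          exact hj.2
    rw [h1, hindep.measure_inter_preimage_eq_mul Finset.univ hsetsmeas,
      ← Finset.mul_prod_erase Finset.univ _ (Finset.mem_univ i)]
    congr 1
    · have hsi : sets i = if (2:ℝ) ∈ B i then D else ∅ := by
        rw [hsets_i]
        by_cases h2 : (2:ℝ) ∈ B i
        · rw [if_pos h2]
          refine Set.inter_eq_right.mpr fun x hx => ?_
          have hxs := hDs x hx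
          simp only [Set.mem_preimage, cens, if_neg (not_le.mpr hxs)]
          exact h2
        · rw [if_neg h2]
          ext x
          simp only [Set.mem_inter_iff, Set.mem_preimage, Set.mem_empty_iff_false, iff_false,
            not_and]
          intro hcx hxD
          have hxs := hDs x hxD
          rw [cens, if_neg (not_le.mpr hxs)] at hcx
          exact h2 hcx
      rw [hsi]
      by_cases h2 : (2:ℝ) ∈ B i
      · rw [if_pos h2, if_pos h2, hmap i D hD]
      · rw [if_neg h2, if_neg h2]
        simp
    · refine Finset.prod_congr rfl fun j hj => ?_
      rw [hsets_ne j (Finset.ne_of_mem_erase hj)]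
  -- set-integral of an indicator
  have hSI : ∀ (C : Set Ω) (i : Fin m) (D : Set ℝ), MeasurableSet D →
      ∫ ω in C, D.indicator (fun _ => (1:ℝ)) (X i ω) ∂ℙ = (ℙ (C ∩ X i ⁻¹' D)).toReal := by
    intro C i D hD
    have h1 : (fun ω => D.indicator (fun _ => (1:ℝ)) (X i ω))
        = (X i ⁻¹' D).indicator (fun _ => (1:ℝ)) := by
      funext ω; by_cases h : X i ω ∈ D <;> simp [Set.indicator_apply, Set.mem_preimage, h]
    rw [h1, setIntegral_indicator ((hmeas i) hD), setIntegral_const, smul_eq_mul, mul_one, measureReal_def]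
  have hterm0 : a * (t - s) + b * (1 - t) = 0 := by
    rw [hadef, hbdef]
    field_simp
    ring
  have hIoc : Set.Ioc s t ∩ Set.Icc (0:ℝ) 1 = Set.Ioc s t := by
    refine Set.inter_eq_left.mpr fun x hx => ?_
    exact ⟨le_of_lt (lt_of_le_of_lt hs hx.1), hx.2.trans (le_of_lt ht1)⟩
  have hIoi : Set.Ioi t ∩ Set.Icc (0:ℝ) 1 = Set.Ioc t 1 := by
    ext x
    simp only [Set.mem_inter_iff, Set.mem_Ioi, Set.mem_Icc, Set.mem_Ioc]
    constructor
    · rintro ⟨hx1, _, hx3⟩; exact ⟨hx1, hx3⟩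
    · rintro ⟨hx1, hx2⟩
      exact ⟨hx1, ⟨le_of_lt (lt_of_le_of_lt (hs.trans hst) hx1), hx2⟩⟩
  -- integral of the increment over a box vanishes
  have hbox : ∀ (B : Fin m → Set ℝ), (∀ i, MeasurableSet (B i)) →
      ∫ ω in (Z ⁻¹' Set.pi Set.univ B), (bridgeM X t ω - bridgeM X s ω) ∂ℙ = 0 := by
    intro B hB
    have hterm : ∀ i : Fin m,
        a * (ℙ ((Z ⁻¹' Set.pi Set.univ B) ∩ X i ⁻¹' Set.Ioc s t)).toReal
        + b * (ℙ ((Z ⁻¹' Set.pi Set.univ B) ∩ X i ⁻¹' Set.Ioi t)).toReal = 0 := by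
      intro i
      rw [hboxmeas B hB i (Set.Ioc s t) measurableSet_Ioc (fun x hx => hx.1),
          hboxmeas B hB i (Set.Ioi t) measurableSet_Ioi
            (fun x hx => lt_of_le_of_lt hst hx)]
      by_cases h2 : (2:ℝ) ∈ B i
      · rw [if_pos h2, if_pos h2, hIoc, hIoi, Real.volume_Ioc, Real.volume_Ioc,
          ENNReal.toReal_mul, ENNReal.toReal_mul, ENNReal.toReal_ofReal (by linarith),
          ENNReal.toReal_ofReal (by linarith)]
        set R := (∏ j ∈ Finset.univ.erase i, ℙ (X j ⁻¹' (cens s ⁻¹' B j))).toReal with hR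
        calc a * ((t - s) * R) + b * ((1 - t) * R) = (a * (t - s) + b * (1 - t)) * R := by ring
          _ = 0 := by rw [hterm0, zero_mul]
      · rw [if_neg h2, if_neg h2]
        simp
    have hint : ∀ (i : Fin m) (D : Set ℝ), MeasurableSet D →
        Integrable (fun ω => D.indicator (fun _ => (1:ℝ)) (X i ω))
          ((ℙ : Measure Ω).restrict (Z ⁻¹' Set.pi Set.univ B)) := by
      intro i D hD
      refine ((integrable_ind X hmeas D hD i).restrict).congr (ae_of_all _ fun ω => ?_)
      by_cases h : X i ω ∈ D <;> simp [Set.indicator_apply, Set.mem_preimage, h]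
    have hsummand : ∀ i : Fin m,
        Integrable (F i) ((ℙ : Measure Ω).restrict (Z ⁻¹' Set.pi Set.univ B)) := by
      intro i
      simp only [hF]
      exact ((hint i (Set.Ioc s t) measurableSet_Ioc).const_mul a).add
        ((hint i (Set.Ioi t) measurableSet_Ioi).const_mul b)
    have h1 : ∫ ω in (Z ⁻¹' Set.pi Set.univ B), (bridgeM X t ω - bridgeM X s ω) ∂ℙ
        = ∫ ω in (Z ⁻¹' Set.pi Set.univ B), (∑ i, F i ω) ∂ℙ :=
      integral_congr_ae (ae_of_all _ fun ω => hdiff ω)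
    rw [h1, integral_finset_sum _ (fun i _ => hsummand i)]
    refine Finset.sum_eq_zero fun i _ => ?_
    have h2 : ∫ ω in (Z ⁻¹' Set.pi Set.univ B), F i ω ∂ℙ
        = a * (ℙ ((Z ⁻¹' Set.pi Set.univ B) ∩ X i ⁻¹' Set.Ioc s t)).toReal
          + b * (ℙ ((Z ⁻¹' Set.pi Set.univ B) ∩ X i ⁻¹' Set.Ioi t)).toReal := by
      simp only [hF]
      rw [integral_add ((hint i (Set.Ioc s t) measurableSet_Ioc).const_mul a)
          ((hint i (Set.Ioi t) measurableSet_Ioi).const_mul b),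
        integral_const_mul, integral_const_mul, hSI _ i _ measurableSet_Ioc,
        hSI _ i _ measurableSet_Ioi]
    rw [h2]
    exact hterm i
  have hInt : Integrable (fun ω => bridgeM X t ω - bridgeM X s ω) ℙ := hInt_t.sub hInt_s
  have htotal : ∫ ω, (bridgeM X t ω - bridgeM X s ω) ∂ℙ = 0 := by
    have h := hbox (fun _ => Set.univ) (fun _ => MeasurableSet.univ)
    have huniv : Z ⁻¹' Set.pi Set.univ (fun _ : Fin m => Set.univ) = Set.univ := by
      simp [Set.pi_univ]
    rw [huniv, Measure.restrict_univ] at h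
    exact h
  have hzero : ∀ C : Set Ω, MeasurableSet[censAlg X s] C →
      ∫ ω in C, (bridgeM X t ω - bridgeM X s ω) ∂ℙ = 0 := by
    have hgen : censAlg X s = MeasurableSpace.generateFrom
        {U : Set Ω | ∃ V ∈ (Set.pi Set.univ ''
            Set.pi Set.univ fun _ : Fin m => {E : Set ℝ | MeasurableSet E}),
          Z ⁻¹' V = U} := by
      unfold censAlg
      rw [show (inferInstance : MeasurableSpace (Fin m → ℝ)) = MeasurableSpace.pi from rfl,
        ← generateFrom_pi, MeasurableSpace.comap_generateFrom]
      rfl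
    intro C hC
    refine MeasurableSpace.induction_on_inter (m := censAlg X s)
      (C := fun C _ => ∫ ω in C, (bridgeM X t ω - bridgeM X s ω) ∂ℙ = 0)
      hgen (isPiSystem_pi.comap Z) ?_ ?_ ?_ ?_ C hC
    · simp
    · rintro U ⟨V, ⟨B, hB, rfl⟩, rfl⟩
      exact hbox B fun i => hB i (Set.mem_univ i)
    · intro U hU h0
      have h := integral_add_compl (hH_le U hU) hInt
      rw [htotal] at h
      linarith
    · intro f hdisj hmeasf hf0
      rw [integral_iUnion (fun n => hH_le _ (hmeasf n)) hdisj hInt.integrableOn]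
      simp [hf0]
  have hKey : (ℙ : Measure Ω)[bridgeM X t | censAlg X s] =ᵐ[ℙ] bridgeM X s := by
    refine (ae_eq_condExp_of_forall_setIntegral_eq hH_le hInt_t
      (fun C _ _ => hInt_s.integrableOn) (fun C hC _ => ?_)
      hSM_H.aestronglyMeasurable).symm
    have h0 := hzero C hC
    have h1 : ∫ ω in C, (bridgeM X t ω - bridgeM X s ω) ∂ℙ
        = ∫ ω in C, bridgeM X t ω ∂ℙ - ∫ ω in C, bridgeM X s ω ∂ℙ :=
      integral_sub hInt_t.integrableOn hInt_s.integrableOn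
    linarith
  calc (ℙ : Measure Ω)[bridgeM X t | countFiltration X s]
      =ᵐ[ℙ] (ℙ : Measure Ω)[(ℙ : Measure Ω)[bridgeM X t | censAlg X s] | countFiltration X s] :=
        (condExp_condExp_of_le hF_le_H hH_le).symm
    _ =ᵐ[ℙ] (ℙ : Measure Ω)[bridgeM X s | countFiltration X s] := condExp_congr_ae hKey
    _ =ᵐ[ℙ] bridgeM X s := by
        rw [condExp_of_stronglyMeasurable hF_le hSM_F hInt_s]
end

section
/- For all real numbers p, q with 0 < q ≤ p < 1, the Kullback–Leibler divergence between Bernoulli(p) and Bernoulli(q), KL(p, q) = p·log(p/q) + (1−p)·log((1−p)/(1−q)), satisfies KL(p, q) ≥ (p − q)²/(2p). -/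
/-- The Kullback–Leibler divergence between `Bernoulli(p)` and `Bernoulli(q)` satisfies
`KL(p, q) ≥ (p - q)² / (2p)` for `0 < q ≤ p < 1`. -/
theorem bernoulli_kl_lower_bound (p q : ℝ) (hq : 0 < q) (hqp : q ≤ p) (hp : p < 1) :
    (p - q) ^ 2 / (2 * p) ≤
      p * Real.log (p / q) + (1 - p) * Real.log ((1 - p) / (1 - q)) := by
  have hp0 : 0 < p := hq.trans_le hqp
  have h1p : 0 < 1 - p := by linarith
  have h1q : 0 < 1 - q := by linarith
  set F : ℝ → ℝ := fun x =>
    p * Real.log p - p * Real.log x +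
      ((1 - p) * Real.log (1 - p) - (1 - p) * Real.log (1 - x)) - (p - x) ^ 2 / (2 * p) with hF
  have hD : ∀ x ∈ Set.Ioo q p,
      HasDerivAt F (-(p / x) + (1 - p) / (1 - x) + (p - x) / p) x := by
    intro x hx
    obtain ⟨hx1, hx2⟩ := hx
    have hx0 : 0 < x := hq.trans hx1
    have hx1' : 0 < 1 - x := by linarith
    have hd : HasDerivAt F
        (0 - p * x⁻¹ + (0 - (1 - p) * ((1 - x)⁻¹ * (0 - 1))) -
          (2 * (p - x) ^ 1 * (0 - 1)) / (2 * p)) x := by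
      apply HasDerivAt.sub
      apply HasDerivAt.add
      · exact (hasDerivAt_const x _).sub ((Real.hasDerivAt_log hx0.ne').const_mul p)
      · exact (hasDerivAt_const x _).sub
          (((Real.hasDerivAt_log hx1'.ne').comp x
            ((hasDerivAt_const x (1:ℝ)).sub (hasDerivAt_id x))).const_mul (1 - p))
      · exact (((hasDerivAt_const x p).sub (hasDerivAt_id x)).pow 2).div_const _
    convert hd using 1
    field_simp
    ring
  have key : AntitoneOn F (Set.Icc q p) := by
    apply antitoneOn_of_deriv_nonpos (convex_Icc q p)
    · have h1 : ContinuousOn (fun x : ℝ => Real.log x) (Set.Icc q p) :=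
        Real.continuousOn_log.mono (fun x hx => by
          simp only [Set.mem_compl_iff, Set.mem_singleton_iff]
          have := hx.1; intro h; rw [h] at this; linarith)
      have h2 : ContinuousOn (fun x : ℝ => Real.log (1 - x)) (Set.Icc q p) :=
        ContinuousOn.log (continuousOn_const.sub continuousOn_id)
          (fun x hx => by have := hx.2; intro h; nlinarith)
      exact ((continuousOn_const.sub (continuousOn_const.mul h1)).add
        (continuousOn_const.sub (continuousOn_const.mul h2))).sub
        (((continuousOn_const.sub continuousOn_id).pow 2).div_const _)
    · intro x hx
      rw [interior_Icc] at hx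
      exact (hD x hx).differentiableAt.differentiableWithinAt
    · intro x hx
      rw [interior_Icc] at hx
      rw [(hD x hx).deriv]
      obtain ⟨hx1, hx2⟩ := hx
      have hx0 : 0 < x := hq.trans hx1
      have hx1' : 0 < 1 - x := by linarith
      have hmain : -(p / x) + (1 - p) / (1 - x) + (p - x) / p =
          ((p - x) * (x - x ^ 2 - p)) / (x * (1 - x) * p) := by
        field_simp
        ring
      rw [hmain]
      apply div_nonpos_of_nonpos_of_nonneg
      · nlinarith
      · positivity
  have hFp : F p = 0 := by simp [hF]
  have hle : F p ≤ F q := key (Set.mem_Icc.mpr ⟨le_refl q, hqp⟩)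
    (Set.mem_Icc.mpr ⟨hqp, le_refl p⟩) hqp
  rw [hFp, hF] at hle
  simp only at hle
  rw [Real.log_div hp0.ne' hq.ne', Real.log_div h1p.ne' h1q.ne']
  nlinarith [hle]
end

section
/- Let a > 0 and let Z be a real-valued random variable satisfying P(Z ≥ t) ≤ exp(−t/a) for all t ≥ 0. Then for every λ with 0 ≤ λ < 1/a: log E[ exp(λ·(Z − a)) ] ≤ −a·λ − log(1 − λ·a) ≤ (a²·λ²)/(2·(1 − λ·a)). In particular, the elementary inequality −x − log(1−x) ≤ x²/(2(1−x)) holds for all x ∈ [0,1). -/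
open MeasureTheory ProbabilityTheory

lemma elem_log_ineq : ∀ x : ℝ, 0 ≤ x → x < 1 →
    -x - Real.log (1 - x) ≤ x ^ 2 / (2 * (1 - x)) := by
  intro x hx0 hx1
  have habs : |x| < 1 := abs_lt.2 ⟨by linarith, hx1⟩
  have h1 := Real.hasSum_pow_div_log_of_abs_lt_one habs
  have h2 := (hasSum_nat_add_iff' (f := fun n : ℕ => x ^ (n + 1) / (n + 1)) 1).2 h1
  norm_num at h2
  have h3 : HasSum (fun n : ℕ => x ^ 2 / 2 * x ^ n) (x ^ 2 / 2 * (1 - x)⁻¹) :=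
    (hasSum_geometric_of_lt_one hx0 hx1).mul_left _
  have h4 : -Real.log (1 - x) - x ≤ x ^ 2 / 2 * (1 - x)⁻¹ := by
    refine hasSum_le (fun n => ?_) h2 h3
    have hxp : 0 ≤ x ^ (n + 1 + 1) := pow_nonneg hx0 _
    have e : x ^ 2 / 2 * x ^ n = x ^ (n + 1 + 1) / 2 := by ring
    rw [e]
    have h2n : (2 : ℝ) ≤ ((n : ℝ) + 1 + 1) := by
      have : (0 : ℝ) ≤ n := Nat.cast_nonneg n
      linarith
    push_cast
    gcongr
  have hne : (1:ℝ) - x ≠ 0 := by linarith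
  have e2 : x ^ 2 / 2 * (1 - x)⁻¹ = x ^ 2 / (2 * (1 - x)) := by
    field_simp
  rw [e2] at h4
  linarith

/-- Moment generating function bound for a random variable with an exponential tail:
for `0 ≤ λ < 1/a`, `log E[exp(λ(Z - a))] ≤ -aλ - log(1 - λa) ≤ a²λ²/(2(1 - λa))`;
in particular the elementary inequality `-x - log(1 - x) ≤ x²/(2(1 - x))` holds on `[0, 1)`. -/
theorem exponential_tail_mgf_bound {Ω : Type*} [MeasureSpace Ω]
    [IsProbabilityMeasure (ℙ : Measure Ω)]
    {a : ℝ} (ha : 0 < a) (Z : Ω → ℝ) (hmeas : Measurable Z)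
    (htail : ∀ t : ℝ, 0 ≤ t → (ℙ : Measure Ω) {ω | Z ω ≥ t} ≤ ENNReal.ofReal (Real.exp (-t / a))) :
    (∀ l : ℝ, 0 ≤ l → l < 1 / a →
      Real.log (∫ ω : Ω, Real.exp (l * (Z ω - a))) ≤ -a * l - Real.log (1 - l * a) ∧
      -a * l - Real.log (1 - l * a) ≤ a ^ 2 * l ^ 2 / (2 * (1 - l * a))) ∧
    (∀ x : ℝ, 0 ≤ x → x < 1 → -x - Real.log (1 - x) ≤ x ^ 2 / (2 * (1 - x))) := by
  refine ⟨fun l hl0 hl1 => ?_, elem_log_ineq⟩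
  have hla : l * a < 1 := by
    rw [lt_div_iff₀ ha] at hl1; exact hl1
  have hla0 : 0 ≤ l * a := mul_nonneg hl0 ha.le
  have h1la : 0 < 1 - l * a := by linarith
  constructor
  · -- main MGF bound
    rcases eq_or_lt_of_le hl0 with h0 | hlpos
    · simp [← h0]
    -- layer cake
    have hm : Measurable fun ω => Real.exp (l * Z ω) :=
      Real.measurable_exp.comp (hmeas.const_mul l)
    have key : ∫⁻ ω, ENNReal.ofReal (Real.exp (l * Z ω)) ∂(ℙ : Measure Ω)
        = ∫⁻ t in Set.Ioi (0:ℝ), (ℙ : Measure Ω) {ω | t ≤ Real.exp (l * Z ω)} :=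
      lintegral_eq_lintegral_meas_le ℙ
        (Filter.Eventually.of_forall fun ω => (Real.exp_pos _).le) hm.aemeasurable
    set F : ℝ → ENNReal := fun t => (ℙ : Measure Ω) {ω | t ≤ Real.exp (l * Z ω)} with hF
    have hsplit : ∫⁻ t in Set.Ioi (0:ℝ), F t
        = (∫⁻ t in Set.Ioc (0:ℝ) 1, F t) + ∫⁻ t in Set.Ioi (1:ℝ), F t := by
      rw [← Set.Ioc_union_Ioi_eq_Ioi (zero_le_one), lintegral_union measurableSet_Ioi
        (Set.Ioc_disjoint_Ioi le_rfl)]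
    have hb1 : ∫⁻ t in Set.Ioc (0:ℝ) 1, F t ≤ 1 := by
      calc ∫⁻ t in Set.Ioc (0:ℝ) 1, F t ≤ ∫⁻ _ in Set.Ioc (0:ℝ) 1, 1 :=
            lintegral_mono fun t => prob_le_one
        _ = 1 := by simp [Real.volume_Ioc]
    have hp1 : 1 < 1 / (l * a) := by
      rw [lt_div_iff₀ (mul_pos hlpos ha)]; linarith
    have hb2 : ∫⁻ t in Set.Ioi (1:ℝ), F t
        ≤ ∫⁻ t in Set.Ioi (1:ℝ), ENNReal.ofReal (t ^ (-(1/(l*a)))) := by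
      refine setLIntegral_mono' measurableSet_Ioi fun t ht => ?_
      have ht1 : (1:ℝ) < t := ht
      have ht0 : (0:ℝ) < t := by linarith
      have hlog0 : 0 ≤ Real.log t := Real.log_nonneg ht1.le
      have hsub : {ω | t ≤ Real.exp (l * Z ω)} ⊆ {ω | Z ω ≥ Real.log t / l} := by
        intro ω hω
        have : Real.log t ≤ l * Z ω := (Real.log_le_iff_le_exp ht0).2 hω
        have : Real.log t / l ≤ Z ω := by
          rw [div_le_iff₀ hlpos]; linarith [this]
        exact this
      refine le_trans (measure_mono hsub) (le_trans (htail _ (by positivity)) ?_)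
      have : Real.exp (-(Real.log t / l) / a) = t ^ (-(1/(l*a))) := by
        rw [Real.rpow_def_of_pos ht0]
        congr 1
        field_simp
      rw [this]
    have hexplt : -(1/(l*a)) < -1 := by
      rw [neg_lt_neg_iff]; exact hp1
    have hintOn : MeasureTheory.IntegrableOn (fun t : ℝ => t ^ (-(1/(l*a)))) (Set.Ioi 1) :=
      integrableOn_Ioi_rpow_of_lt hexplt one_pos
    have hival : ∫ t in Set.Ioi (1:ℝ), t ^ (-(1/(l*a))) = l * a / (1 - l * a) := by
      rw [integral_Ioi_rpow_of_lt hexplt one_pos, Real.one_rpow]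
      have hne : l * a ≠ 0 := by positivity
      have hne2 : (-1:ℝ) + l * a ≠ 0 := ne_of_lt (by linarith)
      field_simp
      ring
    have hb2' : ∫⁻ t in Set.Ioi (1:ℝ), ENNReal.ofReal (t ^ (-(1/(l*a))))
        = ENNReal.ofReal (l * a / (1 - l * a)) := by
      rw [← MeasureTheory.ofReal_integral_eq_lintegral_ofReal hintOn
        ((ae_restrict_iff' measurableSet_Ioi).2 (Filter.Eventually.of_forall
          fun t ht => Real.rpow_nonneg (le_of_lt (lt_trans one_pos ht)) _)), hival]
    have Ibound : ∫⁻ ω, ENNReal.ofReal (Real.exp (l * Z ω)) ∂(ℙ : Measure Ω)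
        ≤ ENNReal.ofReal (1/(1-l*a)) := by
      rw [key, hsplit]
      calc (∫⁻ t in Set.Ioc (0:ℝ) 1, F t) + ∫⁻ t in Set.Ioi (1:ℝ), F t
          ≤ 1 + ENNReal.ofReal (l * a / (1 - l * a)) :=
            add_le_add hb1 (hb2.trans (le_of_eq hb2'))
        _ = ENNReal.ofReal (1/(1-l*a)) := by
            rw [← ENNReal.ofReal_one, ← ENNReal.ofReal_add (by norm_num) (by positivity)]
            congr 1
            field_simp
            ring
    have hInt : Integrable (fun ω => Real.exp (l * Z ω)) ℙ := by
      refine ⟨hm.aestronglyMeasurable, ?_⟩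
      rw [hasFiniteIntegral_iff_ofReal (Filter.Eventually.of_forall fun ω => (Real.exp_pos _).le)]
      exact lt_of_le_of_lt Ibound ENNReal.ofReal_lt_top
    have hle : ∫ ω, Real.exp (l * Z ω) ≤ 1/(1-l*a) := by
      rw [integral_eq_lintegral_of_nonneg_ae
        (Filter.Eventually.of_forall fun ω => (Real.exp_pos _).le) hm.aestronglyMeasurable]
      exact ENNReal.toReal_le_of_le_ofReal (by positivity) Ibound
    have hfe : (fun ω => Real.exp (l * (Z ω - a)))
        = fun ω => Real.exp (-(l*a)) * Real.exp (l * Z ω) := by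
      funext ω; rw [← Real.exp_add]; ring_nf
    have hInt2 : Integrable (fun ω => Real.exp (l * (Z ω - a))) ℙ := by
      rw [hfe]; exact hInt.const_mul _
    have hpos : 0 < ∫ ω, Real.exp (l * (Z ω - a)) := integral_exp_pos hInt2
    have hval : ∫ ω, Real.exp (l * (Z ω - a))
        = Real.exp (-(l*a)) * ∫ ω, Real.exp (l * Z ω) := by
      rw [hfe, integral_const_mul]
    have hfinal : ∫ ω, Real.exp (l * (Z ω - a)) ≤ Real.exp (-(l*a)) * (1/(1-l*a)) := by
      rw [hval]; exact mul_le_mul_of_nonneg_left hle (Real.exp_pos _).le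
    calc Real.log (∫ ω, Real.exp (l*(Z ω - a)))
        ≤ Real.log (Real.exp (-(l*a)) * (1/(1-l*a))) := Real.log_le_log hpos hfinal
      _ = -a*l - Real.log (1-l*a) := by
          rw [Real.log_mul (Real.exp_ne_zero _) (by positivity), Real.log_exp,
            one_div, Real.log_inv]
          ring
  · have h := elem_log_ineq (l * a) hla0 hla
    have e1 : -(l*a) - Real.log (1 - l*a) = -a*l - Real.log (1 - l*a) := by ring_nf
    have e2 : (l*a)^2 = a^2*l^2 := by ring
    rw [e2] at h
    linarith [h]
end
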